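/- arXiv:2011.05953 — 4 statements merged into one kernel-verified Lean document; each statement's English description precedes it below -/
import Mathlib

section
/- Let f ∈ F₁(a,b), let P be a probability measure on (Ω,M), and let g ∈ M_b(Ω). Then sup over h ∈ M_b(Ω) with E_P[h] = 1 and E_P[f(h)] < ∞ of {E_P[g·h] − E_P[f(h)]} equals inf_{ν∈ℝ}{ν + E_P[f*(g−ν)]}. -/
open MeasureTheory Filter Set Topology ENNReal
open scoped Classical

noncomputable section

/-- The set of bounded measurable real-valued functions on `Ω`. -/
def Mb (Ω : Type*) [MeasurableSpace Ω] : Set (Ω → ℝ) :=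
  {g | Measurable g ∧ ∃ C : ℝ, ∀ x, |g x| ≤ C}

/-- The set of bounded continuous real-valued functions on `S`. -/
def Cb (S : Type*) [TopologicalSpace S] : Set (S → ℝ) :=
  {g | Continuous g ∧ ∃ C : ℝ, ∀ x, |g x| ≤ C}

/-- The positive part of an extended real number, as an element of `ℝ≥0∞`. -/
def posE (x : EReal) : ℝ≥0∞ := if x = ⊤ then ⊤ else ENNReal.ofReal x.toReal

/-- The extended-real-valued integral of an `EReal`-valued function, defined as the
difference of the lower integrals of the positive and negative parts, with the
convention `∞ - ∞ = -∞`. -/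
def eIntegral {Ω : Type*} [MeasurableSpace Ω] (P : Measure Ω) (h : Ω → EReal) : EReal :=
  ((∫⁻ x, posE (h x) ∂P : ℝ≥0∞) : EReal) - ((∫⁻ x, posE (-(h x)) ∂P : ℝ≥0∞) : EReal)

/-- The Legendre transform `f*(y) = sup_x {x*y - f(x)}` of `f : ℝ → (-∞,∞]`. -/
def fstar (f : ℝ → EReal) (y : ℝ) : EReal := ⨆ x : ℝ, (((x * y : ℝ) : EReal) - f x)

/-- `f : ℝ → (-∞,∞]` is (the convex LSC extension of) an element of `F₁(a,b)`:
convex, lower semicontinuous, never `-∞`, finite exactly on the interval `(a,b)`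
(with `+∞` strictly outside `[a,b]`), and `f(1) = 0` with `a < 1 < b`. -/
structure IsF1 (a b : EReal) (f : ℝ → EReal) : Prop where
  a_lt_one : a < ((1 : ℝ) : EReal)
  one_lt_b : ((1 : ℝ) : EReal) < b
  convex : ∀ x y t : ℝ, 0 < t → t < 1 →
    f (t * x + (1 - t) * y) ≤ ((t : ℝ) : EReal) * f x + (((1 - t : ℝ)) : EReal) * f y
  lsc : LowerSemicontinuous f
  ne_bot : ∀ x, f x ≠ ⊥
  finite_on : ∀ x : ℝ, a < (x : EReal) → (x : EReal) < b → f x ≠ ⊤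
  top_outside : ∀ x : ℝ, ((x : EReal) < a ∨ b < (x : EReal)) → f x = ⊤
  at_one : f 1 = 0

/-- `Λ_f^P[g] = inf_{ν ∈ ℝ} {ν + E_P[f*(g - ν)]}`. -/
def LambdaF {Ω : Type*} [MeasurableSpace Ω] (f : ℝ → EReal) (P : Measure Ω) (g : Ω → ℝ) :
    EReal :=
  ⨅ ν : ℝ, ((ν : EReal) + eIntegral P (fun x => fstar f (g x - ν)))

/-- The classical `f`-divergence `D_f(Q‖P) = E_P[f(dQ/dP)]` if `Q ≪ P`, else `∞`. -/
def fDivE {Ω : Type*} [MeasurableSpace Ω] (f : ℝ → EReal) (Q P : Measure Ω) : EReal :=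
  if Q ≪ P then eIntegral P (fun x => f ((Q.rnDeriv P x).toReal)) else ⊤

/-- The `(f,Γ)`-divergence `D_f^Γ(Q‖P) = sup_{g ∈ Γ} {E_Q[g] - Λ_f^P[g]}`. -/
def fGammaDiv {Ω : Type*} [MeasurableSpace Ω] (f : ℝ → EReal) (Γ : Set (Ω → ℝ))
    (Q P : Measure Ω) : EReal :=
  ⨆ g ∈ Γ, (((∫ x, g x ∂Q : ℝ) : EReal) - LambdaF f P g)

/-- The `Γ`-IPM `W^Γ(Q,P) = sup_{g ∈ Γ} {E_Q[g] - E_P[g]}`. -/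
def ipmW {Ω : Type*} [MeasurableSpace Ω] (Γ : Set (Ω → ℝ)) (Q P : Measure Ω) : EReal :=
  ⨆ g ∈ Γ, (((∫ x, g x ∂Q : ℝ) : EReal) - ((∫ x, g x ∂P : ℝ) : EReal))

end


noncomputable section StmtFourProof

open MeasureTheory Filter Set Topology ENNReal

namespace Stmt4Aux

lemma posE_coe (r : ℝ) : posE (r : EReal) = ENNReal.ofReal r := by
  simp [posE, EReal.toReal_coe]

lemma posE_neg_coe (r : ℝ) : posE (-(r : EReal)) = ENNReal.ofReal (-r) := by
  rw [← EReal.coe_neg, posE_coe]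

lemma posE_top : posE ⊤ = ⊤ := by simp [posE]

lemma posE_bot : posE ⊥ = 0 := by simp [posE]

lemma posE_mono : Monotone posE := by
  intro x y hxy
  rcases eq_or_ne y ⊤ with rfl | hy
  · simp [posE_top]
  rcases eq_or_ne x ⊥ with rfl | hx
  · simp [posE_bot]
  have hx' : x ≠ ⊤ := fun h => hy (top_le_iff.mp (h ▸ hxy))
  rcases eq_or_ne y ⊥ with rfl | hy'
  · exact absurd (le_bot_iff.mp hxy) hx
  simp only [posE, if_neg hx', if_neg hy]
  exact ENNReal.ofReal_le_ofReal (EReal.toReal_le_toReal hxy hx hy)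

lemma coe_ennreal_toReal {A : ℝ≥0∞} (hA : A ≠ ⊤) : ((A.toReal : ℝ) : EReal) = (A : EReal) := by
  rw [← EReal.toReal_coe_ennreal (x := A)]
  exact EReal.coe_toReal (by simpa [EReal.coe_ennreal_eq_top_iff]) (EReal.coe_ennreal_ne_bot A)

lemma ennreal_sub_eq_coe {A B : ℝ≥0∞} (hA : A ≠ ⊤) (hB : B ≠ ⊤) :
    (A : EReal) - (B : EReal) = ((A.toReal - B.toReal : ℝ) : EReal) := by
  rw [EReal.coe_sub, coe_ennreal_toReal hA, coe_ennreal_toReal hB]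

variable {Ω : Type*} [MeasurableSpace Ω] {P : Measure Ω}

lemma eIntegral_congr_ae {u v : Ω → EReal} (h : u =ᵐ[P] v) : eIntegral P u = eIntegral P v := by
  have h1 : ∫⁻ x, posE (u x) ∂P = ∫⁻ x, posE (v x) ∂P :=
    lintegral_congr_ae (h.mono fun x hx => by simp only [hx])
  have h2 : ∫⁻ x, posE (-(u x)) ∂P = ∫⁻ x, posE (-(v x)) ∂P :=
    lintegral_congr_ae (h.mono fun x hx => by simp only [hx])
  unfold eIntegral; rw [h1, h2]

lemma eIntegral_mono_ae {v w : Ω → EReal} (h : ∀ᵐ x ∂P, v x ≤ w x) :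
    eIntegral P v ≤ eIntegral P w := by
  unfold eIntegral
  refine EReal.sub_le_sub ?_ ?_
  · exact EReal.coe_ennreal_le_coe_ennreal_iff.mpr <|
      lintegral_mono_ae (h.mono fun x hx => posE_mono hx)
  · exact EReal.coe_ennreal_le_coe_ennreal_iff.mpr <|
      lintegral_mono_ae (h.mono fun x hx => posE_mono (EReal.neg_le_neg_iff.mpr hx))

lemma lintegral_ofReal_lt_top {u : Ω → ℝ} (hu : Integrable u P) :
    ∫⁻ x, ENNReal.ofReal (u x) ∂P < ⊤ := by
  refine lt_of_le_of_lt (lintegral_mono fun x => ?_) hu.2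
  calc ENNReal.ofReal (u x) ≤ ENNReal.ofReal ‖u x‖ :=
        ENNReal.ofReal_le_ofReal (le_abs_self _)
    _ = (‖u x‖₊ : ℝ≥0∞) := ofReal_norm _

lemma eIntegral_real {u : Ω → ℝ} (hu : Integrable u P) :
    eIntegral P (fun x => (u x : EReal)) = ((∫ x, u x ∂P : ℝ) : EReal) := by
  have hB : ∫⁻ x, ENNReal.ofReal (-(u x)) ∂P < ⊤ := by
    simpa using lintegral_ofReal_lt_top hu.neg
  unfold eIntegral
  simp only [posE_coe, posE_neg_coe]
  rw [ennreal_sub_eq_coe (lintegral_ofReal_lt_top hu).ne hB.ne, EReal.coe_eq_coe_iff]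
  exact (integral_eq_lintegral_pos_part_sub_lintegral_neg_part hu).symm

lemma eIntegral_le_of_ae {u : Ω → ℝ} {v : Ω → EReal} (hu : Integrable u P)
    (h : ∀ᵐ x ∂P, v x ≤ (u x : EReal)) :
    eIntegral P v ≤ ((∫ x, u x ∂P : ℝ) : EReal) := by
  rw [← eIntegral_real hu]; exact eIntegral_mono_ae h

lemma le_eIntegral_of_ae {u : Ω → ℝ} {v : Ω → EReal} (hu : Integrable u P)
    (h : ∀ᵐ x ∂P, (u x : EReal) ≤ v x) :
    ((∫ x, u x ∂P : ℝ) : EReal) ≤ eIntegral P v := by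
  rw [← eIntegral_real hu]; exact eIntegral_mono_ae h

lemma eIntegral_eq_of_ae {u : Ω → ℝ} {v : Ω → EReal} (hu : Integrable u P)
    (h : ∀ᵐ x ∂P, v x = (u x : EReal)) :
    eIntegral P v = ((∫ x, u x ∂P : ℝ) : EReal) := by
  rw [eIntegral_congr_ae (h.mono fun x hx => hx), eIntegral_real hu]

lemma eIntegral_const [IsProbabilityMeasure P] (c : ℝ) :
    eIntegral P (fun _ => (c : EReal)) = (c : EReal) := by
  rw [eIntegral_real (integrable_const c)]
  simp

end Stmt4Aux
end StmtFourProof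

noncomputable section StmtFourProof2
open MeasureTheory Filter Set Topology ENNReal
namespace Stmt4Aux

variable {a b : EReal} {f : ℝ → EReal}

lemma _root_.IsF1.convex_real (hf : IsF1 a b f) {x y : ℝ} (t : ℝ) (ht : 0 < t) (ht1 : t < 1)
    (hx : f x ≠ ⊤) (hy : f y ≠ ⊤) :
    f (t * x + (1 - t) * y) ≠ ⊤ ∧
    (f (t * x + (1 - t) * y)).toReal ≤ t * (f x).toReal + (1 - t) * (f y).toReal := by
  have hx' := EReal.coe_toReal hx (hf.ne_bot x)
  have hy' := EReal.coe_toReal hy (hf.ne_bot y)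
  have h := hf.convex x y t ht ht1
  rw [← hx', ← hy', ← EReal.coe_mul, ← EReal.coe_mul, ← EReal.coe_add] at h
  refine ⟨ne_top_of_le_ne_top (EReal.coe_ne_top _) h, ?_⟩
  have := EReal.toReal_le_toReal h (hf.ne_bot _) (EReal.coe_ne_top _)
  rwa [EReal.toReal_coe] at this

lemma _root_.IsF1.exists_pts (hf : IsF1 a b f) :
    ∃ l δ : ℝ, l < 1 ∧ 0 < δ ∧ a < (l : EReal) ∧ ((1 + δ : ℝ) : EReal) < b := by
  obtain ⟨z, hz1, hz2⟩ := exists_between hf.a_lt_one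
  obtain ⟨w, hw1, hw2⟩ := exists_between hf.one_lt_b
  have hzb : z ≠ ⊥ := fun h => by simp [h] at hz1
  have hzt : z ≠ ⊤ := fun h => by rw [h] at hz2; exact absurd hz2 (by simp)
  have hwb : w ≠ ⊥ := fun h => by rw [h] at hw1; exact absurd hw1 (by simp)
  have hwt : w ≠ ⊤ := fun h => by simp [h] at hw2
  refine ⟨z.toReal, w.toReal - 1, ?_, ?_, ?_, ?_⟩
  · have := EReal.coe_toReal hzt hzb
    rw [← EReal.coe_lt_coe_iff, this]; exact hz2
  · have : (1 : ℝ) < w.toReal := by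
      rw [← EReal.coe_lt_coe_iff, EReal.coe_toReal hwt hwb]; exact hw1
    linarith
  · rw [EReal.coe_toReal hzt hzb]; exact hz1
  · have : ((1 + (w.toReal - 1) : ℝ) : EReal) = w := by
      rw [show (1 + (w.toReal - 1) : ℝ) = w.toReal by ring, EReal.coe_toReal hwt hwb]
    rw [this]; exact hw2

/-- f is finite on the open interval (a,b) ∩ ℝ. -/
lemma _root_.IsF1.ne_top_of_between (hf : IsF1 a b f) {x : ℝ} (h1 : a < (x : EReal))
    (h2 : (x : EReal) < b) : f x ≠ ⊤ := hf.finite_on x h1 h2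

lemma _root_.IsF1.exists_subgrad (hf : IsF1 a b f) :
    ∃ s : ℝ, ∀ x : ℝ, ((s * (x - 1) : ℝ) : EReal) ≤ f x := by
  obtain ⟨l, δ, hl1, hδ, hal, hδb⟩ := hf.exists_pts
  have h1b : ((1:ℝ) : EReal) < b := hf.one_lt_b
  have ha1 : a < ((1:ℝ) : EReal) := hf.a_lt_one
  -- f is finite at l, and at 1+t for t ∈ (0, δ]
  have hfl : f l ≠ ⊤ := hf.ne_top_of_between hal (lt_trans (by exact_mod_cast hl1) h1b)
  have hf1t : ∀ t : ℝ, 0 < t → t ≤ δ → f (1 + t) ≠ ⊤ := by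
    intro t ht htδ
    refine hf.ne_top_of_between (lt_trans ha1 (by exact_mod_cast (by linarith : (1:ℝ) < 1 + t)))
      (lt_of_le_of_lt (by exact_mod_cast (by linarith : (1 + t : ℝ) ≤ 1 + δ)) hδb)
  have hf1 : f 1 ≠ ⊤ := by rw [hf.at_one]; exact EReal.zero_ne_top
  have hF1 : (f 1).toReal = 0 := by rw [hf.at_one]; simp
  set F : ℝ → ℝ := fun x => (f x).toReal with hF
  -- the set of right slopes
  set S : Set ℝ := (fun t => F (1 + t) / t) '' (Set.Ioc 0 δ) with hS
  have hSne : S.Nonempty := ⟨F (1 + δ) / δ, ⟨δ, ⟨hδ, le_refl δ⟩, rfl⟩⟩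
  -- three-point inequality: for u < 1 with f u ≠ ⊤ and t ∈ (0, δ] : -F u/(1-u) ≤ F(1+t)/t
  have key : ∀ u : ℝ, u < 1 → f u ≠ ⊤ → ∀ t : ℝ, 0 < t → t ≤ δ →
      -F u / (1 - u) ≤ F (1 + t) / t := by
    intro u hu hfu t ht htδ
    set μ : ℝ := t / (1 + t - u) with hμ
    have hd : (0:ℝ) < 1 + t - u := by linarith
    have hμ0 : 0 < μ := div_pos ht hd
    have hμ1 : μ < 1 := by rw [div_lt_one hd]; linarith
    have hμd : μ * (1 + t - u) = t := by rw [hμ]; exact div_mul_cancel₀ _ hd.ne'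
    have harg : μ * u + (1 - μ) * (1 + t) = 1 := by linear_combination -hμd
    have hc := hf.convex_real (x := u) (y := 1 + t) μ hμ0 hμ1 hfu (hf1t t ht htδ)
    rw [harg] at hc
    have h0 : (0:ℝ) ≤ μ * F u + (1 - μ) * F (1 + t) := by
      have := hc.2; rw [hF1] at this; simpa [F] using this
    have h1μ : 1 - μ = (1 - u) / (1 + t - u) := by rw [eq_div_iff hd.ne']; linear_combination -hμd
    rw [h1μ, hμ] at h0
    rw [div_le_div_iff₀ (by linarith) ht]
    have h0' : 0 ≤ t * F u + (1 - u) * F (1 + t) := by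
      have := mul_nonneg h0 (le_of_lt hd)
      calc (0:ℝ) ≤ (t / (1 + t - u) * F u + (1 - u) / (1 + t - u) * F (1 + t)) * (1 + t - u) := this
        _ = t * F u + (1 - u) * F (1 + t) := by field_simp
    nlinarith
  have hbdd : BddBelow S := by
    refine ⟨-F l / (1 - l), ?_⟩
    rintro y ⟨t, ⟨ht, htδ⟩, rfl⟩
    exact key l hl1 hfl t ht htδ
  set s : ℝ := sInf S with hs
  have hs_le : ∀ t : ℝ, 0 < t → t ≤ δ → s ≤ F (1 + t) / t := fun t ht htδ =>
    csInf_le hbdd ⟨t, ⟨ht, htδ⟩, rfl⟩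
  refine ⟨s, fun x => ?_⟩
  rcases eq_or_ne (f x) ⊤ with hfx | hfx
  · rw [hfx]; exact le_top
  have hfx' := EReal.coe_toReal hfx (hf.ne_bot x)
  rw [← hfx', EReal.coe_le_coe_iff]
  show s * (x - 1) ≤ F x
  rcases lt_trichotomy x 1 with hx1 | hx1 | hx1
  · -- x < 1 : every right slope is ≥ -F x/(1-x), so s ≥ -F x/(1-x)
    have : -F x / (1 - x) ≤ s := by
      refine le_csInf hSne ?_
      rintro y ⟨t, ⟨ht, htδ⟩, rfl⟩
      exact key x hx1 hfx t ht htδ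
    rw [div_le_iff₀ (by linarith : (0:ℝ) < 1 - x)] at this
    nlinarith
  · simp [hx1, hF1, F]
  · rcases le_or_gt x (1 + δ) with hxδ | hxδ
    · have h1 := hs_le (x - 1) (by linarith) (by linarith)
      rw [show (1 + (x - 1) : ℝ) = x by ring] at h1
      rw [le_div_iff₀ (by linarith : (0:ℝ) < x - 1)] at h1
      linarith [h1]
    · -- x > 1 + δ : chord inequality
      set μ : ℝ := δ / (x - 1) with hμ
      have hx1' : (0:ℝ) < x - 1 := by linarith
      have hμ0 : 0 < μ := div_pos hδ hx1'
      have hμ1 : μ < 1 := by rw [div_lt_one hx1']; linarith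
      have hμd : μ * (x - 1) = δ := by rw [hμ]; exact div_mul_cancel₀ _ hx1'.ne'
      have harg : μ * x + (1 - μ) * 1 = 1 + δ := by linear_combination hμd
      have hc := hf.convex_real (x := x) (y := 1) μ hμ0 hμ1 hfx hf1
      rw [harg] at hc
      have h2 : F (1 + δ) ≤ μ * F x := by
        have := hc.2; rw [hF1] at this; simpa [F] using this
      have h3 := hs_le δ hδ le_rfl
      rw [hμ] at h2
      have h4 : F (1 + δ) * (x - 1) ≤ δ * F x := by
        have := mul_le_mul_of_nonneg_right h2 (le_of_lt hx1')
        calc F (1 + δ) * (x - 1) ≤ δ / (x - 1) * F x * (x - 1) := this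
          _ = δ * F x := by field_simp
      have h5 : s * (x - 1) * δ ≤ F x * δ := by
        have h6 := mul_le_mul_of_nonneg_right h3 (le_of_lt hx1')
        have h7 : F (1 + δ) / δ * (x - 1) * δ = F (1 + δ) * (x - 1) := by field_simp
        nlinarith [h4]
      exact le_of_mul_le_mul_right h5 hδ
  -- leftover?

lemma fstar_term_le (f : ℝ → EReal) (x y : ℝ) : ((x * y : ℝ) : EReal) - f x ≤ fstar f y :=
  le_iSup (fun x => ((x * y : ℝ) : EReal) - f x) x

lemma _root_.IsF1.fstar_ge_self (hf : IsF1 a b f) (y : ℝ) : (y : EReal) ≤ fstar f y := by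
  have := fstar_term_le f 1 y
  rw [hf.at_one, one_mul] at this
  simpa using this

end Stmt4Aux
end StmtFourProof2

noncomputable section StmtFourProof3
open MeasureTheory Filter Set Topology ENNReal
namespace Stmt4Aux

lemma eIntegral_eq_top' {Ω : Type*} [MeasurableSpace Ω] {P : Measure Ω} {v : Ω → EReal}
    (hA : ∫⁻ x, posE (v x) ∂P = ⊤) (hB : ∫⁻ x, posE (-(v x)) ∂P ≠ ⊤) :
    eIntegral P v = ⊤ := by
  unfold eIntegral
  rw [hA, ← coe_ennreal_toReal hB]
  exact EReal.top_sub_coe _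

lemma measurable_posE : Measurable posE := by
  unfold posE
  exact Measurable.ite (measurableSet_singleton ⊤) measurable_const
    (ENNReal.measurable_ofReal.comp measurable_ereal_toReal)

variable {Ω : Type*} [MeasurableSpace Ω] {P : Measure Ω}

lemma mem_Mb_const (c : ℝ) : (fun _ : Ω => c) ∈ Mb Ω :=
  ⟨measurable_const, ⟨|c|, fun _ => le_refl _⟩⟩

lemma mem_Mb_mul {g h : Ω → ℝ} (hg : g ∈ Mb Ω) (hh : h ∈ Mb Ω) :
    (fun x => g x * h x) ∈ Mb Ω := by
  obtain ⟨mg, Cg, hCg⟩ := hg; obtain ⟨mh, Ch, hCh⟩ := hh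
  refine ⟨mg.mul mh, ⟨Cg * Ch + 1, fun x => ?_⟩⟩
  have h1 : (0:ℝ) ≤ Cg := le_trans (abs_nonneg _) (hCg x)
  have h2 : (0:ℝ) ≤ Ch := le_trans (abs_nonneg _) (hCh x)
  rw [abs_mul]
  nlinarith [hCg x, hCh x, abs_nonneg (g x), abs_nonneg (h x)]

lemma mem_Mb_sub_const {g : Ω → ℝ} (hg : g ∈ Mb Ω) (c : ℝ) :
    (fun x => g x - c) ∈ Mb Ω := by
  obtain ⟨mg, Cg, hCg⟩ := hg
  exact ⟨mg.sub measurable_const, ⟨Cg + |c|, fun x =>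
    (abs_sub (g x) c).trans (add_le_add (hCg x) le_rfl)⟩⟩

lemma mem_Mb_combo {g h : Ω → ℝ} (hg : g ∈ Mb Ω) (hh : h ∈ Mb Ω) (c d : ℝ) :
    (fun x => c * g x + d * h x) ∈ Mb Ω := by
  obtain ⟨mg, Cg, hCg⟩ := hg; obtain ⟨mh, Ch, hCh⟩ := hh
  refine ⟨(measurable_const.mul mg).add (measurable_const.mul mh),
    ⟨|c| * Cg + |d| * Ch, fun x => ?_⟩⟩
  have h1 : (0:ℝ) ≤ Cg := le_trans (abs_nonneg _) (hCg x)
  have h2 : (0:ℝ) ≤ Ch := le_trans (abs_nonneg _) (hCh x)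
  calc |c * g x + d * h x| ≤ |c * g x| + |d * h x| := abs_add_le _ _
    _ = |c| * |g x| + |d| * |h x| := by rw [abs_mul, abs_mul]
    _ ≤ |c| * Cg + |d| * Ch :=
        add_le_add (mul_le_mul_of_nonneg_left (hCg x) (abs_nonneg c))
          (mul_le_mul_of_nonneg_left (hCh x) (abs_nonneg d))

lemma integrable_of_mem_Mb [IsFiniteMeasure P] {h : Ω → ℝ} (hh : h ∈ Mb Ω) :
    Integrable h P := by
  obtain ⟨hm, C, hC⟩ := hh
  exact ⟨hm.aestronglyMeasurable,
    HasFiniteIntegral.of_bounded (C := C) (ae_of_all _ fun x => by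
      simpa [Real.norm_eq_abs] using hC x)⟩

variable {a b : EReal} {f : ℝ → EReal}

/-- Workhorse: if `E_P[f(h)] < ∞` then `f ∘ h` is a.e. real, its `toReal` is integrable,
and the `eIntegral` is the corresponding real integral. -/
lemma _root_.IsF1.comp_facts [IsProbabilityMeasure P] (hf : IsF1 a b f) {s : ℝ}
    (hsub : ∀ x : ℝ, ((s * (x - 1) : ℝ) : EReal) ≤ f x)
    {h : Ω → ℝ} (hh : h ∈ Mb Ω) (hlt : eIntegral P (fun x => f (h x)) < ⊤) :
    ∃ u : Ω → ℝ, Integrable u P ∧ (∀ᵐ x ∂P, f (h x) = ((u x : ℝ) : EReal)) ∧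
      eIntegral P (fun x => f (h x)) = ((∫ x, u x ∂P : ℝ) : EReal) := by
  obtain ⟨hm, C, hC⟩ := hh
  set c : ℝ := |s| * (C + 1) with hc
  have hlow : ∀ x, ((-c : ℝ) : EReal) ≤ f (h x) := by
    intro x
    refine le_trans ?_ (hsub (h x))
    rw [EReal.coe_le_coe_iff]
    have habs : |h x - 1| ≤ C + 1 := by
      have h1 := hC x; rw [abs_le] at h1 ⊢; constructor <;> linarith
    have : |s * (h x - 1)| ≤ |s| * (C + 1) := by
      rw [abs_mul]
      exact mul_le_mul_of_nonneg_left habs (abs_nonneg s)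
    linarith [neg_abs_le (s * (h x - 1))]
  have hneg_le : ∀ x, -f (h x) ≤ ((c : ℝ) : EReal) := by
    intro x
    refine EReal.neg_le_of_neg_le ?_
    rw [← EReal.coe_neg]
    exact hlow x
  have mfh : Measurable (fun x => f (h x)) := (hf.lsc.measurable).comp hm
  have mpos : Measurable (fun x => posE (f (h x))) := measurable_posE.comp mfh
  have mneg : Measurable (fun x => posE (-f (h x))) := measurable_posE.comp mfh.neg
  have hB : ∫⁻ x, posE (-f (h x)) ∂P ≤ ENNReal.ofReal c := by
    calc ∫⁻ x, posE (-f (h x)) ∂P ≤ ∫⁻ _, ENNReal.ofReal c ∂P := by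
          refine lintegral_mono fun x => ?_
          have := posE_mono (hneg_le x)
          rwa [posE_coe] at this
      _ = ENNReal.ofReal c := by simp
  have hBne : ∫⁻ x, posE (-f (h x)) ∂P ≠ ⊤ := ne_top_of_le_ne_top ofReal_ne_top hB
  have hAne : ∫⁻ x, posE (f (h x)) ∂P ≠ ⊤ := by
    intro hA
    rw [eIntegral_eq_top' hA hBne] at hlt
    exact absurd hlt (lt_irrefl _)
  have haene : ∀ᵐ x ∂P, f (h x) ≠ ⊤ := by
    filter_upwards [ae_lt_top mpos hAne] with x hx
    intro hfx
    rw [hfx, posE_top] at hx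
    exact absurd hx (lt_irrefl _)
  set u : Ω → ℝ := fun x => (f (h x)).toReal with hu
  have haeeq : ∀ᵐ x ∂P, f (h x) = ((u x : ℝ) : EReal) := by
    filter_upwards [haene] with x hx
    exact (EReal.coe_toReal hx (hf.ne_bot _)).symm
  have hui : Integrable u P := by
    refine ⟨((measurable_ereal_toReal).comp mfh).aestronglyMeasurable, ?_⟩
    rw [HasFiniteIntegral]
    calc ∫⁻ x, ‖u x‖₊ ∂P ≤ ∫⁻ x, posE (f (h x)) + posE (-f (h x)) ∂P := by
          refine lintegral_mono_ae ?_
          filter_upwards [haeeq] with x hx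
          rw [← enorm_eq_nnnorm, Real.enorm_eq_ofReal_abs, hx, posE_coe, ← EReal.coe_neg, posE_coe]
          rcases le_total 0 (u x) with h0 | h0
          · rw [abs_of_nonneg h0]; exact le_add_of_le_of_nonneg le_rfl zero_le
          · rw [abs_of_nonpos h0]; exact le_add_of_nonneg_of_le zero_le le_rfl
      _ < ⊤ := by
          rw [lintegral_add_left mpos]
          exact ENNReal.add_lt_top.mpr ⟨hAne.lt_top, hBne.lt_top⟩
  exact ⟨u, hui, haeeq, eIntegral_eq_of_ae hui haeeq⟩

/-- Part 1 core inequality. -/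
lemma part1_core [IsProbabilityMeasure P] (hf : IsF1 a b f) {s : ℝ}
    (hsub : ∀ x : ℝ, ((s * (x - 1) : ℝ) : EReal) ≤ f x)
    {g : Ω → ℝ} (hg : g ∈ Mb Ω) (ν : ℝ) {h : Ω → ℝ} (hh : h ∈ Mb Ω)
    (hint : (∫ x, h x ∂P) = 1) (hlt : eIntegral P (fun x => f (h x)) < ⊤) :
    ((∫ x, g x * h x ∂P : ℝ) : EReal) - eIntegral P (fun x => f (h x))
      ≤ (ν : EReal) + eIntegral P (fun x => fstar f (g x - ν)) := by
  obtain ⟨u, hui, haeeq, heq⟩ := hf.comp_facts hsub hh hlt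
  set w : Ω → ℝ := fun x => (g x - ν) * h x - u x with hw
  have hgh : Integrable (fun x => (g x - ν) * h x) P :=
    integrable_of_mem_Mb (mem_Mb_mul (mem_Mb_sub_const hg ν) hh)
  have hwi : Integrable w P := hgh.sub hui
  have hyoung : ∀ᵐ x ∂P, ((w x : ℝ) : EReal) ≤ fstar f (g x - ν) := by
    filter_upwards [haeeq] with x hx
    have := fstar_term_le f (h x) (g x - ν)
    rw [hx] at this
    rw [← EReal.coe_sub] at this
    convert this using 2
    ring
  have hkey := le_eIntegral_of_ae hwi hyoung
  have hw_int : ∫ x, w x ∂P = (∫ x, g x * h x ∂P) - ν - ∫ x, u x ∂P := by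
    rw [integral_sub hgh hui]
    congr 1
    have : (fun x => (g x - ν) * h x) = fun x => g x * h x - ν * h x := by
      funext x; ring
    rw [this, integral_sub (integrable_of_mem_Mb (mem_Mb_mul hg hh))
      ((integrable_of_mem_Mb hh).const_mul ν), integral_const_mul, hint, mul_one]
  rw [heq, ← EReal.coe_sub]
  calc ((∫ x, g x * h x ∂P - ∫ x, u x ∂P : ℝ) : EReal)
      = (ν : EReal) + ((∫ x, w x ∂P : ℝ) : EReal) := by
        rw [← EReal.coe_add, EReal.coe_eq_coe_iff, hw_int]; ring
    _ ≤ (ν : EReal) + eIntegral P (fun x => fstar f (g x - ν)) := add_le_add le_rfl hkey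

end Stmt4Aux
end StmtFourProof3

noncomputable section StmtFourProof4
open MeasureTheory Filter Set Topology ENNReal
namespace Stmt4Aux

variable {a b : EReal} {f : ℝ → EReal}

/-- The real open interval where `f` is finite. -/
def Iab (a b : EReal) : Set ℝ := {x : ℝ | a < (x : EReal) ∧ (x : EReal) < b}

lemma isOpen_Iab : IsOpen (Iab a b) := by
  have h1 : IsOpen {x : ℝ | a < (x : EReal)} :=
    isOpen_Ioi.preimage continuous_coe_real_ereal
  have h2 : IsOpen {x : ℝ | (x : EReal) < b} :=
    isOpen_Iio.preimage continuous_coe_real_ereal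
  exact h1.inter h2

lemma one_mem_Iab (hf : IsF1 a b f) : (1 : ℝ) ∈ Iab a b := ⟨hf.a_lt_one, hf.one_lt_b⟩

lemma _root_.IsF1.ne_top_Iab (hf : IsF1 a b f) {x : ℝ} (hx : x ∈ Iab a b) : f x ≠ ⊤ :=
  hf.finite_on x hx.1 hx.2

lemma _root_.IsF1.coe_fr (hf : IsF1 a b f) {x : ℝ} (hx : x ∈ Iab a b) :
    (((f x).toReal : ℝ) : EReal) = f x :=
  EReal.coe_toReal (hf.ne_top_Iab hx) (hf.ne_bot x)

lemma convex_Iab : Convex ℝ (Iab a b) := by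
  have : (Iab a b).OrdConnected := by
    constructor
    rintro x ⟨hx1, hx2⟩ y ⟨hy1, hy2⟩ z ⟨hz1, hz2⟩
    constructor
    · exact lt_of_lt_of_le hx1 (EReal.coe_le_coe_iff.mpr hz1)
    · exact lt_of_le_of_lt (EReal.coe_le_coe_iff.mpr hz2) hy2
  exact this.convex

lemma _root_.IsF1.convexOn_fr (hf : IsF1 a b f) :
    ConvexOn ℝ (Iab a b) (fun x => (f x).toReal) := by
  refine ⟨convex_Iab, ?_⟩
  intro x hx y hy t1 t2 ht1 ht2 hsum
  rcases eq_or_lt_of_le ht1 with h1 | h1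
  · have ht2' : t2 = 1 := by linarith
    simp [← h1, ht2']
  rcases eq_or_lt_of_le ht2 with h2 | h2
  · have ht1' : t1 = 1 := by linarith
    simp [← h2, ht1']
  have ht1lt : t1 < 1 := by linarith
  have heq : t2 = 1 - t1 := by linarith
  have hc := (hf.convex_real (x := x) (y := y) t1 h1 ht1lt (hf.ne_top_Iab hx)
    (hf.ne_top_Iab hy)).2
  simpa [smul_eq_mul, heq] using hc

lemma _root_.IsF1.continuousOn_fr (hf : IsF1 a b f) :
    ContinuousOn (fun x => (f x).toReal) (Iab a b) :=
  ConvexOn.continuousOn isOpen_Iab hf.convexOn_fr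

/-- a surjection onto the rationals. -/
def qe : ℕ → ℚ := Classical.choose (countable_iff_exists_surjective.mp inferInstance)

lemma qe_surj : Function.Surjective qe :=
  Classical.choose_spec (countable_iff_exists_surjective.mp inferInstance)

/-- enumeration of rational points of `Iab`, padded with `1`. -/
def eseq (a b : EReal) : ℕ → ℝ := fun n =>
  if a < (((qe n : ℚ) : ℝ) : EReal) ∧ (((qe n : ℚ) : ℝ) : EReal) < b
  then ((qe n : ℚ) : ℝ) else 1

lemma eseq_mem (hf : IsF1 a b f) (n : ℕ) : eseq a b n ∈ Iab a b := by
  unfold eseq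
  split_ifs with h
  · exact h
  · exact one_mem_Iab hf

lemma eseq_rat_mem {q : ℚ} (hq : a < ((q:ℝ):EReal) ∧ ((q:ℝ):EReal) < b) :
    ∃ n : ℕ, eseq a b n = (q : ℝ) := by
  obtain ⟨n, hn⟩ := qe_surj q
  refine ⟨n, ?_⟩
  unfold eseq
  rw [hn]
  exact if_pos ⟨hq.1, hq.2⟩

/-- An EReal helper: if `↑(r - ε) ≤ T` for all positive `ε`, then `↑r ≤ T`. -/
lemma coe_le_of_forall_sub {r : ℝ} {T : EReal} (hbot : T ≠ ⊥)
    (h : ∀ ε : ℝ, 0 < ε → ((r - ε : ℝ) : EReal) ≤ T) : (r : EReal) ≤ T := by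
  by_contra hc
  push_neg at hc
  have hTtop : T ≠ ⊤ := fun ht => by rw [ht] at hc; exact absurd hc (by simp)
  have hT := EReal.coe_toReal hTtop hbot
  have h1 : T.toReal < r := by rw [← EReal.coe_lt_coe_iff, hT]; exact hc
  have h2 := h ((r - T.toReal)/2) (by linarith)
  have h3 : ((r - (r - T.toReal)/2 : ℝ) : EReal) ≤ ((T.toReal : ℝ) : EReal) := by
    rw [hT]; exact h2
  rw [EReal.coe_le_coe_iff] at h3
  linarith

/-- Key representation: `fstar f y` is the sup over the countable family `eseq`. -/
lemma _root_.IsF1.fstar_eq_iSup (hf : IsF1 a b f) (y : ℝ) :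
    fstar f y = ⨆ n : ℕ, ((eseq a b n * y - (f (eseq a b n)).toReal : ℝ) : EReal) := by
  set T := ⨆ n : ℕ, ((eseq a b n * y - (f (eseq a b n)).toReal : ℝ) : EReal) with hT
  have hTbot : T ≠ ⊥ := by
    intro h
    have := le_iSup (fun n => ((eseq a b n * y - (f (eseq a b n)).toReal : ℝ) : EReal)) 0
    rw [← hT, h] at this
    exact absurd (le_bot_iff.mp this) (EReal.coe_ne_bot _)
  have claim2 : ∀ z ∈ Iab a b, ((z * y : ℝ) : EReal) - f z ≤ T := by
    intro z hz
    rw [← hf.coe_fr hz, ← EReal.coe_sub]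
    refine coe_le_of_forall_sub hTbot fun ε hε => ?_
    have hcont : ContinuousAt (fun x => (f x).toReal) z :=
      (hf.continuousOn_fr).continuousAt (isOpen_Iab.mem_nhds hz)
    rw [Metric.continuousAt_iff] at hcont
    obtain ⟨δ₂, hδ₂, hδ₂'⟩ := hcont (ε/2) (by linarith)
    obtain ⟨δI, hδI, hδI'⟩ := Metric.isOpen_iff.mp isOpen_Iab z hz
    set δ' : ℝ := min (min δ₂ δI) (ε/(2*(|y|+1))) with hδ'
    have hδ'pos : 0 < δ' := lt_min (lt_min hδ₂ hδI) (by positivity)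
    obtain ⟨q, hq1, hq2⟩ := exists_rat_btwn (show z - δ' < z by linarith)
    have hdist : dist (q:ℝ) z < δ' := by
      rw [Real.dist_eq, abs_sub_lt_iff]
      exact ⟨by linarith, by linarith⟩
    have hqI : (q:ℝ) ∈ Iab a b := hδI' (Metric.mem_ball.mpr
      (lt_of_lt_of_le hdist (le_trans (min_le_left _ _) (min_le_right _ _))))
    have hfr : |(f (q:ℝ)).toReal - (f z).toReal| < ε/2 := by
      have := hδ₂' (lt_of_lt_of_le hdist (le_trans (min_le_left _ _) (min_le_left _ _)))
      rwa [Real.dist_eq] at this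
    have hterm : z * y - (f z).toReal - ε ≤ (q:ℝ) * y - (f (q:ℝ)).toReal := by
      have h1 : |(q:ℝ) * y - z * y| ≤ ε/2 := by
        rw [← sub_mul, abs_mul]
        have hd : |(q:ℝ) - z| ≤ δ' := le_of_lt (by rwa [Real.dist_eq] at hdist)
        have hd2 : δ' ≤ ε/(2*(|y|+1)) := min_le_right _ _
        calc |(q:ℝ) - z| * |y| ≤ (ε/(2*(|y|+1))) * |y| :=
              mul_le_mul (le_trans hd hd2) le_rfl (abs_nonneg y) (by positivity)
          _ ≤ ε/2 := by
              rw [div_mul_eq_mul_div, div_le_div_iff₀ (by positivity) (by norm_num)]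
              nlinarith [abs_nonneg y]
      have h2 := abs_sub_lt_iff.mp hfr
      have h3 := abs_le.mp h1
      linarith [h2.1, h2.2, h3.1, h3.2]
    calc ((z * y - (f z).toReal - ε : ℝ) : EReal)
        ≤ (((q:ℝ) * y - (f (q:ℝ)).toReal : ℝ) : EReal) := EReal.coe_le_coe_iff.mpr hterm
      _ ≤ T := by
          rw [hT]
          obtain ⟨n, hn⟩ := eseq_rat_mem (a := a) (b := b) ⟨hqI.1, hqI.2⟩
          have := le_iSup (fun n => ((eseq a b n * y - (f (eseq a b n)).toReal : ℝ) : EReal)) n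
          rwa [hn] at this
  apply le_antisymm
  · rw [show fstar f y = ⨆ x : ℝ, (((x * y : ℝ) : EReal) - f x) from rfl]
    refine iSup_le fun x => ?_
    rcases eq_or_ne (f x) ⊤ with hfx | hfx
    · rw [hfx]
      rw [EReal.sub_top]
      exact bot_le
    by_cases hxI : x ∈ Iab a b
    · exact claim2 x hxI
    · -- boundary point: a ≤ x ≤ b, f x finite, use segment towards 1
      have hnot : ¬((x : EReal) < a ∨ b < (x : EReal)) := fun h => hfx (hf.top_outside x h)
      push_neg at hnot
      have hax : a ≤ (x : EReal) := hnot.1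
      have hxb : (x : EReal) ≤ b := hnot.2
      have hx1 : x ≠ 1 := fun h => hxI (h ▸ one_mem_Iab hf)
      have hzt : ∀ t : ℝ, 0 < t → t < 1 → (t * x + (1 - t) * 1) ∈ Iab a b := by
        intro t ht ht1
        rcases lt_or_gt_of_ne hx1 with hxlt | hxgt
        · constructor
          · refine lt_of_le_of_lt hax (EReal.coe_lt_coe_iff.mpr ?_)
            nlinarith
          · refine lt_of_lt_of_le (EReal.coe_lt_coe_iff.mpr ?_) (le_of_lt hf.one_lt_b)
            nlinarith
        · constructor
          · exact lt_of_lt_of_le hf.a_lt_one (EReal.coe_le_coe_iff.mpr (by nlinarith))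
          · exact lt_of_lt_of_le (EReal.coe_lt_coe_iff.mpr (by nlinarith)) hxb
      have hfxcoe := EReal.coe_toReal hfx (hf.ne_bot x)
      rw [← hfxcoe, ← EReal.coe_sub]
      set Fx := (f x).toReal with hFx
      refine coe_le_of_forall_sub hTbot fun ε hε => ?_
      set m := |y - (x * y - Fx)| with hm
      set η : ℝ := min (1/2) (ε/(1+m)) with hη
      have hm0 : 0 ≤ m := abs_nonneg _
      have hη0 : 0 < η := lt_min (by norm_num) (by positivity)
      have hη1 : η < 1 := lt_of_le_of_lt (min_le_left _ _) (by norm_num)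
      set t : ℝ := 1 - η with ht
      have ht0 : 0 < t := by rw [ht]; linarith
      have ht1 : t < 1 := by rw [ht]; linarith
      have hmem := hzt t ht0 ht1
      have hconv := hf.convex x 1 t ht0 ht1
      rw [hf.at_one] at hconv
      have hconv2 : f (t * x + (1 - t) * 1) ≤ ((t * Fx : ℝ) : EReal) := by
        calc f (t * x + (1 - t) * 1) ≤ (t : EReal) * f x + ((1 - t : ℝ) : EReal) * 0 := hconv
          _ = (t : EReal) * f x := by rw [mul_zero, add_zero]
          _ = ((t * Fx : ℝ) : EReal) := by rw [← hfxcoe, ← EReal.coe_mul]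
      have hstep := claim2 _ hmem
      have hstep2 : (((t * x + (1 - t) * 1) * y - t * Fx : ℝ) : EReal) ≤ T := by
        refine le_trans ?_ hstep
        rw [EReal.coe_sub]
        exact EReal.sub_le_sub (le_refl _) hconv2
      refine le_trans (EReal.coe_le_coe_iff.mpr ?_) hstep2
      have hcalc : (t * x + (1 - t) * 1) * y - t * Fx
          = (x * y - Fx) + (1 - t) * (y - (x * y - Fx)) := by ring
      have hbnd : |(1 - t) * (y - (x * y - Fx))| ≤ ε := by
        rw [abs_mul, abs_of_nonneg (by linarith : (0:ℝ) ≤ 1 - t)]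
        have h1t : 1 - t = η := by rw [ht]; ring
        rw [h1t, ← hm]
        calc η * m ≤ (ε / (1 + m)) * m := mul_le_mul_of_nonneg_right (min_le_right _ _) hm0
          _ ≤ ε := by rw [div_mul_eq_mul_div, div_le_iff₀ (by positivity)]; nlinarith
      have habs := abs_le.mp hbnd
      rw [hcalc]
      linarith [habs.1]
  · refine iSup_le fun n => ?_
    have := fstar_term_le f (eseq a b n) y
    rwa [← hf.coe_fr (eseq_mem hf n), ← EReal.coe_sub] at this

end Stmt4Aux
end StmtFourProof4

noncomputable section StmtFourProof5
open MeasureTheory Filter Set Topology ENNReal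
namespace Stmt4Aux

lemma tendsto_of_iSup_coe {r : ℕ → ℝ} (hmono : Monotone r) {Z : ℝ}
    (h : (⨆ N, ((r N : ℝ) : EReal)) = (Z : EReal)) : Tendsto r atTop (nhds Z) := by
  have hb : ∀ N, r N ≤ Z := fun N => by
    rw [← EReal.coe_le_coe_iff, ← h]
    exact le_iSup (fun N => ((r N : ℝ) : EReal)) N
  have hbdd : BddAbove (Set.range r) := ⟨Z, by rintro y ⟨N, rfl⟩; exact hb N⟩
  have ht := tendsto_atTop_ciSup hmono hbdd
  have hZ : (⨆ N, r N) = Z := by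
    refine le_antisymm (ciSup_le hb) ?_
    by_contra hlt
    push_neg at hlt
    set ε := Z - ⨆ N, r N with hε
    have hε0 : 0 < ε := by simp [hε]; linarith
    have : ((Z - ε : ℝ) : EReal) < ((Z : ℝ) : EReal) := EReal.coe_lt_coe_iff.mpr (by linarith)
    rw [← h] at this
    rw [lt_iSup_iff] at this
    obtain ⟨N, hN⟩ := this
    rw [EReal.coe_lt_coe_iff] at hN
    have := le_ciSup hbdd N
    simp only [hε] at hN
    linarith
  rwa [hZ] at ht

lemma iSup_coe_ne_bot {r : ℕ → ℝ} : (⨆ N, ((r N : ℝ) : EReal)) ≠ ⊥ := by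
  intro h
  have := le_iSup (fun N => ((r N : ℝ) : EReal)) 0
  rw [h, le_bot_iff] at this
  exact EReal.coe_ne_bot _ this

lemma unbounded_of_iSup_coe_top {r : ℕ → ℝ} (h : (⨆ N, ((r N : ℝ) : EReal)) = ⊤) :
    ∀ K : ℝ, ∃ N, K < r N := by
  intro K
  have : ((K : ℝ) : EReal) < ⨆ N, ((r N : ℝ) : EReal) := by rw [h]; exact EReal.coe_lt_top K
  rw [lt_iSup_iff] at this
  obtain ⟨N, hN⟩ := this
  exact ⟨N, EReal.coe_lt_coe_iff.mp hN⟩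

lemma iSup_ofReal_eq_posE {r : ℕ → ℝ} (hmono : Monotone r) {z : EReal}
    (h : (⨆ N, ((r N : ℝ) : EReal)) = z) : (⨆ N, ENNReal.ofReal (r N)) = posE z := by
  induction z with
  | bot => exact absurd h iSup_coe_ne_bot
  | coe Z =>
      rw [posE_coe]
      refine le_antisymm (iSup_le fun N => ENNReal.ofReal_le_ofReal ?_) ?_
      · rw [← EReal.coe_le_coe_iff, ← h]
        exact le_iSup (fun N => ((r N : ℝ) : EReal)) N
      · have ht := tendsto_of_iSup_coe hmono h
        have hconv : Tendsto (fun N => ENNReal.ofReal (r N)) atTop (nhds (ENNReal.ofReal Z)) :=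
          (ENNReal.continuous_ofReal.tendsto Z).comp ht
        exact le_of_tendsto hconv (Eventually.of_forall fun N =>
          le_iSup (fun N => ENNReal.ofReal (r N)) N)
  | top =>
      rw [posE_top]
      by_contra hne
      have hXne : (⨆ N, ENNReal.ofReal (r N)) ≠ ⊤ := hne
      set X := ⨆ N, ENNReal.ofReal (r N) with hX
      obtain ⟨N, hN⟩ := unbounded_of_iSup_coe_top h (X.toReal + 1)
      have h1 : ENNReal.ofReal (X.toReal + 1) ≤ ENNReal.ofReal (r N) :=
        ENNReal.ofReal_le_ofReal (le_of_lt hN)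
      have h2 : ENNReal.ofReal (r N) ≤ X := le_iSup (fun N => ENNReal.ofReal (r N)) N
      have h3 := ENNReal.toReal_le_toReal (ne_of_lt (lt_of_le_of_lt (h1.trans h2) hXne.lt_top)) hXne |>.mpr (h1.trans h2) |>.trans (le_refl _)
      have h4 : X.toReal + 1 ≤ X.toReal := by
        have h5 := ENNReal.toReal_mono hXne (h1.trans h2)
        rwa [ENNReal.toReal_ofReal (by positivity)] at h5
      linarith

lemma tendsto_ofReal_neg_posE {r : ℕ → ℝ} (hmono : Monotone r) {z : EReal}
    (h : (⨆ N, ((r N : ℝ) : EReal)) = z) :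
    Tendsto (fun N => ENNReal.ofReal (-(r N))) atTop (nhds (posE (-z))) := by
  induction z with
  | bot => exact absurd h iSup_coe_ne_bot
  | coe Z =>
      have ht := tendsto_of_iSup_coe hmono h
      have : Tendsto (fun N => ENNReal.ofReal (-(r N))) atTop (nhds (ENNReal.ofReal (-Z))) :=
        (ENNReal.continuous_ofReal.tendsto _).comp (ht.neg)
      rwa [← posE_neg_coe] at this
  | top =>
      have : posE (-(⊤ : EReal)) = 0 := by
        rw [show -(⊤ : EReal) = ⊥ by simp, posE_bot]
      rw [this]
      obtain ⟨N₀, hN₀⟩ := unbounded_of_iSup_coe_top h 0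
      have hev : ∀ᶠ N in atTop, ENNReal.ofReal (-(r N)) = 0 := by
        filter_upwards [eventually_ge_atTop N₀] with N hN
        have : 0 < r N := lt_of_lt_of_le hN₀ (hmono hN)
        simp [ENNReal.ofReal_eq_zero]
        linarith
      exact Tendsto.congr' (hev.mono fun N hN => hN.symm) tendsto_const_nhds

variable {Ω : Type*} [MeasurableSpace Ω]

lemma mem_Mb_max {u v : Ω → ℝ} (hu : u ∈ Mb Ω) (hv : v ∈ Mb Ω) :
    (fun x => max (u x) (v x)) ∈ Mb Ω := by
  obtain ⟨mu, Cu, hCu⟩ := hu; obtain ⟨mv, Cv, hCv⟩ := hv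
  refine ⟨mu.max mv, ⟨max Cu Cv, fun x => ?_⟩⟩
  refine (abs_max_le_max_abs_abs).trans (max_le_max (hCu x) (hCv x))

/-- running maximum -/
def Mrec (φ : ℕ → Ω → ℝ) : ℕ → Ω → ℝ
  | 0 => φ 0
  | (N+1) => fun x => max (Mrec φ N x) (φ (N+1) x)

/-- running argmax selector (returning values `e n`) -/
def Hrec (e : ℕ → ℝ) (φ : ℕ → Ω → ℝ) : ℕ → Ω → ℝ
  | 0 => fun _ => e 0
  | (N+1) => fun x => if Mrec φ N x < φ (N+1) x then e (N+1) else Hrec e φ N x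

variable {φ : ℕ → Ω → ℝ} {e : ℕ → ℝ}

lemma Mrec_mono (x : Ω) : Monotone (fun N => Mrec φ N x) := by
  refine monotone_nat_of_le_succ fun N => ?_
  exact le_max_left _ _

lemma phi_le_Mrec (n : ℕ) (x : Ω) : φ n x ≤ Mrec φ n x := by
  cases n with
  | zero => exact le_refl _
  | succ N => exact le_max_right _ _

lemma Mrec_mem_Mb (hφ : ∀ n, φ n ∈ Mb Ω) : ∀ N, Mrec φ N ∈ Mb Ω := by
  intro N
  induction N with
  | zero => exact hφ 0
  | succ N ih => exact mem_Mb_max ih (hφ (N+1))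

lemma Hrec_mem_Mb (hφ : ∀ n, φ n ∈ Mb Ω) : ∀ N, Hrec e φ N ∈ Mb Ω := by
  intro N
  induction N with
  | zero => exact mem_Mb_const _
  | succ N ih =>
      obtain ⟨mH, CH, hCH⟩ := ih
      refine ⟨Measurable.ite (measurableSet_lt (Mrec_mem_Mb hφ N).1 (hφ (N+1)).1)
        measurable_const mH, ⟨max |e (N+1)| CH, fun x => ?_⟩⟩
      show |if Mrec φ N x < φ (N+1) x then e (N+1) else Hrec e φ N x| ≤ _
      split_ifs
      · exact le_max_left _ _
      · exact le_trans (hCH x) (le_max_right _ _)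

lemma Hrec_spec : ∀ N x, ∃ n, Hrec e φ N x = e n ∧ φ n x = Mrec φ N x := by
  intro N
  induction N with
  | zero => exact fun x => ⟨0, rfl, rfl⟩
  | succ N ih =>
      intro x
      obtain ⟨n, hn1, hn2⟩ := ih x
      show ∃ m, (if Mrec φ N x < φ (N+1) x then e (N+1) else Hrec e φ N x) = e m ∧
        φ m x = max (Mrec φ N x) (φ (N+1) x)
      split_ifs with hcond
      · exact ⟨N+1, rfl, (max_eq_right (le_of_lt hcond)).symm⟩
      · exact ⟨n, hn1, by rw [hn2, max_eq_left (not_lt.mp hcond)]⟩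

end Stmt4Aux
end StmtFourProof5

noncomputable section StmtFourProof5b
open MeasureTheory Filter Set Topology ENNReal
namespace Stmt4Aux

variable {Ω : Type*} [MeasurableSpace Ω]

lemma mem_Mb_sub {u v : Ω → ℝ} (hu : u ∈ Mb Ω) (hv : v ∈ Mb Ω) :
    (fun x => u x - v x) ∈ Mb Ω := by
  obtain ⟨mu, Cu, hCu⟩ := hu; obtain ⟨mv, Cv, hCv⟩ := hv
  exact ⟨mu.sub mv, ⟨Cu + Cv, fun x => (abs_sub _ _).trans (add_le_add (hCu x) (hCv x))⟩⟩

/-- Selection lemma: any real below `E_P[f*(w)]` is beaten by some bounded measurable `h`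
with `f ∘ h` everywhere real. -/
lemma selection {P : Measure Ω} [IsProbabilityMeasure P] {a b : EReal} {f : ℝ → EReal}
    (hf : IsF1 a b f) {w : Ω → ℝ} (hw : w ∈ Mb Ω) {r : ℝ}
    (hr : (r : EReal) < eIntegral P (fun x => fstar f (w x))) :
    ∃ h : Ω → ℝ, h ∈ Mb Ω ∧ ∃ E : ℝ,
      eIntegral P (fun x => f (h x)) = (E : EReal) ∧
      r < (∫ x, w x * h x ∂P) - E := by
  obtain ⟨mw, Cw, hCw⟩ := hw
  have hw' : w ∈ Mb Ω := ⟨mw, Cw, hCw⟩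
  set e : ℕ → ℝ := eseq a b with he
  set fr : ℝ → ℝ := fun v => (f v).toReal with hfr
  set φ : ℕ → Ω → ℝ := fun n x => e n * w x - fr (e n) with hφ
  have hφMb : ∀ n, φ n ∈ Mb Ω := by
    intro n
    refine ⟨(measurable_const.mul mw).sub measurable_const,
      ⟨|e n| * Cw + |fr (e n)|, fun x => ?_⟩⟩
    calc |e n * w x - fr (e n)| ≤ |e n * w x| + |fr (e n)| := abs_sub _ _
      _ ≤ |e n| * Cw + |fr (e n)| := by
          rw [abs_mul]
          exact add_le_add (mul_le_mul_of_nonneg_left (hCw x) (abs_nonneg _)) le_rfl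
  set M : ℕ → Ω → ℝ := Mrec φ with hM
  have hMb : ∀ N, M N ∈ Mb Ω := Mrec_mem_Mb hφMb
  have hMint : ∀ N, Integrable (M N) P := fun N => integrable_of_mem_Mb (hMb N)
  have hmono_x : ∀ x, Monotone (fun N => M N x) := fun x => Mrec_mono x
  -- pointwise sup equals fstar ∘ w
  have hsup : ∀ x, (⨆ N, ((M N x : ℝ) : EReal)) = fstar f (w x) := by
    intro x
    rw [hf.fstar_eq_iSup (w x)]
    apply le_antisymm
    · refine iSup_le fun N => ?_
      obtain ⟨n, _, hn2⟩ := Hrec_spec (e := e) (φ := φ) N x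
      have h2 : M N x = φ n x := hn2.symm
      rw [h2]
      exact le_iSup (fun m => ((eseq a b m * w x - (f (eseq a b m)).toReal : ℝ) : EReal)) n
    · refine iSup_le fun n => ?_
      refine le_trans (EReal.coe_le_coe_iff.mpr (phi_le_Mrec (φ := φ) n x)) ?_
      exact le_iSup (fun N => ((M N x : ℝ) : EReal)) n
  set AN : ℕ → ℝ≥0∞ := fun N => ∫⁻ x, ENNReal.ofReal (M N x) ∂P with hAN
  set BN : ℕ → ℝ≥0∞ := fun N => ∫⁻ x, ENNReal.ofReal (-(M N x)) ∂P with hBN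
  set A : ℝ≥0∞ := ∫⁻ x, posE (fstar f (w x)) ∂P with hA
  set B : ℝ≥0∞ := ∫⁻ x, posE (-(fstar f (w x))) ∂P with hB
  have hmeasM : ∀ N, Measurable fun x => ENNReal.ofReal (M N x) :=
    fun N => ENNReal.measurable_ofReal.comp (hMb N).1
  have hmeasMn : ∀ N, Measurable fun x => ENNReal.ofReal (-(M N x)) :=
    fun N => ENNReal.measurable_ofReal.comp (hMb N).1.neg
  have hAsup : (⨆ N, AN N) = A := by
    rw [hAN, hA, ← lintegral_iSup hmeasM
      (fun N N' h x => ENNReal.ofReal_le_ofReal (hmono_x x h))]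
    congr 1
    funext x
    exact iSup_ofReal_eq_posE (hmono_x x) (hsup x)
  obtain ⟨_, C0, hC0⟩ := hφMb 0
  set C0' : ℝ := |C0| with hC0'
  have hφ0bnd : ∀ x, |φ 0 x| ≤ C0' := fun x => (hC0 x).trans (le_abs_self C0)
  have hnegbound : ∀ N x, ENNReal.ofReal (-(M N x)) ≤ ENNReal.ofReal C0' := by
    intro N x
    refine ENNReal.ofReal_le_ofReal ?_
    have h1 : φ 0 x ≤ M N x := le_trans (phi_le_Mrec 0 x) (hmono_x x (Nat.zero_le N))
    have := hφ0bnd x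
    rw [abs_le] at this
    linarith [this.1]
  have hBtend : Tendsto BN atTop (nhds B) := by
    refine tendsto_lintegral_of_dominated_convergence (fun _ => ENNReal.ofReal C0')
      hmeasMn (fun N => Eventually.of_forall fun x => hnegbound N x) ?_ ?_
    · simp
    · exact Eventually.of_forall fun x => tendsto_ofReal_neg_posE (hmono_x x) (hsup x)
  have hBNle : ∀ N, BN N ≤ ENNReal.ofReal C0' := by
    intro N
    calc BN N ≤ ∫⁻ _, ENNReal.ofReal C0' ∂P := lintegral_mono fun x => hnegbound N x
      _ = ENNReal.ofReal C0' := by simp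
  have hBle : B ≤ ENNReal.ofReal C0' := le_of_tendsto hBtend
    (Eventually.of_forall fun N => hBNle N)
  have hBfin : B ≠ ⊤ := (lt_of_le_of_lt hBle ofReal_lt_top).ne
  have hANne : ∀ N, AN N ≠ ⊤ := fun N => (lintegral_ofReal_lt_top (hMint N)).ne
  have hBNne : ∀ N, BN N ≠ ⊤ := fun N => (lt_of_le_of_lt (hBNle N) ofReal_lt_top).ne
  have hMint_eq : ∀ N, ∫ x, M N x ∂P = (AN N).toReal - (BN N).toReal := fun N =>
    integral_eq_lintegral_pos_part_sub_lintegral_neg_part (hMint N)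
  have heI : eIntegral P (fun x => fstar f (w x)) = (A : EReal) - (B : EReal) := rfl
  have hBNt : ∀ N, (BN N).toReal ≤ C0' := by
    intro N
    have := ENNReal.toReal_mono ofReal_ne_top (hBNle N)
    rwa [ENNReal.toReal_ofReal (abs_nonneg C0)] at this
  -- find N with r < ∫ M N
  have hkey : ∃ N, r < ∫ x, M N x ∂P := by
    rcases eq_or_ne A ⊤ with hAtop | hAtop
    · have : ENNReal.ofReal (|r| + C0' + 1) < ⨆ N, AN N := by
        rw [hAsup, hAtop]; exact ofReal_lt_top
      rw [lt_iSup_iff] at this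
      obtain ⟨N, hN⟩ := this
      refine ⟨N, ?_⟩
      have h1 : |r| + C0' + 1 ≤ (AN N).toReal := by
        have := ENNReal.toReal_mono (hANne N) (le_of_lt hN)
        rwa [ENNReal.toReal_ofReal (by positivity)] at this
      rw [hMint_eq N]
      have h2 := hBNt N
      have h3 := neg_abs_le r
      linarith [le_abs_self r]
    · have hr' : r < A.toReal - B.toReal := by
        rw [heI, ennreal_sub_eq_coe hAtop hBfin, EReal.coe_lt_coe_iff] at hr
        exact hr
      have hAmono : Monotone AN := fun N N' h =>
        lintegral_mono fun x => ENNReal.ofReal_le_ofReal (hmono_x x h)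
      have hAtend : Tendsto AN atTop (nhds A) := by
        rw [← hAsup]; exact tendsto_atTop_iSup hAmono
      have hAt : Tendsto (fun N => (AN N).toReal) atTop (nhds A.toReal) :=
        (ENNReal.tendsto_toReal hAtop).comp hAtend
      have hBt : Tendsto (fun N => (BN N).toReal) atTop (nhds B.toReal) :=
        (ENNReal.tendsto_toReal hBfin).comp hBtend
      have hsub := hAt.sub hBt
      obtain ⟨N, hN⟩ := ((tendsto_order.1 hsub).1 r hr').exists
      refine ⟨N, ?_⟩
      rw [hMint_eq N]
      exact hN
  obtain ⟨N, hN⟩ := hkey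
  set h : Ω → ℝ := Hrec e φ N with hh
  have hhMb : h ∈ Mb Ω := Hrec_mem_Mb hφMb N
  set u : Ω → ℝ := fun x => h x * w x - M N x with hu
  have huMb : u ∈ Mb Ω := mem_Mb_sub (mem_Mb_mul hhMb hw') (hMb N)
  have hpt : ∀ x, f (h x) = ((u x : ℝ) : EReal) := by
    intro x
    obtain ⟨n, hn1, hn2⟩ := Hrec_spec (e := e) (φ := φ) N x
    have hn1' : h x = e n := hn1
    have hn2' : M N x = φ n x := hn2.symm
    have h1 : u x = fr (e n) := by
      show h x * w x - M N x = fr (e n)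
      rw [hn1', hn2']
      show e n * w x - (e n * w x - fr (e n)) = fr (e n)
      ring
    rw [h1, hn1']
    exact (hf.coe_fr (eseq_mem hf n)).symm
  have hu_int : Integrable u P := integrable_of_mem_Mb huMb
  have hEeq : eIntegral P (fun x => f (h x)) = ((∫ x, u x ∂P : ℝ) : EReal) :=
    eIntegral_eq_of_ae hu_int (ae_of_all _ hpt)
  refine ⟨h, hhMb, ∫ x, u x ∂P, hEeq, ?_⟩
  have hwh : (fun x => w x * h x) = fun x => u x + M N x := by
    funext x
    show w x * h x = h x * w x - M N x + M N x
    ring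
  rw [hwh, integral_add hu_int (hMint N)]
  linarith

end Stmt4Aux
end StmtFourProof5b

noncomputable section StmtFourProof6
open MeasureTheory Filter Set Topology ENNReal
namespace Stmt4Aux

lemma exists_coe_lt {x : EReal} (h : x ≠ ⊥) : ∃ r : ℝ, (r : EReal) < x := by
  induction x with
  | bot => exact absurd rfl h
  | coe Z => exact ⟨Z - 1, EReal.coe_lt_coe_iff.mpr (by linarith)⟩
  | top => exact ⟨0, EReal.coe_lt_top 0⟩

lemma eq_top_of_forall_coe_le {x : EReal} (h : ∀ r : ℝ, (r : EReal) ≤ x) : x = ⊤ := by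
  induction x with
  | bot => exact absurd (h 0) (by simp)
  | coe Z =>
      have := EReal.coe_le_coe_iff.mp (h (Z + 1))
      linarith
  | top => rfl

lemma comb_zero {p q : ℝ} (h : q - p ≠ 0) : (q/(q-p)) * p + (1 - q/(q-p)) * q = 0 := by
  field_simp
  ring

/-- Existence of a global supergradient at `0` for a "concave" `EReal`-valued function
finite at `0` and `≠ ⊥` near `0`. -/
lemma concave_supergrad {φ : ℝ → EReal} {δ : ℝ} (hδ : 0 < δ)
    (hconc : ∀ t1 t2 lam r1 r2 : ℝ, 0 < lam → lam < 1 →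
      (r1 : EReal) < φ t1 → (r2 : EReal) < φ t2 →
      ((lam * r1 + (1 - lam) * r2 : ℝ) : EReal) ≤ φ (lam * t1 + (1 - lam) * t2))
    (h0top : φ 0 ≠ ⊤) (h0bot : φ 0 ≠ ⊥) (hbot : ∀ t : ℝ, |t| < δ → φ t ≠ ⊥) :
    ∃ ν : ℝ, ∀ t : ℝ, φ t ≤ φ 0 + ((ν * t : ℝ) : EReal) := by
  -- (i) φ is nowhere ⊤
  have hδ2 : |δ/2| < δ := by rw [abs_of_pos (half_pos hδ)]; linarith
  have hδ2' : |(-(δ/2))| < δ := by rw [abs_neg, abs_of_pos (half_pos hδ)]; linarith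
  have htop : ∀ t : ℝ, φ t ≠ ⊤ := by
    have key : ∀ t t'' : ℝ, |t''| < δ → t'' - t ≠ 0 → 0 < t''/(t''-t) → t''/(t''-t) < 1 →
        φ t ≠ ⊤ := by
      intro t t'' habs hne hl0 hl1 hϕt
      obtain ⟨r2, hr2⟩ := exists_coe_lt (hbot t'' habs)
      set lam := t''/(t''-t) with hlam
      have hfinal : φ 0 = ⊤ := by
        refine eq_top_of_forall_coe_le fun K => ?_
        set r1 : ℝ := (K - (1 - lam) * r2) / lam with hr1
        have hval := hconc t t'' lam r1 r2 hl0 hl1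
          (by rw [hϕt]; exact EReal.coe_lt_top _) hr2
        rw [show lam * t + (1 - lam) * t'' = 0 from by rw [hlam]; exact comb_zero hne] at hval
        have hK : lam * r1 + (1 - lam) * r2 = K := by
          rw [hr1]; field_simp; ring
        rwa [hK] at hval
      exact h0top hfinal
    intro t
    rcases lt_trichotomy t 0 with ht | ht | ht
    · refine key t (δ/2) hδ2 (by intro hc; linarith [sub_eq_zero.mp hc])
        (div_pos (half_pos hδ) (by linarith)) ?_
      rw [div_lt_one (by linarith)]; linarith
    · rw [ht]; exact h0top
    · refine key t (-(δ/2)) hδ2' (by intro hc; linarith [sub_eq_zero.mp hc]) ?_ ?_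
      · have hrw : (-(δ/2))/(-(δ/2)-t) = (δ/2)/(δ/2+t) := by
          rw [show -(δ/2) - t = -(δ/2 + t) by ring, neg_div_neg_eq]
        rw [hrw]
        exact div_pos (half_pos hδ) (by linarith)
      · have hrw : (-(δ/2))/(-(δ/2)-t) = (δ/2)/(δ/2+t) := by
          rw [show -(δ/2) - t = -(δ/2 + t) by ring, neg_div_neg_eq]
        rw [hrw, div_lt_one (by linarith)]
        linarith
  -- real concavity helper
  have hconcR : ∀ t1 t2 lam : ℝ, 0 < lam → lam < 1 → φ t1 ≠ ⊥ → φ t2 ≠ ⊥ →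
      φ (lam * t1 + (1 - lam) * t2) ≠ ⊥ ∧
      lam * (φ t1).toReal + (1 - lam) * (φ t2).toReal
        ≤ (φ (lam * t1 + (1 - lam) * t2)).toReal := by
    intro t1 t2 lam hlam0 hlam1 hb1 hb2
    have hcoe1 := EReal.coe_toReal (htop t1) hb1
    have hcoe2 := EReal.coe_toReal (htop t2) hb2
    set w1 := (φ t1).toReal
    set w2 := (φ t2).toReal
    have hstep : ∀ ε : ℝ, 0 < ε →
        ((lam * (w1 - ε) + (1 - lam) * (w2 - ε) : ℝ) : EReal) ≤ φ (lam * t1 + (1 - lam) * t2) := by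
      intro ε hε
      refine hconc t1 t2 lam (w1 - ε) (w2 - ε) hlam0 hlam1 ?_ ?_
      · rw [← hcoe1]; exact EReal.coe_lt_coe_iff.mpr (by linarith)
      · rw [← hcoe2]; exact EReal.coe_lt_coe_iff.mpr (by linarith)
    have hnb : φ (lam * t1 + (1 - lam) * t2) ≠ ⊥ := by
      intro hcb
      have := hstep 1 one_pos
      rw [hcb, le_bot_iff] at this
      exact EReal.coe_ne_bot _ this
    refine ⟨hnb, ?_⟩
    have hcoe3 := EReal.coe_toReal (htop _) hnb
    by_contra hlt
    push_neg at hlt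
    set d := lam * w1 + (1 - lam) * w2 - (φ (lam * t1 + (1 - lam) * t2)).toReal with hd
    have hd0 : 0 < d := by rw [hd]; linarith
    have := hstep (d/2) (by linarith)
    rw [← hcoe3, EReal.coe_le_coe_iff] at this
    have hexp : lam * (w1 - d/2) + (1 - lam) * (w2 - d/2) = lam * w1 + (1-lam) * w2 - d/2 := by
      ring
    rw [hexp] at this
    rw [hd] at this
    linarith
  -- the function is real on (-δ, δ)
  have hw : ∀ t : ℝ, |t| < δ → (((φ t).toReal : ℝ) : EReal) = φ t :=
    fun t ht => EReal.coe_toReal (htop t) (hbot t ht)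
  set w : ℝ → ℝ := fun t => (φ t).toReal with hwdef
  have h0δ : |(0:ℝ)| < δ := by simpa using hδ
  -- slopes over (0, δ/2]
  set Sl : Set ℝ := (fun q => (w q - w 0) / q) '' (Set.Ioc 0 (δ/2)) with hSl
  have hSlne : Sl.Nonempty := ⟨_, ⟨δ/2, ⟨half_pos hδ, le_rfl⟩, rfl⟩⟩
  -- three-point: for p < 0 < q (both in (-δ,δ)): (-p)*(w q - w 0) ≤ q*(w 0 - w p)
  have hthree : ∀ p q : ℝ, -δ < p → p < 0 → 0 < q → q < δ →
      (-p) * (w q - w 0) ≤ q * (w 0 - w p) := by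
    intro p q hp1 hp2 hq1 hq2
    set lam : ℝ := q / (q - p) with hlam
    have hqp : 0 < q - p := by linarith
    have hlam0 : 0 < lam := div_pos hq1 hqp
    have hlam1 : lam < 1 := by rw [hlam, div_lt_one hqp]; linarith
    have hbp : φ p ≠ ⊥ := hbot p (by rw [abs_of_neg hp2]; linarith)
    have hbq : φ q ≠ ⊥ := hbot q (by rw [abs_of_pos hq1]; linarith)
    have harg : lam * p + (1 - lam) * q = 0 := by rw [hlam]; exact comb_zero (ne_of_gt hqp)
    have hc := (hconcR p q lam hlam0 hlam1 hbp hbq).2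
    rw [harg] at hc
    have h1lam : 1 - lam = -p / (q - p) := by rw [hlam]; field_simp; ring
    rw [hlam, h1lam] at hc
    have hc2 : q * w p + (-p) * w q ≤ (q - p) * w 0 := by
      have := mul_le_mul_of_nonneg_right hc (le_of_lt hqp)
      calc q * w p + (-p) * w q
          = (q / (q - p) * w p + -p / (q - p) * w q) * (q - p) := by field_simp; try ring
        _ ≤ w 0 * (q - p) := this
        _ = (q - p) * w 0 := by ring
    nlinarith
  have hbddSl : BddAbove Sl := by
    refine ⟨(w 0 - w (-(δ/2))) / (δ/2), ?_⟩
    rintro y ⟨q, ⟨hq1, hq2⟩, rfl⟩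
    have := hthree (-(δ/2)) q (by linarith) (by linarith) hq1 (by linarith)
    rw [div_le_div_iff₀ hq1 (half_pos hδ)]
    nlinarith
  set ν : ℝ := sSup Sl with hν
  refine ⟨ν, fun t => ?_⟩
  rcases eq_or_ne (φ t) ⊥ with hbt | hbt
  · rw [hbt]; exact bot_le
  have hcoet := EReal.coe_toReal (htop t) hbt
  have hcoe0 := hw 0 h0δ
  have hgoal : ∀ wt : ℝ, ((wt : ℝ) : EReal) = φ t → wt - w 0 ≤ ν * t →
      φ t ≤ φ 0 + ((ν * t : ℝ) : EReal) := by
    intro wt hwt hineq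
    rw [← hwt, ← hcoe0, ← EReal.coe_add, EReal.coe_le_coe_iff]
    linarith
  rcases lt_trichotomy t 0 with ht | ht | ht
  · -- t < 0 : ν ≤ (w t' - w 0)/t ; every slope is ≤ (w0 - φt)/(-t)
    refine hgoal (φ t).toReal hcoet ?_
    have hub : ∀ y ∈ Sl, y ≤ (w 0 - (φ t).toReal) / (-t) := by
      rintro y ⟨q, ⟨hq1, hq2⟩, rfl⟩
      set lam : ℝ := q / (q - t) with hlam
      have hqt : 0 < q - t := by linarith
      have hlam0 : 0 < lam := div_pos hq1 hqt
      have hlam1 : lam < 1 := by rw [hlam, div_lt_one hqt]; linarith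
      have hbq : φ q ≠ ⊥ := hbot q (by rw [abs_of_pos hq1]; linarith)
      have harg : lam * t + (1 - lam) * q = 0 := by rw [hlam]; exact comb_zero (ne_of_gt hqt)
      have hc := (hconcR t q lam hlam0 hlam1 hbt hbq).2
      rw [harg] at hc
      have h1lam : 1 - lam = -t / (q - t) := by rw [hlam]; field_simp; ring
      rw [hlam, h1lam] at hc
      have hc2 : q * (φ t).toReal + (-t) * w q ≤ (q - t) * w 0 := by
        have := mul_le_mul_of_nonneg_right hc (le_of_lt hqt)
        calc q * (φ t).toReal + (-t) * w q
            = (q / (q - t) * (φ t).toReal + -t / (q - t) * w q) * (q - t) := by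
              field_simp; try ring
          _ ≤ w 0 * (q - t) := this
          _ = (q - t) * w 0 := by ring
      rw [div_le_div_iff₀ hq1 (by linarith : (0:ℝ) < -t)]
      nlinarith
    have hνle : ν ≤ (w 0 - (φ t).toReal) / (-t) := csSup_le hSlne hub
    rw [le_div_iff₀ (by linarith : (0:ℝ) < -t)] at hνle
    nlinarith
  · rw [ht, mul_zero]
    rw [show ((0:ℝ):EReal) = (0 : EReal) by simp, add_zero]
  · -- t > 0
    refine hgoal (φ t).toReal hcoet ?_
    rcases le_or_gt t (δ/2) with htδ | htδ
    · have hsl : (w t - w 0) / t ≤ ν := le_csSup hbddSl ⟨t, ⟨ht, htδ⟩, rfl⟩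
      rw [div_le_iff₀ ht] at hsl
      have hwt : w t = (φ t).toReal := rfl
      nlinarith
    · -- t > δ/2 : chord through δ/2
      set lam : ℝ := (t - δ/2) / t with hlam
      have hlam0 : 0 < lam := div_pos (by linarith) (by linarith)
      have hlam1 : lam < 1 := by rw [hlam, div_lt_one (by linarith)]; linarith
      have harg : lam * 0 + (1 - lam) * t = δ/2 := by rw [hlam]; field_simp; try ring
      have hb0 : φ 0 ≠ ⊥ := h0bot
      have hc := (hconcR 0 t lam hlam0 hlam1 hb0 hbt).2
      rw [harg] at hc
      have h1lam : 1 - lam = (δ/2) / t := by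
        rw [hlam]; field_simp; ring
      rw [hlam, h1lam] at hc
      have hsl : (w (δ/2) - w 0) / (δ/2) ≤ ν :=
        le_csSup hbddSl ⟨δ/2, ⟨half_pos hδ, le_rfl⟩, rfl⟩
      -- from hc : (t-δ/2)/t * w 0 + (δ/2)/t * (φ t).toReal ≤ w (δ/2)
      have hc2 : (t - δ/2) * w 0 + (δ/2) * (φ t).toReal ≤ t * w (δ/2) := by
        have := mul_le_mul_of_nonneg_right hc (by linarith : (0:ℝ) ≤ t)
        calc (t - δ/2) * w 0 + (δ/2) * (φ t).toReal
            = ((t - δ/2) / t * w 0 + δ/2 / t * (φ t).toReal) * t := by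
              field_simp; try ring
          _ ≤ w (δ/2) * t := this
          _ = t * w (δ/2) := by ring
      rw [div_le_iff₀ (half_pos hδ)] at hsl
      nlinarith [half_pos hδ]

end Stmt4Aux
end StmtFourProof6
/-- For `f ∈ F₁(a,b)`, `P` a probability measure and `g` bounded measurable,
`sup {E_P[g·h] - E_P[f(h)] : h ∈ M_b(Ω), E_P[h] = 1, E_P[f(h)] < ∞}`
equals `inf_{ν ∈ ℝ} {ν + E_P[f*(g - ν)]}`. -/
theorem stmt4 {Ω : Type*} [MeasurableSpace Ω] (a b : EReal) (f : ℝ → EReal)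
    (hf : IsF1 a b f) (P : Measure Ω) [IsProbabilityMeasure P]
    (g : Ω → ℝ) (hg : g ∈ Mb Ω) :
    (⨆ h ∈ {h : Ω → ℝ | h ∈ Mb Ω ∧ (∫ x, h x ∂P) = 1 ∧
        eIntegral P (fun x => f (h x)) < ⊤},
      (((∫ x, g x * h x ∂P : ℝ) : EReal) - eIntegral P (fun x => f (h x))))
    = ⨅ ν : ℝ, ((ν : EReal) + eIntegral P (fun x => fstar f (g x - ν))) := by
  classical
  open Stmt4Aux in
  obtain ⟨s, hsub⟩ := hf.exists_subgrad
  set S := (⨆ h ∈ {h : Ω → ℝ | h ∈ Mb Ω ∧ (∫ x, h x ∂P) = 1 ∧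
        eIntegral P (fun x => f (h x)) < ⊤},
      (((∫ x, g x * h x ∂P : ℝ) : EReal) - eIntegral P (fun x => f (h x)))) with hS
  apply le_antisymm
  · -- easy direction
    refine le_iInf fun ν => ?_
    rw [hS]
    refine iSup₂_le fun h hh => ?_
    obtain ⟨hhMb, hint, hlt⟩ := hh
    exact part1_core hf hsub hg ν hhMb hint hlt
  · -- hard direction
    rcases eq_or_ne S ⊤ with hStop | hStop
    · rw [hStop]; exact le_top
    set V : ℝ → EReal := fun t => ⨆ h ∈ {h : Ω → ℝ | h ∈ Mb Ω ∧ (∫ x, h x ∂P) = 1 + t ∧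
        eIntegral P (fun x => f (h x)) < ⊤},
      (((∫ x, g x * h x ∂P : ℝ) : EReal) - eIntegral P (fun x => f (h x))) with hV
    have hV0 : V 0 = S := by
      rw [hV, hS]
      norm_num
    have hVle : ∀ (t : ℝ) (h : Ω → ℝ), h ∈ Mb Ω → (∫ x, h x ∂P) = 1 + t →
        eIntegral P (fun x => f (h x)) < ⊤ →
        (((∫ x, g x * h x ∂P : ℝ) : EReal) - eIntegral P (fun x => f (h x))) ≤ V t := by
      intro t h h1 h2 h3
      simp only [hV]
      have hmem : h ∈ {h : Ω → ℝ | h ∈ Mb Ω ∧ (∫ x, h x ∂P) = 1 + t ∧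
          eIntegral P (fun x => f (h x)) < ⊤} := ⟨h1, h2, h3⟩
      exact le_biSup (α := EReal)
        (fun h => (((∫ x, g x * h x ∂P : ℝ) : EReal) - eIntegral P (fun x => f (h x)))) hmem
    have hVex : ∀ (t r : ℝ), (r : EReal) < V t → ∃ h, h ∈ Mb Ω ∧ ∃ u : Ω → ℝ,
        Integrable u P ∧ (∀ᵐ x ∂P, f (h x) = ((u x : ℝ) : EReal)) ∧
        eIntegral P (fun x => f (h x)) = ((∫ x, u x ∂P : ℝ) : EReal) ∧
        (∫ x, h x ∂P) = 1 + t ∧ r < (∫ x, g x * h x ∂P) - (∫ x, u x ∂P) := by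
      intro t r hr
      simp only [hV] at hr
      rw [lt_iSup_iff] at hr
      obtain ⟨h, hr⟩ := hr
      rw [lt_iSup_iff] at hr
      obtain ⟨⟨h1, h2, h3⟩, hr⟩ := hr
      obtain ⟨u, hu, hae, heq⟩ := hf.comp_facts hsub h1 h3
      refine ⟨h, h1, u, hu, hae, heq, h2, ?_⟩
      rw [heq, ← EReal.coe_sub, EReal.coe_lt_coe_iff] at hr
      exact hr
    have hVconc : ∀ t1 t2 lam r1 r2 : ℝ, 0 < lam → lam < 1 →
        (r1 : EReal) < V t1 → (r2 : EReal) < V t2 →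
        ((lam * r1 + (1 - lam) * r2 : ℝ) : EReal) ≤ V (lam * t1 + (1 - lam) * t2) := by
      intro t1 t2 lam r1 r2 hl0 hl1 hr1 hr2
      obtain ⟨h1, hm1, u1, hu1, hae1, heq1, hint1, hv1⟩ := hVex t1 r1 hr1
      obtain ⟨h2, hm2, u2, hu2, hae2, heq2, hint2, hv2⟩ := hVex t2 r2 hr2
      set h : Ω → ℝ := fun x => lam * h1 x + (1 - lam) * h2 x with hh
      have hmb : h ∈ Mb Ω := mem_Mb_combo hm1 hm2 lam (1 - lam)
      set u : Ω → ℝ := fun x => lam * u1 x + (1 - lam) * u2 x with hu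
      have hui : Integrable u P := (hu1.const_mul lam).add (hu2.const_mul (1 - lam))
      have haef : ∀ᵐ x ∂P, f (h x) ≤ ((u x : ℝ) : EReal) := by
        filter_upwards [hae1, hae2] with x hx1 hx2
        have hcv := hf.convex (h1 x) (h2 x) lam hl0 hl1
        rw [hx1, hx2, ← EReal.coe_mul, ← EReal.coe_mul, ← EReal.coe_add] at hcv
        exact hcv
      have hEle : eIntegral P (fun x => f (h x)) ≤ ((∫ x, u x ∂P : ℝ) : EReal) :=
        eIntegral_le_of_ae hui haef
      have hlth : eIntegral P (fun x => f (h x)) < ⊤ :=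
        lt_of_le_of_lt hEle (EReal.coe_lt_top _)
      have hi1 := integrable_of_mem_Mb (P := P) hm1
      have hi2 := integrable_of_mem_Mb (P := P) hm2
      have hinth : (∫ x, h x ∂P) = 1 + (lam * t1 + (1 - lam) * t2) := by
        show (∫ x, lam * h1 x + (1 - lam) * h2 x ∂P) = _
        rw [integral_add (hi1.const_mul lam) (hi2.const_mul (1 - lam)),
          integral_const_mul, integral_const_mul, hint1, hint2]
        ring
      have hgh1 := integrable_of_mem_Mb (P := P) (mem_Mb_mul hg hm1)
      have hgh2 := integrable_of_mem_Mb (P := P) (mem_Mb_mul hg hm2)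
      have hgh : (∫ x, g x * h x ∂P)
          = lam * (∫ x, g x * h1 x ∂P) + (1 - lam) * (∫ x, g x * h2 x ∂P) := by
        have hfe : (fun x => g x * h x)
            = fun x => lam * (g x * h1 x) + (1 - lam) * (g x * h2 x) := by
          funext x
          show g x * (lam * h1 x + (1 - lam) * h2 x) = _
          ring
        rw [hfe, integral_add (hgh1.const_mul lam) (hgh2.const_mul (1 - lam)),
          integral_const_mul, integral_const_mul]
      have hus : (∫ x, u x ∂P) = lam * (∫ x, u1 x ∂P) + (1 - lam) * (∫ x, u2 x ∂P) := by
        show (∫ x, lam * u1 x + (1 - lam) * u2 x ∂P) = _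
        rw [integral_add (hu1.const_mul lam) (hu2.const_mul (1 - lam)),
          integral_const_mul, integral_const_mul]
      have hval : ((lam * r1 + (1 - lam) * r2 : ℝ) : EReal)
          ≤ ((∫ x, g x * h x ∂P : ℝ) : EReal) - eIntegral P (fun x => f (h x)) := by
        refine le_trans ?_ (EReal.sub_le_sub (le_refl _) hEle)
        rw [← EReal.coe_sub, EReal.coe_le_coe_iff, hgh, hus]
        have hm1' := mul_le_mul_of_nonneg_left hv1.le hl0.le
        have hm2' := mul_le_mul_of_nonneg_left hv2.le (by linarith : (0:ℝ) ≤ 1 - lam)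
        nlinarith
      exact le_trans hval (hVle _ h hmb hinth hlth)
    -- a neighborhood of 0 where V is ≠ ⊥
    obtain ⟨l, δ', hl1, hδ', hal, hδb⟩ := hf.exists_pts
    set δ := min (1 - l) δ' with hδdef
    have hδ0 : 0 < δ := lt_min (by linarith) hδ'
    have hVconst : ∀ t : ℝ, |t| < δ → ∃ c : ℝ, (c : EReal) ≤ V t := by
      intro t ht
      rw [abs_lt] at ht
      have hδl := min_le_left (1 - l) δ'
      have hδr := min_le_right (1 - l) δ'
      have hmem1 : a < ((1 + t : ℝ) : EReal) :=
        lt_of_lt_of_le hal (EReal.coe_le_coe_iff.mpr (by linarith))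
      have hmem2 : ((1 + t : ℝ) : EReal) < b :=
        lt_of_le_of_lt (EReal.coe_le_coe_iff.mpr (by linarith)) hδb
      have hfc : f (1 + t) ≠ ⊤ := hf.finite_on _ hmem1 hmem2
      have hfc' := EReal.coe_toReal hfc (hf.ne_bot _)
      have hintc : (∫ _ : Ω, (1 + t : ℝ) ∂P) = 1 + t := by simp
      have hEc : eIntegral P (fun _ : Ω => f (1 + t)) = (((f (1 + t)).toReal : ℝ) : EReal) := by
        rw [← hfc']
        exact eIntegral_const _
      refine ⟨(∫ x, g x * (1 + t) ∂P) - (f (1 + t)).toReal, ?_⟩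
      have hcand := hVle t (fun _ => (1 + t)) (mem_Mb_const _) hintc
        (by rw [hEc]; exact EReal.coe_lt_top _)
      rw [hEc, ← EReal.coe_sub] at hcand
      exact hcand
    have hVbot : ∀ t : ℝ, |t| < δ → V t ≠ ⊥ := by
      intro t ht hb
      obtain ⟨c, hc⟩ := hVconst t ht
      rw [hb, le_bot_iff] at hc
      exact EReal.coe_ne_bot _ hc
    have hV0top : V 0 ≠ ⊤ := by rw [hV0]; exact hStop
    have hV0bot : V 0 ≠ ⊥ := hVbot 0 (by simpa using hδ0)
    have hSbot : S ≠ ⊥ := by rw [← hV0]; exact hV0bot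
    obtain ⟨ν₀, hν₀⟩ := concave_supergrad hδ0 hVconc hV0top hV0bot hVbot
    have hSr := EReal.coe_toReal hStop hSbot
    set Sr := S.toReal with hSrdef
    have hX : eIntegral P (fun x => fstar f (g x - ν₀)) ≤ ((Sr - ν₀ : ℝ) : EReal) := by
      by_contra hX
      push_neg at hX
      obtain ⟨h, hhMb, E, hEeq, hrE⟩ := selection hf (mem_Mb_sub_const hg ν₀) hX
      set t := (∫ x, h x ∂P) - 1 with htdef
      have hint' : (∫ x, h x ∂P) = 1 + t := by rw [htdef]; ring
      have hVt := hVle t h hhMb hint' (by rw [hEeq]; exact EReal.coe_lt_top _)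
      rw [hEeq, ← EReal.coe_sub] at hVt
      have hchain : ((∫ x, g x * h x ∂P - E : ℝ) : EReal) ≤ ((Sr + ν₀ * t : ℝ) : EReal) := by
        refine le_trans hVt (le_trans (hν₀ t) ?_)
        rw [hV0, ← hSr, ← EReal.coe_add]
      have hreal : (∫ x, g x * h x ∂P) - E ≤ Sr + ν₀ * t := EReal.coe_le_coe_iff.mp hchain
      have hwh : (∫ x, (g x - ν₀) * h x ∂P) = (∫ x, g x * h x ∂P) - ν₀ * (1 + t) := by
        have hfe : (fun x => (g x - ν₀) * h x) = fun x => g x * h x - ν₀ * h x := by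
          funext x; ring
        rw [hfe, integral_sub (integrable_of_mem_Mb (mem_Mb_mul hg hhMb))
          ((integrable_of_mem_Mb hhMb).const_mul ν₀), integral_const_mul, hint']
      rw [hwh] at hrE
      linarith
    refine le_trans (iInf_le _ ν₀) ?_
    calc (ν₀ : EReal) + eIntegral P (fun x => fstar f (g x - ν₀))
        ≤ (ν₀ : EReal) + ((Sr - ν₀ : ℝ) : EReal) := add_le_add le_rfl hX
      _ = ((Sr : ℝ) : EReal) := by rw [← EReal.coe_add]; norm_num
      _ = S := hSr
end

section
/- Let f ∈ F₁(a,b) with a ≥ 0, let P be a probability measure on (Ω,M), and let Γ ⊂ M_b(Ω) be nonempty. Then for every g ∈ Γ, sup over all probability measures Q on (Ω,M) of {E_Q[g] − D_f^Γ(Q‖P)} equals Λ_f^P[g] = inf_{ν∈ℝ}{ν + E_P[f*(g−ν)]}. -/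
open MeasureTheory Filter Set Topology ENNReal
open scoped Classical

section AuxEReal

lemma posE_coe (r : ℝ) : posE (r : EReal) = ENNReal.ofReal r := by
  simp [posE, EReal.coe_ne_top]

lemma posE_mono : Monotone posE := by
  intro x y hxy
  rcases eq_or_ne y ⊤ with hy | hy
  · simp [posE, hy]
  · have hx : x ≠ ⊤ := by rintro rfl; exact hy (top_le_iff.mp hxy)
    simp only [posE, if_neg hx, if_neg hy]
    rcases eq_or_ne x ⊥ with hx' | hx'
    · simp [hx']
    · exact ENNReal.ofReal_le_ofReal (EReal.toReal_le_toReal hxy hx' hy)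

lemma ennreal_coe_ereal_eq (A : ℝ≥0∞) (hA : A ≠ ⊤) :
    ((A : EReal)) = ((A.toReal : ℝ) : EReal) := by
  rw [← EReal.toReal_coe_ennreal (x := A)]
  exact (EReal.coe_toReal (by simpa using hA) (by
    intro h
    have := EReal.coe_ennreal_nonneg A
    rw [h] at this
    exact absurd this (by simp))).symm

lemma ereal_sub_sub_le (r : ℝ) (X D : EReal) (h : (r : EReal) - X ≤ D) :
    (r : EReal) - D ≤ X := by
  induction X with
  | bot =>
    rw [EReal.coe_sub_bot] at h
    have hD : D = ⊤ := top_le_iff.mp h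
    simp [hD, EReal.sub_top]
  | coe X =>
    induction D with
    | bot =>
      exfalso
      rw [show (r : EReal) - (X : EReal) = ((r - X : ℝ) : EReal) from (EReal.coe_sub r X).symm] at h
      exact (EReal.coe_ne_bot _) (le_bot_iff.mp h)
    | coe D =>
      rw [show (r : EReal) - (X : EReal) = ((r - X : ℝ) : EReal) from (EReal.coe_sub r X).symm,
        EReal.coe_le_coe_iff] at h
      rw [show (r : EReal) - (D : EReal) = ((r - D : ℝ) : EReal) from (EReal.coe_sub r D).symm,
        EReal.coe_le_coe_iff]
      linarith
    | top => simp [EReal.sub_top]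
  | top => exact le_top

lemma ereal_le_of_forall_eps {X S : EReal} (h : ∀ ε : ℝ, 0 < ε → X ≤ S + (ε : EReal)) :
    X ≤ S := by
  induction S with
  | bot =>
    have := h 1 one_pos
    rwa [EReal.bot_add] at this
  | coe S =>
    induction X with
    | bot => exact bot_le
    | coe X =>
      have : ∀ ε : ℝ, 0 < ε → X ≤ S + ε := by
        intro ε hε
        have := h ε hε
        rwa [← EReal.coe_add, EReal.coe_le_coe_iff] at this
      exact EReal.coe_le_coe_iff.mpr (le_of_forall_pos_le_add this)
    | top =>
      exfalso
      have := h 1 one_pos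
      rw [← EReal.coe_add, top_le_iff] at this
      exact (EReal.coe_ne_top _) this
  | top => exact le_top

end AuxEReal

section AuxIntegral

open MeasureTheory

variable {Ω : Type*} [MeasurableSpace Ω] (P : Measure Ω)

lemma lintegral_ofReal_ne_top [IsFiniteMeasure P] {u : Ω → ℝ} {B : ℝ}
    (h : ∀ x, u x ≤ B) : ∫⁻ x, ENNReal.ofReal (u x) ∂P ≠ ⊤ := by
  have h1 : ∫⁻ x, ENNReal.ofReal (u x) ∂P ≤ ∫⁻ _, ENNReal.ofReal B ∂P :=
    lintegral_mono fun x => ENNReal.ofReal_le_ofReal (h x)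
  rw [lintegral_const] at h1
  refine ne_of_lt (lt_of_le_of_lt h1 ?_)
  exact ENNReal.mul_lt_top ENNReal.ofReal_lt_top (measure_lt_top P univ)

lemma integrable_of_bound [IsFiniteMeasure P] {u : Ω → ℝ} (hm : Measurable u) (B : ℝ)
    (hb : ∀ x, |u x| ≤ B) : Integrable u P :=
  (integrable_const B).mono' hm.aestronglyMeasurable
    (Filter.Eventually.of_forall fun x => by simpa [Real.norm_eq_abs] using hb x)

lemma eIntegral_eq_integral [IsFiniteMeasure P] {h : Ω → EReal} {u : Ω → ℝ}
    (hu : Measurable u) (B : ℝ) (hB : ∀ x, |u x| ≤ B)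
    (heq : ∀ᵐ x ∂P, h x = ((u x : ℝ) : EReal)) :
    eIntegral P h = ((∫ x, u x ∂P : ℝ) : EReal) := by
  have hint : Integrable u P := integrable_of_bound P hu B hB
  have hpos : ∫⁻ x, posE (h x) ∂P = ∫⁻ x, ENNReal.ofReal (u x) ∂P := by
    refine lintegral_congr_ae ?_
    filter_upwards [heq] with x hx
    rw [hx, posE_coe]
  have hneg : ∫⁻ x, posE (-(h x)) ∂P = ∫⁻ x, ENNReal.ofReal (-(u x)) ∂P := by
    refine lintegral_congr_ae ?_
    filter_upwards [heq] with x hx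
    rw [hx, ← EReal.coe_neg, posE_coe]
  have hposfin : ∫⁻ x, ENNReal.ofReal (u x) ∂P ≠ ⊤ :=
    lintegral_ofReal_ne_top P (fun x => (le_abs_self _).trans (hB x))
  have hnegfin : ∫⁻ x, ENNReal.ofReal (-(u x)) ∂P ≠ ⊤ :=
    lintegral_ofReal_ne_top P (fun x => (neg_le_abs _).trans (hB x))
  have hrepr := integral_eq_lintegral_pos_part_sub_lintegral_neg_part hint
  rw [eIntegral, hpos, hneg, ennreal_coe_ereal_eq _ hposfin, ennreal_coe_ereal_eq _ hnegfin,
    ← EReal.coe_sub, hrepr]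

lemma eIntegral_ge_integral [IsFiniteMeasure P] {h : Ω → EReal} {u : Ω → ℝ}
    (hu : Measurable u) (B : ℝ) (hB : ∀ x, |u x| ≤ B)
    (hle : ∀ x, ((u x : ℝ) : EReal) ≤ h x) :
    ((∫ x, u x ∂P : ℝ) : EReal) ≤ eIntegral P h := by
  have hint : Integrable u P := integrable_of_bound P hu B hB
  have hpos : ∫⁻ x, ENNReal.ofReal (u x) ∂P ≤ ∫⁻ x, posE (h x) ∂P := by
    refine lintegral_mono fun x => ?_
    rw [← posE_coe]
    exact posE_mono (hle x)
  have hneg : ∫⁻ x, posE (-(h x)) ∂P ≤ ∫⁻ x, ENNReal.ofReal (-(u x)) ∂P := by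
    refine lintegral_mono fun x => ?_
    have h1 : -(h x) ≤ ((-(u x) : ℝ) : EReal) := by
      rw [EReal.coe_neg]
      exact EReal.neg_le_neg_iff.mpr (hle x)
    calc posE (-(h x)) ≤ posE ((-(u x) : ℝ) : EReal) := posE_mono h1
    _ = ENNReal.ofReal (-(u x)) := posE_coe _
  have hposfin : ∫⁻ x, ENNReal.ofReal (u x) ∂P ≠ ⊤ :=
    lintegral_ofReal_ne_top P (fun x => (le_abs_self _).trans (hB x))
  have hnegfin : ∫⁻ x, ENNReal.ofReal (-(u x)) ∂P ≠ ⊤ :=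
    lintegral_ofReal_ne_top P (fun x => (neg_le_abs _).trans (hB x))
  have hrepr := integral_eq_lintegral_pos_part_sub_lintegral_neg_part hint
  rw [hrepr, EReal.coe_sub, ← ennreal_coe_ereal_eq _ hposfin, ← ennreal_coe_ereal_eq _ hnegfin]
  exact EReal.sub_le_sub (by exact_mod_cast hpos) (by exact_mod_cast hneg)

lemma eIntegral_mono {h₁ h₂ : Ω → EReal} (hle : ∀ x, h₁ x ≤ h₂ x) :
    eIntegral P h₁ ≤ eIntegral P h₂ := by
  refine EReal.sub_le_sub ?_ ?_
  · exact_mod_cast lintegral_mono fun x => posE_mono (hle x)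
  · exact_mod_cast lintegral_mono fun x => posE_mono (EReal.neg_le_neg_iff.mpr (hle x))

end AuxIntegral

section AuxConvex

variable {a b : EReal} {f : ℝ → EReal}

lemma IsF1.dom_nonneg (hf : IsF1 a b f) (ha : (0 : EReal) ≤ a) {x : ℝ} (hx : f x ≠ ⊤) :
    0 ≤ x := by
  by_contra hneg
  push_neg at hneg
  refine hx (hf.top_outside x (Or.inl ?_))
  calc ((x : ℝ) : EReal) < ((0 : ℝ) : EReal) := EReal.coe_lt_coe_iff.mpr hneg
  _ = (0 : EReal) := by norm_cast
  _ ≤ a := ha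

lemma IsF1.one_not_top (hf : IsF1 a b f) : f 1 ≠ ⊤ := by
  rw [hf.at_one]; simp

lemma IsF1.fR_one (hf : IsF1 a b f) : (f 1).toReal = 0 := by
  rw [hf.at_one]; rfl

/-- Convex combination stays in the domain and the real values satisfy convexity. -/
lemma IsF1.combo (hf : IsF1 a b f) {x y : ℝ} (hx : f x ≠ ⊤) (hy : f y ≠ ⊤)
    {t s : ℝ} (ht : 0 ≤ t) (hs : 0 ≤ s) (hts : t + s = 1) :
    f (t * x + s * y) ≠ ⊤ ∧
      (f (t * x + s * y)).toReal ≤ t * (f x).toReal + s * (f y).toReal := by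
  rcases eq_or_lt_of_le ht with h0 | h0
  · have hs1 : s = 1 := by linarith
    subst hs1
    rw [← h0]
    constructor
    · simpa using hy
    · simp
  rcases eq_or_lt_of_le hs with hs0 | hs0
  · have ht1 : t = 1 := by linarith
    subst ht1
    rw [← hs0]
    constructor
    · simpa using hx
    · simp
  have ht1 : t < 1 := by linarith
  have hst : s = 1 - t := by linarith
  have key := hf.convex x y t h0 ht1
  rw [← hst] at key
  have hxe : f x = (((f x).toReal : ℝ) : EReal) := (EReal.coe_toReal hx (hf.ne_bot x)).symm
  have hye : f y = (((f y).toReal : ℝ) : EReal) := (EReal.coe_toReal hy (hf.ne_bot y)).symm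
  rw [hxe, hye, ← EReal.coe_mul, ← EReal.coe_mul, ← EReal.coe_add] at key
  constructor
  · exact ne_top_of_le_ne_top (EReal.coe_ne_top _) key
  · have := EReal.toReal_le_toReal key (hf.ne_bot _) (EReal.coe_ne_top _)
    rw [EReal.toReal_coe] at this
    exact this

lemma IsF1.convexOn_fR (hf : IsF1 a b f) :
    ConvexOn ℝ {x : ℝ | f x ≠ ⊤} (fun x => (f x).toReal) := by
  constructor
  · intro x hx y hy t s ht hs hts
    exact (hf.combo hx hy ht hs hts).1
  · intro x hx y hy t s ht hs hts
    simpa [smul_eq_mul] using (hf.combo hx hy ht hs hts).2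

lemma IsF1.exists_interior_pts (hf : IsF1 a b f) (ha : (0 : EReal) ≤ a) :
    ∃ α β : ℝ, 0 ≤ α ∧ α < 1 ∧ 1 < β ∧ f α ≠ ⊤ ∧ f β ≠ ⊤ := by
  have hatop : a ≠ ⊤ := ne_top_of_lt hf.a_lt_one
  have habot : a ≠ ⊥ := by
    intro h
    rw [h] at ha
    exact absurd ha (by simp)
  set aR := a.toReal with haR
  have haeq : a = ((aR : ℝ) : EReal) := (EReal.coe_toReal hatop habot).symm
  have haR1 : aR < 1 := by
    have := hf.a_lt_one
    rw [haeq] at this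
    exact_mod_cast this
  have haR0 : 0 ≤ aR := by
    rw [haeq] at ha
    exact_mod_cast ha
  obtain ⟨β, hβ1, hβb⟩ : ∃ β : ℝ, 1 < β ∧ ((β : ℝ) : EReal) < b := by
    induction b with
    | bot => exact absurd hf.one_lt_b (by simp)
    | coe bR =>
      have h1b : (1 : ℝ) < bR := by exact_mod_cast hf.one_lt_b
      exact ⟨(1 + bR) / 2, by linarith, by exact_mod_cast (by linarith : (1 + bR) / 2 < bR)⟩
    | top => exact ⟨2, by norm_num, EReal.coe_lt_top 2⟩
  refine ⟨(aR + 1) / 2, β, by linarith, by linarith, hβ1, ?_, ?_⟩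
  · refine hf.finite_on _ ?_ ?_
    · rw [haeq]
      exact_mod_cast (by linarith : aR < (aR + 1) / 2)
    · calc (((aR + 1) / 2 : ℝ) : EReal) < ((1 : ℝ) : EReal) :=
        EReal.coe_lt_coe_iff.mpr (by linarith)
      _ < b := hf.one_lt_b
  · exact hf.finite_on β (lt_trans hf.a_lt_one (EReal.coe_lt_coe_iff.mpr hβ1)) hβb

/-- Existence of a subgradient of `f` at `1`. -/
lemma IsF1.exists_subgradient (hf : IsF1 a b f) (ha : (0 : EReal) ≤ a) :
    ∃ k : ℝ, ∀ x : ℝ, ((k * (x - 1) : ℝ) : EReal) ≤ f x := by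
  classical
  obtain ⟨α, β, hα0, hα1, hβ1, hαD, hβD⟩ := hf.exists_interior_pts ha
  set fR : ℝ → ℝ := fun x => (f x).toReal with hfR
  have h1D : f 1 ≠ ⊤ := hf.one_not_top
  have hcvx := hf.convexOn_fR
  -- three-point slope inequality through 1
  have slope3 : ∀ u x : ℝ, u < 1 → 1 < x → f u ≠ ⊤ → f x ≠ ⊤ →
      fR u / (u - 1) ≤ fR x / (x - 1) := by
    intro u x hu1 h1x huD hxD
    have := hcvx.slope_mono_adjacent huD hxD hu1 h1x
    rw [show (f 1).toReal = 0 from hf.fR_one] at this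
    have h1 : (0 - fR u) / (1 - u) = fR u / (u - 1) := by
      rw [div_eq_div_iff (by linarith) (by intro h; apply (by linarith : u - 1 ≠ 0); linarith)]
      ring
    have h2 : (fR x - 0) / (x - 1) = fR x / (x - 1) := by ring_nf
    rw [h1, h2] at this
    exact this
  set SL : Set ℝ := {r : ℝ | ∃ u : ℝ, u < 1 ∧ f u ≠ ⊤ ∧ r = fR u / (u - 1)} with hSL
  have hne : (fR α / (α - 1)) ∈ SL := ⟨α, hα1, hαD, rfl⟩
  have hbdd : BddAbove SL := by
    refine ⟨fR β / (β - 1), ?_⟩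
    rintro r ⟨u, hu1, huD, rfl⟩
    exact slope3 u β hu1 hβ1 huD hβD
  set k := sSup SL with hk
  refine ⟨k, fun x => ?_⟩
  rcases eq_or_ne (f x) ⊤ with hx | hx
  · rw [hx]; exact le_top
  have hxb : f x ≠ ⊥ := hf.ne_bot x
  rw [← EReal.coe_toReal hx hxb, EReal.coe_le_coe_iff]
  rcases lt_trichotomy x 1 with hlt | heq | hgt
  · have hmem : fR x / (x - 1) ∈ SL := ⟨x, hlt, hx, rfl⟩
    have hle : fR x / (x - 1) ≤ k := le_csSup hbdd hmem
    have hneg : x - 1 < 0 := by linarith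
    rw [div_le_iff_of_neg hneg] at hle
    exact hle
  · subst heq
    rw [hf.fR_one]
    simp
  · have hle : k ≤ fR x / (x - 1) := by
      refine csSup_le ⟨_, hne⟩ ?_
      rintro r ⟨u, hu1, huD, rfl⟩
      exact slope3 u x hu1 hgt huD hx
    have hpos : 0 < x - 1 := by linarith
    rw [le_div_iff₀ hpos] at hle
    exact hle

lemma IsF1.le_fstar (hf : IsF1 a b f) (y : ℝ) : ((y : ℝ) : EReal) ≤ fstar f y := by
  have h1 := le_iSup (fun x : ℝ => (((x * y : ℝ) : EReal) - f x)) 1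
  rw [hf.at_one] at h1
  simpa [fstar] using h1

lemma IsF1.fstar_ne_bot (hf : IsF1 a b f) (y : ℝ) : fstar f y ≠ ⊥ :=
  fun h => (EReal.coe_ne_bot y) (le_bot_iff.mp (h ▸ hf.le_fstar y))

lemma IsF1.fstar_ge (hf : IsF1 a b f) (x y : ℝ) (hx : f x ≠ ⊤) :
    ((x * y - (f x).toReal : ℝ) : EReal) ≤ fstar f y := by
  refine le_trans (le_of_eq ?_) (le_iSup (fun x : ℝ => (((x * y : ℝ) : EReal) - f x)) x)
  rw [EReal.coe_sub]
  congr 1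
  exact (EReal.coe_toReal hx (hf.ne_bot x))

lemma IsF1.fstar_mono (hf : IsF1 a b f) (ha : (0 : EReal) ≤ a) {y y' : ℝ} (h : y ≤ y') :
    fstar f y ≤ fstar f y' := by
  refine iSup_le fun x => ?_
  rcases eq_or_ne (f x) ⊤ with hx | hx
  · rw [hx, EReal.sub_top]
    exact bot_le
  · have hx0 : 0 ≤ x := hf.dom_nonneg ha hx
    refine le_trans ?_ (le_iSup (fun x : ℝ => (((x * y' : ℝ) : EReal) - f x)) x)
    exact EReal.sub_le_sub (EReal.coe_le_coe_iff.mpr (mul_le_mul_of_nonneg_left h hx0)) le_rfl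

end AuxConvex

section AuxPartition

open MeasureTheory

variable {Ω : Type*} [MeasurableSpace Ω] (P : Measure Ω) [IsProbabilityMeasure P]
  {idx : Ω → ℤ} {I : Finset ℤ}

lemma partition_repr (hI : ∀ x, idx x ∈ I) (F : ℤ → ℝ) (x : Ω) :
    F (idx x) = ∑ n ∈ I, Set.indicator (idx ⁻¹' {n}) (fun _ => F n) x := by
  rw [Finset.sum_eq_single (idx x)]
  · rw [Set.indicator_of_mem (by simp : x ∈ idx ⁻¹' {idx x})]
  · intro n _ hne
    exact Set.indicator_of_notMem (by simpa using (Ne.symm hne)) _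
  · intro h
    exact absurd (hI x) h

lemma partition_integrable (hidx : Measurable idx) (hI : ∀ x, idx x ∈ I) (F : ℤ → ℝ) :
    Integrable (fun x => F (idx x)) P := by
  refine integrable_of_bound P (Measurable.of_discrete.comp hidx) (∑ n ∈ I, |F n|) fun x => ?_
  exact Finset.single_le_sum (f := fun n => |F n|) (fun n _ => abs_nonneg _) (hI x)

lemma partition_integral (hidx : Measurable idx) (hI : ∀ x, idx x ∈ I) (F : ℤ → ℝ) :
    ∫ x, F (idx x) ∂P = ∑ n ∈ I, (P (idx ⁻¹' {n})).toReal * F n := by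
  have hrw : (fun x => F (idx x)) =
      fun x => ∑ n ∈ I, Set.indicator (idx ⁻¹' {n}) (fun _ => F n) x := by
    funext x
    exact partition_repr hI F x
  rw [hrw, integral_finset_sum]
  · refine Finset.sum_congr rfl fun n _ => ?_
    rw [integral_indicator_const (F n) (hidx (measurableSet_singleton n)), smul_eq_mul]
    rfl
  · intro n _
    exact (integrable_const (F n)).indicator (hidx (measurableSet_singleton n))

end AuxPartition

section AuxDuality

variable {a b : EReal} {f : ℝ → EReal}

/-- total mass of a density vector -/
def pmass (I : Finset ℤ) (p τ : ℤ → ℝ) : ℝ := ∑ n ∈ I, p n * τ n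

/-- objective value of a density vector -/
noncomputable def pval (f : ℝ → EReal) (I : Finset ℤ) (p y τ : ℤ → ℝ) : ℝ :=
  ∑ n ∈ I, p n * (τ n * y n - (f (τ n)).toReal)

/-- feasibility of a density vector -/
def pfeas (f : ℝ → EReal) (I : Finset ℤ) (τ : ℤ → ℝ) : Prop := ∀ n ∈ I, f (τ n) ≠ ⊤

/-- achievable values at total mass `c` -/
noncomputable def pV (f : ℝ → EReal) (I : Finset ℤ) (p y : ℤ → ℝ) (c : ℝ) : Set ℝ :=
  {r | ∃ τ, pfeas f I τ ∧ pmass I p τ = c ∧ r = pval f I p y τ}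

/-- the concave value function -/
noncomputable def ph (f : ℝ → EReal) (I : Finset ℤ) (p y : ℤ → ℝ) (c : ℝ) : ℝ :=
  sSup (pV f I p y c)

lemma IsF1.finite_duality (hf : IsF1 a b f) (ha : (0 : EReal) ≤ a)
    (I : Finset ℤ) (p : ℤ → ℝ) (hp0 : ∀ n, 0 ≤ p n) (hpsum : ∑ n ∈ I, p n = 1)
    (y : ℤ → ℝ) (C : ℝ) (hyC : ∀ n ∈ I, y n ≤ C) (δ : ℝ) (hδ : 0 < δ) :
    ∃ (ν : ℝ) (τ : ℤ → ℝ),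
      (∀ n, f (τ n) ≠ ⊤) ∧
      (∑ n ∈ I, p n * τ n = 1) ∧
      (∀ n ∈ I, p n ≠ 0 → fstar f (y n - ν) ≠ ⊤) ∧
      ((∑ n ∈ I, p n * (fstar f (y n - ν)).toReal) + ν
        ≤ (∑ n ∈ I, p n * (τ n * y n - (f (τ n)).toReal)) + δ) := by
  classical
  obtain ⟨k, hk⟩ := hf.exists_subgradient ha
  obtain ⟨α, β, hα0, hα1, hβ1, hαD, hβD⟩ := hf.exists_interior_pts ha
  have hkR : ∀ x : ℝ, f x ≠ ⊤ → k * (x - 1) ≤ (f x).toReal := by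
    intro x hx
    have h1 := hk x
    rw [← EReal.coe_toReal hx (hf.ne_bot x), EReal.coe_le_coe_iff] at h1
    exact h1
  -- upper bound for achievable values
  have hub : ∀ c r, r ∈ pV f I p y c → r ≤ k + (C - k) * c := by
    rintro c r ⟨τ, hfe, hm, rfl⟩
    have hterm : ∀ n ∈ I, p n * (τ n * y n - (f (τ n)).toReal)
        ≤ p n * (k + (C - k) * τ n) := by
      intro n hn
      have h1 : 0 ≤ τ n := hf.dom_nonneg ha (hfe n hn)
      have h2 := hkR (τ n) (hfe n hn)
      have h4 : τ n * y n ≤ τ n * C := mul_le_mul_of_nonneg_left (hyC n hn) h1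
      refine mul_le_mul_of_nonneg_left ?_ (hp0 n)
      nlinarith
    calc pval f I p y τ ≤ ∑ n ∈ I, p n * (k + (C - k) * τ n) := Finset.sum_le_sum hterm
    _ = k * ∑ n ∈ I, p n + (C - k) * ∑ n ∈ I, p n * τ n := by
        rw [Finset.mul_sum, Finset.mul_sum, ← Finset.sum_add_distrib]
        exact Finset.sum_congr rfl fun n _ => by ring
    _ = k + (C - k) * c := by
        rw [hpsum, show (∑ n ∈ I, p n * τ n) = c from hm]; ring
  have hbdd : ∀ c, BddAbove (pV f I p y c) := fun c =>
    ⟨k + (C - k) * c, fun r hr => hub c r hr⟩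
  have hVmemt : ∀ t : ℝ, f t ≠ ⊤ → pval f I p y (fun _ => t) ∈ pV f I p y t := by
    intro t ht
    exact ⟨fun _ => t, fun n _ => ht, by
      rw [pmass, ← Finset.sum_mul, hpsum, one_mul], rfl⟩
  have hmem_le : ∀ τ, pfeas f I τ → pval f I p y τ ≤ ph f I p y (pmass I p τ) :=
    fun τ hfe => le_csSup (hbdd _) ⟨τ, hfe, rfl, rfl⟩
  have hexists : ∀ c : ℝ, (pV f I p y c).Nonempty → ∀ δ' : ℝ, 0 < δ' →
      ∃ τ, pfeas f I τ ∧ pmass I p τ = c ∧ ph f I p y c - δ' ≤ pval f I p y τ := by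
    intro c hcne δ' hδ'
    obtain ⟨r, hrV, hrl⟩ := exists_lt_of_lt_csSup hcne
      (show ph f I p y c - δ' < ph f I p y c by
        have : (0:ℝ) < δ' := hδ'
        linarith)
    obtain ⟨τ, hfe, hm, rfl⟩ := hrV
    exact ⟨τ, hfe, hm, hrl.le⟩
  -- convex combination of density vectors
  have hcomb : ∀ τ1 τ2 (θ : ℝ), pfeas f I τ1 → pfeas f I τ2 → 0 ≤ θ → θ ≤ 1 →
      pfeas f I (fun n => θ * τ1 n + (1 - θ) * τ2 n) ∧
      pmass I p (fun n => θ * τ1 n + (1 - θ) * τ2 n)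
        = θ * pmass I p τ1 + (1 - θ) * pmass I p τ2 ∧
      θ * pval f I p y τ1 + (1 - θ) * pval f I p y τ2
        ≤ pval f I p y (fun n => θ * τ1 n + (1 - θ) * τ2 n) := by
    intro τ1 τ2 θ h1 h2 hθ0 hθ1
    have key : ∀ n ∈ I, f (θ * τ1 n + (1 - θ) * τ2 n) ≠ ⊤ ∧
        (f (θ * τ1 n + (1 - θ) * τ2 n)).toReal
          ≤ θ * (f (τ1 n)).toReal + (1 - θ) * (f (τ2 n)).toReal :=
      fun n hn => hf.combo (h1 n hn) (h2 n hn) hθ0 (by linarith) (by ring)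
    refine ⟨fun n hn => (key n hn).1, ?_, ?_⟩
    · rw [pmass, pmass, pmass, Finset.mul_sum, Finset.mul_sum, ← Finset.sum_add_distrib]
      exact Finset.sum_congr rfl fun n _ => by ring
    · calc θ * pval f I p y τ1 + (1 - θ) * pval f I p y τ2
          = ∑ n ∈ I, p n * (θ * (τ1 n * y n - (f (τ1 n)).toReal)
            + (1 - θ) * (τ2 n * y n - (f (τ2 n)).toReal)) := by
            rw [pval, pval, Finset.mul_sum, Finset.mul_sum, ← Finset.sum_add_distrib]
            exact Finset.sum_congr rfl fun n _ => by ring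
        _ ≤ pval f I p y (fun n => θ * τ1 n + (1 - θ) * τ2 n) := by
            refine Finset.sum_le_sum fun n hn => ?_
            refine mul_le_mul_of_nonneg_left ?_ (hp0 n)
            have h2' := (key n hn).2
            show θ * (τ1 n * y n - (f (τ1 n)).toReal) + (1 - θ) * (τ2 n * y n - (f (τ2 n)).toReal)
              ≤ (θ * τ1 n + (1 - θ) * τ2 n) * y n - (f (θ * τ1 n + (1 - θ) * τ2 n)).toReal
            nlinarith [h2']
  have hVα : (pV f I p y α).Nonempty := ⟨_, hVmemt α hαD⟩
  have hVβ : (pV f I p y β).Nonempty := ⟨_, hVmemt β hβD⟩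
  have hV1 : (pV f I p y 1).Nonempty := ⟨_, hVmemt 1 hf.one_not_top⟩
  -- chord inequality for the concave value function
  have hchord : ∀ c d : ℝ, (pV f I p y c).Nonempty → (pV f I p y d).Nonempty →
      c < 1 → 1 < d →
      (ph f I p y d - ph f I p y 1) / (d - 1) ≤ (ph f I p y 1 - ph f I p y c) / (1 - c) := by
    intro c d hcne hdne hc1 h1d
    have hdc : 0 < d - c := by linarith
    set θ : ℝ := (d - 1) / (d - c) with hθdef
    have hθ0 : 0 < θ := div_pos (by linarith) hdc
    have hθ1 : θ < 1 := (div_lt_one hdc).mpr (by linarith)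
    have hθc : θ * (d - c) = d - 1 := div_mul_cancel₀ _ (ne_of_gt hdc)
    have key : θ * ph f I p y c + (1 - θ) * ph f I p y d ≤ ph f I p y 1 := by
      refine le_of_forall_pos_le_add fun ε hε => ?_
      obtain ⟨τc, hfc, hmc, hvc⟩ := hexists c hcne (ε/2) (by linarith)
      obtain ⟨τd, hfd, hmd, hvd⟩ := hexists d hdne (ε/2) (by linarith)
      obtain ⟨hfe, hm, hv⟩ := hcomb τc τd θ hfc hfd hθ0.le hθ1.le
      have hle := hmem_le _ hfe
      rw [hm, hmc, hmd] at hle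
      have hmass1 : θ * c + (1 - θ) * d = 1 := by linarith [hθc]
      rw [hmass1] at hle
      have e1 := mul_le_mul_of_nonneg_left hvc hθ0.le
      have e2 := mul_le_mul_of_nonneg_left hvd (by linarith : (0:ℝ) ≤ 1 - θ)
      nlinarith [hv, hle, e1, e2]
    rw [div_le_div_iff₀ (by linarith) (by linarith)]
    have e3 := mul_le_mul_of_nonneg_right key hdc.le
    have e4 : θ * (d - c) * ph f I p y c = (d - 1) * ph f I p y c := by rw [hθc]
    have e5 : θ * (d - c) * ph f I p y d = (d - 1) * ph f I p y d := by rw [hθc]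
    nlinarith [e3, e4, e5]
  -- the supergradient
  set Sl : Set ℝ := {r | ∃ d, (pV f I p y d).Nonempty ∧ 1 < d
    ∧ r = (ph f I p y d - ph f I p y 1) / (d - 1)} with hSl
  have hSlne : ((ph f I p y β - ph f I p y 1) / (β - 1)) ∈ Sl := ⟨β, hVβ, hβ1, rfl⟩
  have hSlbdd : BddAbove Sl := by
    refine ⟨(ph f I p y 1 - ph f I p y α) / (1 - α), ?_⟩
    rintro r ⟨d, hdne, h1d, rfl⟩
    exact hchord α d hVα hdne hα1 h1d
  set ν : ℝ := sSup Sl with hν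
  have hgrad : ∀ τ, pfeas f I τ →
      pval f I p y τ ≤ ph f I p y 1 + ν * (pmass I p τ - 1) := by
    intro τ hfe
    have hτle := hmem_le τ hfe
    set c := pmass I p τ with hc
    have hcne : (pV f I p y c).Nonempty := ⟨_, τ, hfe, rfl, rfl⟩
    rcases lt_trichotomy c 1 with hlt | heq | hgt
    · have hνle : ν ≤ (ph f I p y 1 - ph f I p y c) / (1 - c) := by
        refine csSup_le ⟨_, hSlne⟩ ?_
        rintro r ⟨d, hdne, h1d, rfl⟩
        exact hchord c d hcne hdne hlt h1d
      rw [le_div_iff₀ (by linarith)] at hνle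
      nlinarith [hτle, hνle]
    · rw [heq] at hτle ⊢
      simpa using hτle
    · have hmem : (ph f I p y c - ph f I p y 1) / (c - 1) ∈ Sl := ⟨c, hcne, hgt, rfl⟩
      have h5 := le_csSup hSlbdd hmem
      rw [div_le_iff₀ (by linarith)] at h5
      nlinarith [hτle, h5]
  -- finiteness of fstar at the multipliers
  have hfin : ∀ n ∈ I, p n ≠ 0 → fstar f (y n - ν) ≠ ⊤ := by
    intro n hn hpn
    have hppos : 0 < p n := lt_of_le_of_ne (hp0 n) (Ne.symm hpn)
    set Bn : ℝ := (ph f I p y 1 + ν * ((p n + ∑ m ∈ I.erase n, p m) - 1)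
      - ν * p n - ∑ m ∈ I.erase n, p m * y m) / p n with hBn
    refine ne_top_of_le_ne_top (EReal.coe_ne_top Bn) ?_
    refine iSup_le fun s => ?_
    rcases eq_or_ne (f s) ⊤ with hs | hs
    · rw [hs, EReal.sub_top]; exact bot_le
    · rw [show (((s * (y n - ν) : ℝ)) : EReal) - f s
          = ((s * (y n - ν) - (f s).toReal : ℝ) : EReal) by
        rw [EReal.coe_sub]; congr 1; exact (EReal.coe_toReal hs (hf.ne_bot s)).symm]
      rw [EReal.coe_le_coe_iff]
      set τ : ℤ → ℝ := fun m => if m = n then s else 1 with hτdef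
      have hfe : pfeas f I τ := by
        intro m _
        by_cases hmn : m = n
        · simpa [hτdef, hmn] using hs
        · simpa [hτdef, hmn] using hf.one_not_top
      have hgr := hgrad τ hfe
      have hmassτ : pmass I p τ = p n * s + ∑ m ∈ I.erase n, p m := by
        rw [pmass, ← Finset.add_sum_erase _ _ hn]
        congr 1
        · simp [hτdef]
        · refine Finset.sum_congr rfl fun m hm => ?_
          have := Finset.ne_of_mem_erase hm
          simp [hτdef, this]
      have hvalτ : pval f I p y τ
          = p n * (s * y n - (f s).toReal) + ∑ m ∈ I.erase n, p m * y m := by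
        rw [pval, ← Finset.add_sum_erase _ _ hn]
        congr 1
        · simp [hτdef]
        · refine Finset.sum_congr rfl fun m hm => ?_
          have := Finset.ne_of_mem_erase hm
          simp [hτdef, this, hf.fR_one]
      rw [hmassτ, hvalτ] at hgr
      rw [hBn, le_div_iff₀ hppos]
      nlinarith [hgr]
  -- near optimal density at mass one
  obtain ⟨τ1, hfe1, hm1, hv1⟩ := hexists 1 hV1 (δ/2) (by linarith)
  set τ' : ℤ → ℝ := fun n => if n ∈ I then τ1 n else 1 with hτ'def
  have hfe' : ∀ n, f (τ' n) ≠ ⊤ := by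
    intro n
    by_cases hn : n ∈ I
    · simpa [hτ'def, hn] using hfe1 n hn
    · simpa [hτ'def, hn] using hf.one_not_top
  have hm' : ∑ n ∈ I, p n * τ' n = 1 := by
    rw [show ∑ n ∈ I, p n * τ' n = pmass I p τ1 from
      Finset.sum_congr rfl fun n hn => by simp [hτ'def, hn], hm1]
  have hv'eq : pval f I p y τ' = pval f I p y τ1 := by
    refine Finset.sum_congr rfl fun n hn => by simp [hτ'def, hn]
  -- near optimal selections for fstar
  have hchoice : ∀ n : ℤ, ∃ s : ℝ, f s ≠ ⊤ ∧ (n ∈ I → p n ≠ 0 →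
      (fstar f (y n - ν)).toReal ≤ s * (y n - ν) - (f s).toReal + δ/2) := by
    intro n
    by_cases hn : n ∈ I ∧ p n ≠ 0
    · have hW := hfin n hn.1 hn.2
      have hWb := hf.fstar_ne_bot (y n - ν)
      have hlt : ((((fstar f (y n - ν)).toReal - δ/2 : ℝ)) : EReal) < fstar f (y n - ν) := by
        conv_rhs => rw [← EReal.coe_toReal hW hWb]
        exact_mod_cast (by linarith : (fstar f (y n - ν)).toReal - δ/2
          < (fstar f (y n - ν)).toReal)
      have hlt' : ((((fstar f (y n - ν)).toReal - δ/2 : ℝ)) : EReal)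
          < ⨆ x : ℝ, (((x * (y n - ν) : ℝ) : EReal) - f x) := hlt
      obtain ⟨s, hsl⟩ := lt_iSup_iff.mp hlt'
      rcases eq_or_ne (f s) ⊤ with hs | hs
      · rw [hs, EReal.sub_top] at hsl
        exact absurd hsl (by simp)
      · rw [show (((s * (y n - ν) : ℝ)) : EReal) - f s
            = ((s * (y n - ν) - (f s).toReal : ℝ) : EReal) by
          rw [EReal.coe_sub]; congr 1; exact (EReal.coe_toReal hs (hf.ne_bot s)).symm,
          EReal.coe_lt_coe_iff] at hsl
        exact ⟨s, hs, fun _ _ => by linarith⟩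
    · exact ⟨1, hf.one_not_top, fun h1 h2 => absurd ⟨h1, h2⟩ hn⟩
  choose σ hσtop hσle using hchoice
  set τs : ℤ → ℝ := fun n => if p n = 0 then 1 else σ n with hτsdef
  have hfes : pfeas f I τs := by
    intro n _
    by_cases hp : p n = 0
    · simpa [hτsdef, hp] using hf.one_not_top
    · simpa [hτsdef, hp] using hσtop n
  have hgr := hgrad τs hfes
  have hsum1 : ∑ n ∈ I, p n * (fstar f (y n - ν)).toReal
      ≤ (∑ n ∈ I, p n * (τs n * (y n - ν) - (f (τs n)).toReal)) + δ/2 * ∑ n ∈ I, p n := by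
    rw [Finset.mul_sum, ← Finset.sum_add_distrib]
    refine Finset.sum_le_sum fun n hn => ?_
    by_cases hp : p n = 0
    · simp [hp]
    · have h1 := hσle n hn hp
      have hτsn : τs n = σ n := by simp [hτsdef, hp]
      rw [hτsn]
      have h2 := mul_le_mul_of_nonneg_left h1 (hp0 n)
      nlinarith [h2]
  have hsum2 : ∑ n ∈ I, p n * (τs n * (y n - ν) - (f (τs n)).toReal)
      = pval f I p y τs - ν * pmass I p τs := by
    rw [pval, pmass, Finset.mul_sum, ← Finset.sum_sub_distrib]
    exact Finset.sum_congr rfl fun n _ => by ring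
  refine ⟨ν, τ', hfe', hm', hfin, ?_⟩
  have h6 : pval f I p y τs - ν * pmass I p τs ≤ ph f I p y 1 - ν := by nlinarith [hgr]
  have h7 : ph f I p y 1 ≤ pval f I p y τ1 + δ/2 := by linarith [hv1]
  have h8 : ∑ n ∈ I, p n * (fstar f (y n - ν)).toReal ≤ ph f I p y 1 - ν + δ/2 := by
    rw [hsum2] at hsum1
    rw [hpsum] at hsum1
    linarith [hsum1]
  have h9 : (∑ n ∈ I, p n * (τ' n * y n - (f (τ' n)).toReal)) = pval f I p y τ1 := hv'eq
  rw [h9]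
  linarith [h8, h7]

end AuxDuality

section AuxGibbs

open MeasureTheory
open scoped NNReal

variable {Ω : Type*} [MeasurableSpace Ω] {a b : EReal} {f : ℝ → EReal}

lemma gibbs_prob (hf : IsF1 a b f) (ha : (0 : EReal) ≤ a)
    (P : Measure Ω) [IsProbabilityMeasure P]
    {idx : Ω → ℤ} (hidx : Measurable idx) {I : Finset ℤ} (hI : ∀ x, idx x ∈ I)
    (τ : ℤ → ℝ) (hτtop : ∀ n, f (τ n) ≠ ⊤)
    (hmass : ∑ n ∈ I, (P (idx ⁻¹' {n})).toReal * τ n = 1) :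
    IsProbabilityMeasure
      (P.withDensity (fun x => ((Real.toNNReal (τ (idx x)) : ℝ≥0) : ℝ≥0∞))) := by
  have hτ0 : ∀ n, 0 ≤ τ n := fun n => hf.dom_nonneg ha (hτtop n)
  constructor
  rw [withDensity_apply _ MeasurableSet.univ, Measure.restrict_univ]
  have hcoe : (fun x => ((Real.toNNReal (τ (idx x)) : ℝ≥0) : ℝ)) = fun x => τ (idx x) :=
    funext fun x => Real.coe_toNNReal _ (hτ0 _)
  have hint : Integrable (fun x => ((Real.toNNReal (τ (idx x)) : ℝ≥0) : ℝ)) P := by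
    rw [hcoe]
    exact partition_integrable P hidx hI τ
  rw [lintegral_coe_eq_integral _ hint]
  rw [hcoe, partition_integral P hidx hI τ, hmass]
  simp

lemma gibbs_bound (hf : IsF1 a b f) (ha : (0 : EReal) ≤ a)
    (P : Measure Ω) [IsProbabilityMeasure P]
    {idx : Ω → ℤ} (hidx : Measurable idx) {I : Finset ℤ} (hI : ∀ x, idx x ∈ I)
    (τ : ℤ → ℝ) (hτtop : ∀ n, f (τ n) ≠ ⊤)
    (hmass : ∑ n ∈ I, (P (idx ⁻¹' {n})).toReal * τ n = 1)
    {g' : Ω → ℝ} (hg'm : Measurable g') {C' : ℝ} (hg'b : ∀ x, |g' x| ≤ C') :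
    ((∫ x, g' x ∂(P.withDensity (fun x => ((Real.toNNReal (τ (idx x)) : ℝ≥0) : ℝ≥0∞))) : ℝ)
        : EReal) - LambdaF f P g'
      ≤ ((∑ n ∈ I, (P (idx ⁻¹' {n})).toReal * (f (τ n)).toReal : ℝ) : EReal) := by
  have hτ0 : ∀ n, 0 ≤ τ n := fun n => hf.dom_nonneg ha (hτtop n)
  have hφm : Measurable (fun x => (Real.toNNReal (τ (idx x)) : ℝ≥0)) :=
    (Measurable.of_discrete (f := fun n : ℤ => Real.toNNReal (τ n))).comp hidx
  set EQ : ℝ := ∫ x, g' x ∂(P.withDensity (fun x => ((Real.toNNReal (τ (idx x)) : ℝ≥0) : ℝ≥0∞)))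
    with hEQdef
  set D : ℝ := ∑ n ∈ I, (P (idx ⁻¹' {n})).toReal * (f (τ n)).toReal with hDdef
  have hEQ : EQ = ∫ x, τ (idx x) * g' x ∂P := by
    rw [hEQdef, integral_withDensity_eq_integral_smul hφm]
    congr 1
    funext x
    rw [NNReal.smul_def, smul_eq_mul]
    congr 1
    exact Real.coe_toNNReal _ (hτ0 _)
  have hτm : Measurable (fun x => τ (idx x)) :=
    (Measurable.of_discrete (f := τ)).comp hidx
  have hτbd : ∀ x, |τ (idx x)| ≤ ∑ n ∈ I, |τ n| := fun x =>
    Finset.single_le_sum (f := fun n => |τ n|) (fun n _ => abs_nonneg _) (hI x)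
  have hint1 : Integrable (fun x => τ (idx x) * g' x) P := by
    refine integrable_of_bound P (hτm.mul hg'm) ((∑ n ∈ I, |τ n|) * C') fun x => ?_
    rw [abs_mul]
    exact mul_le_mul (hτbd x) (hg'b x) (abs_nonneg _)
      (le_trans (abs_nonneg _) (hτbd x))
  have hmain : ((EQ - D : ℝ) : EReal) ≤ LambdaF f P g' := by
    refine le_iInf fun ν => ?_
    set F2 : ℤ → ℝ := fun n => ν * τ n + (f (τ n)).toReal with hF2
    set u : Ω → ℝ := fun x => τ (idx x) * g' x - F2 (idx x) with hu
    have hum : Measurable u := (hτm.mul hg'm).sub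
      ((Measurable.of_discrete (f := F2)).comp hidx)
    have hub : ∀ x, |u x| ≤ (∑ n ∈ I, |τ n|) * C' + ∑ n ∈ I, |F2 n| := by
      intro x
      have h1 : |τ (idx x) * g' x| ≤ (∑ n ∈ I, |τ n|) * C' := by
        rw [abs_mul]
        exact mul_le_mul (hτbd x) (hg'b x) (abs_nonneg _) (le_trans (abs_nonneg _) (hτbd x))
      have h2 : |F2 (idx x)| ≤ ∑ n ∈ I, |F2 n| :=
        Finset.single_le_sum (f := fun n => |F2 n|) (fun n _ => abs_nonneg _) (hI x)
      calc |u x| ≤ |τ (idx x) * g' x| + |F2 (idx x)| := abs_sub _ _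
      _ ≤ _ := add_le_add h1 h2
    have hptwise : ∀ x, ((u x : ℝ) : EReal) ≤ fstar f (g' x - ν) := by
      intro x
      have h3 := hf.fstar_ge (τ (idx x)) (g' x - ν) (hτtop _)
      refine le_trans (le_of_eq ?_) h3
      rw [EReal.coe_eq_coe_iff, hu, hF2]
      ring
    have hint := eIntegral_ge_integral P hum _ hub hptwise
    have hintu : ∫ x, u x ∂P = EQ - ν - D := by
      rw [hu, integral_sub hint1 (partition_integrable P hidx hI F2),
        partition_integral P hidx hI F2, hEQ]
      have hsum : ∑ n ∈ I, (P (idx ⁻¹' {n})).toReal * F2 n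
          = ν * (∑ n ∈ I, (P (idx ⁻¹' {n})).toReal * τ n) + D := by
        rw [hDdef, Finset.mul_sum, ← Finset.sum_add_distrib]
        exact Finset.sum_congr rfl fun n _ => by rw [hF2]; ring
      rw [hsum, hmass]
      ring
    calc ((EQ - D : ℝ) : EReal) = ((ν : ℝ) : EReal) + ((EQ - ν - D : ℝ) : EReal) := by
          rw [← EReal.coe_add]
          norm_cast
          ring
    _ ≤ ((ν : ℝ) : EReal) + eIntegral P (fun x => fstar f (g' x - ν)) := by
          refine add_le_add le_rfl ?_
          rw [← hintu]
          exact hint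
  calc ((EQ : ℝ) : EReal) - LambdaF f P g' ≤ ((EQ : ℝ) : EReal) - ((EQ - D : ℝ) : EReal) :=
        EReal.sub_le_sub le_rfl hmain
  _ = ((D : ℝ) : EReal) := by
        rw [← EReal.coe_sub]
        norm_cast
        ring

end AuxGibbs

/-- For `f ∈ F₁(a,b)` with `a ≥ 0`, `P` a probability measure and
nonempty `Γ ⊆ M_b(Ω)`, for every `g ∈ Γ`:
`sup_{Q probability measure} {E_Q[g] - D_f^Γ(Q‖P)} = Λ_f^P[g]`. -/
theorem stmt6 {Ω : Type*} [MeasurableSpace Ω] (a b : EReal) (f : ℝ → EReal)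
    (hf : IsF1 a b f) (ha : (0 : EReal) ≤ a)
    (P : Measure Ω) [IsProbabilityMeasure P]
    (Γ : Set (Ω → ℝ)) (hΓ : Γ ⊆ Mb Ω) (hne : Γ.Nonempty)
    (g : Ω → ℝ) (hg : g ∈ Γ) :
    (⨆ Q ∈ {Q : Measure Ω | IsProbabilityMeasure Q},
      (((∫ x, g x ∂Q : ℝ) : EReal) - fGammaDiv f Γ Q P))
    = LambdaF f P g := by
  classical
  obtain ⟨hgm, C, hgC⟩ := hΓ hg
  have hΩ : Nonempty Ω := by
    by_contra hempty
    rw [not_nonempty_iff] at hempty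
    have h1 : P univ = 1 := measure_univ
    have h2 : (univ : Set Ω) = ∅ := Set.univ_eq_empty_iff.mpr hempty
    rw [h2, measure_empty] at h1
    exact zero_ne_one h1
  apply le_antisymm
  · -- easy direction
    refine iSup₂_le fun Q _ => ?_
    have hmem : (((∫ x, g x ∂Q : ℝ) : EReal) - LambdaF f P g) ≤ fGammaDiv f Γ Q P :=
      le_iSup₂ (f := fun (g' : Ω → ℝ) (_ : g' ∈ Γ) =>
        (((∫ x, g' x ∂Q : ℝ) : EReal) - LambdaF f P g')) g hg
    exact ereal_sub_sub_le _ _ _ hmem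
  · -- hard direction
    refine ereal_le_of_forall_eps fun ε2 hε2 => ?_
    set ε : ℝ := ε2 / 2 with hε
    have hεpos : 0 < ε := by rw [hε]; linarith
    set idx : Ω → ℤ := fun x => ⌊g x / ε⌋ with hidx_def
    have hidxm : Measurable idx := (hgm.div_const ε).floor
    set I : Finset ℤ := Finset.Icc ⌊-C/ε⌋ ⌊C/ε⌋ with hI_def
    have hI : ∀ x, idx x ∈ I := by
      intro x
      rw [hI_def, Finset.mem_Icc]
      obtain ⟨h1, h2⟩ := abs_le.mp (hgC x)
      constructor
      · exact Int.floor_le_floor ((div_le_div_iff_of_pos_right hεpos).mpr h1)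
      · exact Int.floor_le_floor ((div_le_div_iff_of_pos_right hεpos).mpr h2)
    have hp0 : ∀ n : ℤ, 0 ≤ (P (idx ⁻¹' {n})).toReal := fun n => ENNReal.toReal_nonneg
    have hpsum : ∑ n ∈ I, (P (idx ⁻¹' {n})).toReal = 1 := by
      have h2 := partition_integral P hidxm hI (fun _ => (1 : ℝ))
      simpa using h2.symm
    set y : ℤ → ℝ := fun n => (n : ℝ) * ε with hy_def
    have hyC : ∀ n ∈ I, y n ≤ C := by
      intro n hn
      rw [hI_def, Finset.mem_Icc] at hn
      have h1 : (n : ℝ) ≤ C / ε := le_trans (by exact_mod_cast hn.2) (Int.floor_le _)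
      calc y n = (n : ℝ) * ε := rfl
      _ ≤ (C / ε) * ε := mul_le_mul_of_nonneg_right h1 hεpos.le
      _ = C := div_mul_cancel₀ _ hεpos.ne'
    obtain ⟨ν, τ, hτtop, hτmass, hτfin, hτval⟩ :=
      hf.finite_duality ha I (fun n => (P (idx ⁻¹' {n})).toReal) hp0 hpsum y C hyC ε hεpos
    have hτ0 : ∀ n, 0 ≤ τ n := fun n => hf.dom_nonneg ha (hτtop n)
    set Q := P.withDensity (fun x => ((Real.toNNReal (τ (idx x)) : NNReal) : ℝ≥0∞)) with hQdef
    have hQprob : IsProbabilityMeasure Q := by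
      rw [hQdef]
      exact gibbs_prob hf ha P hidxm hI τ hτtop hτmass
    have hDiv : fGammaDiv f Γ Q P
        ≤ ((∑ n ∈ I, (P (idx ⁻¹' {n})).toReal * (f (τ n)).toReal : ℝ) : EReal) := by
      refine iSup₂_le fun g' hg' => ?_
      obtain ⟨hg'm, C', hg'C⟩ := hΓ hg'
      rw [hQdef]
      exact gibbs_bound hf ha P hidxm hI τ hτtop hτmass hg'm hg'C
    -- lower bound on the expectation of g under Q
    have hEQ : ∑ n ∈ I, (P (idx ⁻¹' {n})).toReal * (τ n * y n) ≤ ∫ x, g x ∂Q := by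
      have hφm : Measurable (fun x => (Real.toNNReal (τ (idx x)) : NNReal)) :=
        (Measurable.of_discrete (f := fun n : ℤ => Real.toNNReal (τ n))).comp hidxm
      rw [hQdef, integral_withDensity_eq_integral_smul hφm]
      have hrw : (fun x => (Real.toNNReal (τ (idx x)) : NNReal) • g x)
          = fun x => τ (idx x) * g x := by
        funext x
        rw [NNReal.smul_def, smul_eq_mul]
        congr 1
        exact Real.coe_toNNReal _ (hτ0 _)
      rw [hrw]
      have hτm : Measurable (fun x => τ (idx x)) :=
        (Measurable.of_discrete (f := τ)).comp hidxm
      have hτbd : ∀ x, |τ (idx x)| ≤ ∑ n ∈ I, |τ n| := fun x =>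
        Finset.single_le_sum (f := fun n => |τ n|) (fun n _ => abs_nonneg _) (hI x)
      have hint2 : Integrable (fun x => τ (idx x) * g x) P := by
        refine integrable_of_bound P (hτm.mul hgm) ((∑ n ∈ I, |τ n|) * C) fun x => ?_
        rw [abs_mul]
        exact mul_le_mul (hτbd x) (hgC x) (abs_nonneg _) (le_trans (abs_nonneg _) (hτbd x))
      have hmono : ∫ x, τ (idx x) * y (idx x) ∂P ≤ ∫ x, τ (idx x) * g x ∂P := by
        refine integral_mono ?_ hint2 fun x => ?_
        · exact partition_integrable P hidxm hI (fun n => τ n * y n)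
        refine mul_le_mul_of_nonneg_left ?_ (hτ0 _)
        have h5 := Int.floor_le (g x / ε)
        calc y (idx x) = (⌊g x / ε⌋ : ℝ) * ε := rfl
        _ ≤ (g x / ε) * ε := mul_le_mul_of_nonneg_right h5 hεpos.le
        _ = g x := div_mul_cancel₀ _ hεpos.ne'
      calc ∑ n ∈ I, (P (idx ⁻¹' {n})).toReal * (τ n * y n)
          = ∫ x, τ (idx x) * y (idx x) ∂P := by
            simpa using (partition_integral P hidxm hI (fun n => τ n * y n)).symm
      _ ≤ _ := hmono
    -- the supremum is at least the value of Q
    have hS : ((∑ n ∈ I, (P (idx ⁻¹' {n})).toReal * (τ n * y n)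
          - ∑ n ∈ I, (P (idx ⁻¹' {n})).toReal * (f (τ n)).toReal : ℝ) : EReal)
        ≤ ⨆ Q' ∈ {Q : Measure Ω | IsProbabilityMeasure Q},
            (((∫ x, g x ∂Q' : ℝ) : EReal) - fGammaDiv f Γ Q' P) := by
      refine le_trans ?_ (le_iSup₂ (f := fun (Q' : Measure Ω)
        (_ : Q' ∈ {Q : Measure Ω | IsProbabilityMeasure Q}) =>
        (((∫ x, g x ∂Q' : ℝ) : EReal) - fGammaDiv f Γ Q' P)) Q
        (show Q ∈ {Q : Measure Ω | IsProbabilityMeasure Q} from hQprob))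
      calc ((∑ n ∈ I, (P (idx ⁻¹' {n})).toReal * (τ n * y n)
            - ∑ n ∈ I, (P (idx ⁻¹' {n})).toReal * (f (τ n)).toReal : ℝ) : EReal)
          ≤ ((∫ x, g x ∂Q - ∑ n ∈ I, (P (idx ⁻¹' {n})).toReal * (f (τ n)).toReal : ℝ) : EReal) :=
            EReal.coe_le_coe_iff.mpr (by linarith [hEQ])
      _ = ((∫ x, g x ∂Q : ℝ) : EReal)
            - ((∑ n ∈ I, (P (idx ⁻¹' {n})).toReal * (f (τ n)).toReal : ℝ) : EReal) :=
            EReal.coe_sub _ _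
      _ ≤ ((∫ x, g x ∂Q : ℝ) : EReal) - fGammaDiv f Γ Q P := EReal.sub_le_sub le_rfl hDiv
    -- upper bound for Lambda
    have hΛ : LambdaF f P g
        ≤ ((ν + ε + ∑ n ∈ I, (P (idx ⁻¹' {n})).toReal * (fstar f (y n - ν)).toReal : ℝ)
          : EReal) := by
      have h1 : LambdaF f P g ≤ (((ν + ε : ℝ)) : EReal)
          + eIntegral P (fun x => fstar f (g x - (ν + ε))) := iInf_le _ (ν + ε)
      have h2 : eIntegral P (fun x => fstar f (g x - (ν + ε)))
          ≤ eIntegral P (fun x => fstar f (y (idx x) - ν)) := by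
        refine eIntegral_mono P fun x => hf.fstar_mono ha ?_
        have h5 := Int.sub_one_lt_floor (g x / ε)
        have h6 : g x - ε ≤ y (idx x) := by
          have h4 : (g x / ε - 1) * ε ≤ (⌊g x / ε⌋ : ℝ) * ε :=
            mul_le_mul_of_nonneg_right h5.le hεpos.le
          calc g x - ε = (g x / ε - 1) * ε := by field_simp
          _ ≤ y (idx x) := h4
        linarith
      have h3 : eIntegral P (fun x => fstar f (y (idx x) - ν))
          = ((∫ x, (fstar f (y (idx x) - ν)).toReal ∂P : ℝ) : EReal) := by
        refine eIntegral_eq_integral P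
          ((Measurable.of_discrete (f := fun n => (fstar f (y n - ν)).toReal)).comp hidxm)
          (∑ n ∈ I, |(fstar f (y n - ν)).toReal|)
          (fun x => Finset.single_le_sum
            (f := fun n => |(fstar f (y n - ν)).toReal|) (fun n _ => abs_nonneg _) (hI x)) ?_
        have hnull : P (⋃ n ∈ {n : ℤ | n ∈ I ∧ (P (idx ⁻¹' {n})).toReal = 0},
            idx ⁻¹' {n}) = 0 := by
          refine (measure_biUnion_null_iff (Set.to_countable _)).mpr ?_
          rintro n ⟨-, hn2⟩
          rcases (ENNReal.toReal_eq_zero_iff _).mp hn2 with h | h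
          · exact h
          · exact absurd h (measure_ne_top P _)
        rw [ae_iff]
        refine measure_mono_null ?_ hnull
        intro x hx
        simp only [Set.mem_setOf_eq] at hx
        by_cases hp : (P (idx ⁻¹' {idx x})).toReal = 0
        · exact Set.mem_biUnion ⟨hI x, hp⟩ rfl
        · exfalso
          apply hx
          have htop := hτfin (idx x) (hI x) hp
          exact (EReal.coe_toReal htop (hf.fstar_ne_bot _)).symm
      have h4 : ∫ x, (fstar f (y (idx x) - ν)).toReal ∂P
          = ∑ n ∈ I, (P (idx ⁻¹' {n})).toReal * (fstar f (y n - ν)).toReal := by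
        simpa using partition_integral P hidxm hI (fun n => (fstar f (y n - ν)).toReal)
      calc LambdaF f P g
          ≤ (((ν + ε : ℝ)) : EReal) + eIntegral P (fun x => fstar f (g x - (ν + ε))) := h1
      _ ≤ (((ν + ε : ℝ)) : EReal)
          + ((∑ n ∈ I, (P (idx ⁻¹' {n})).toReal * (fstar f (y n - ν)).toReal : ℝ) : EReal) := by
          refine add_le_add le_rfl ?_
          refine le_trans h2 (le_of_eq ?_)
          rw [h3, h4]
      _ = ((ν + ε + ∑ n ∈ I, (P (idx ⁻¹' {n})).toReal * (fstar f (y n - ν)).toReal : ℝ)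
          : EReal) := by rw [← EReal.coe_add]
    -- conclude
    have hτval' : (∑ n ∈ I, (P (idx ⁻¹' {n})).toReal * (fstar f (y n - ν)).toReal) + ν
        ≤ (∑ n ∈ I, (P (idx ⁻¹' {n})).toReal * (τ n * y n - (f (τ n)).toReal)) + ε := hτval
    have hfinal : (ν + ε + ∑ n ∈ I, (P (idx ⁻¹' {n})).toReal * (fstar f (y n - ν)).toReal : ℝ)
        ≤ (∑ n ∈ I, (P (idx ⁻¹' {n})).toReal * (τ n * y n)
          - ∑ n ∈ I, (P (idx ⁻¹' {n})).toReal * (f (τ n)).toReal) + ε2 := by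
      have h7 : ∑ n ∈ I, (P (idx ⁻¹' {n})).toReal * (τ n * y n - (f (τ n)).toReal)
          = ∑ n ∈ I, (P (idx ⁻¹' {n})).toReal * (τ n * y n)
            - ∑ n ∈ I, (P (idx ⁻¹' {n})).toReal * (f (τ n)).toReal := by
        rw [← Finset.sum_sub_distrib]
        exact Finset.sum_congr rfl fun n _ => by ring
      rw [h7] at hτval'
      have hee : ε = ε2 / 2 := hε
      linarith [hτval']
    calc LambdaF f P g
        ≤ ((ν + ε + ∑ n ∈ I, (P (idx ⁻¹' {n})).toReal * (fstar f (y n - ν)).toReal : ℝ)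
          : EReal) := hΛ
    _ ≤ ((∑ n ∈ I, (P (idx ⁻¹' {n})).toReal * (τ n * y n)
          - ∑ n ∈ I, (P (idx ⁻¹' {n})).toReal * (f (τ n)).toReal : ℝ) : EReal)
          + ((ε2 : ℝ) : EReal) := by
        rw [← EReal.coe_add]
        exact EReal.coe_le_coe_iff.mpr hfinal
    _ ≤ (⨆ Q' ∈ {Q : Measure Ω | IsProbabilityMeasure Q},
          (((∫ x, g x ∂Q' : ℝ) : EReal) - fGammaDiv f Γ Q' P)) + ((ε2 : ℝ) : EReal) :=
        add_le_add hS le_rfl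
end

section
/- Let f ∈ F₁(a,b), let Γ ⊂ M_b(Ω) be nonempty, and let Q, P be probability measures on (Ω,M). Then D_f^Γ(Q‖P) ≤ inf over probability measures η on (Ω,M) of {D_f(η‖P) + W^Γ(Q,η)}. In particular, D_f^Γ(Q‖P) ≤ min{D_f(Q‖P), W^Γ(Q,P)}. -/
open MeasureTheory Filter Set Topology ENNReal
open scoped Classical

section AuxLemmas

lemma posE_top : posE ⊤ = ⊤ := by simp [posE]

lemma posE_eq_top_iff {x : EReal} : posE x = ⊤ ↔ x = ⊤ := by
  unfold posE
  split <;> simp_all [ENNReal.ofReal_ne_top]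

lemma posE_add_le (x y : EReal) (hx : x ≠ ⊥) (hy : y ≠ ⊥) :
    posE (x + y) ≤ posE x + posE y := by
  by_cases hxt : x = ⊤
  · simp [hxt, EReal.top_add_of_ne_bot hy, posE_top]
  by_cases hyt : y = ⊤
  · simp [hyt, EReal.add_top_of_ne_bot hx, posE_top]
  lift x to ℝ using ⟨hxt, hx⟩
  lift y to ℝ using ⟨hyt, hy⟩
  rw [← EReal.coe_add, posE_coe, posE_coe, posE_coe]
  exact ENNReal.ofReal_add_le

lemma measurable_posE : Measurable posE := by
  unfold posE
  exact Measurable.ite (measurableSet_singleton ⊤) measurable_const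
    (ENNReal.measurable_ofReal.comp measurable_ereal_toReal)

lemma coe_ennreal_ne_top_eq {A : ℝ≥0∞} (hA : A ≠ ⊤) :
    (A : EReal) = ((A.toReal : ℝ) : EReal) := by
  conv_lhs => rw [← ENNReal.ofReal_toReal hA]
  rw [EReal.coe_ennreal_ofReal, max_eq_left ENNReal.toReal_nonneg]

lemma le_fstar (f : ℝ → EReal) (x y : ℝ) : ((x * y : ℝ) : EReal) - f x ≤ fstar f y :=
  le_iSup (fun x => ((x * y : ℝ) : EReal) - f x) x

lemma coe_le_fstar {f : ℝ → EReal} (h1 : f 1 = 0) (y : ℝ) : (y : EReal) ≤ fstar f y := by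
  have := le_fstar f 1 y
  simpa [h1] using this

lemma fstar_ne_bot {f : ℝ → EReal} (h1 : f 1 = 0) (y : ℝ) : fstar f y ≠ ⊥ :=
  fun h => by simpa [h] using coe_le_fstar h1 y

lemma fenchel {f : ℝ → EReal} (h1 : f 1 = 0) (hb : ∀ x, f x ≠ ⊥) (x y : ℝ) :
    ((x * y : ℝ) : EReal) ≤ f x + fstar f y := by
  by_cases ht : f x = ⊤
  · rw [ht, EReal.top_add_of_ne_bot (fstar_ne_bot h1 y)]
    exact le_top
  lift f x to ℝ using ⟨ht, hb x⟩ with c hc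
  have h := le_fstar f x y
  rw [← hc] at h
  rw [add_comm]
  exact (EReal.sub_le_iff_le_add (Or.inl (EReal.coe_ne_bot c))
    (Or.inl (EReal.coe_ne_top c))).mp h

lemma measurable_fstar (f : ℝ → EReal) : Measurable (fstar f) := by
  have : LowerSemicontinuous (fstar f) := by
    apply lowerSemicontinuous_iSup
    intro x
    by_cases ht : f x = ⊤
    · have : (fun y : ℝ => ((x * y : ℝ) : EReal) - f x) = fun _ => (⊥ : EReal) := by
        funext y; rw [ht, EReal.sub_top]
      rw [this]
      exact continuous_const.lowerSemicontinuous
    by_cases hbot : f x = ⊥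
    · have : (fun y : ℝ => ((x * y : ℝ) : EReal) - f x) = fun _ => (⊤ : EReal) := by
        funext y
        rw [hbot, sub_eq_add_neg, EReal.neg_bot,
          EReal.add_top_of_ne_bot (EReal.coe_ne_bot _)]
      rw [this]
      exact continuous_const.lowerSemicontinuous
    lift f x to ℝ using ⟨ht, hbot⟩ with c hc
    have : (fun y : ℝ => ((x * y : ℝ) : EReal) - (c : EReal))
        = fun y : ℝ => ((x * y - c : ℝ) : EReal) := by
      funext y; rw [← EReal.coe_sub]
    rw [this]
    exact (continuous_coe_real_ereal.comp (by continuity)).lowerSemicontinuous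
  exact this.measurable

section EIntegralLemmas
variable {Ω : Type*} [MeasurableSpace Ω] (P : Measure Ω)

lemma norm_ofReal_eq (t : ℝ) :
    ENNReal.ofReal ‖t‖ = ENNReal.ofReal t + ENNReal.ofReal (-t) := by
  rcases le_total 0 t with h | h
  · rw [Real.norm_of_nonneg h, ENNReal.ofReal_eq_zero.mpr (neg_nonpos.mpr h), add_zero]
  · rw [Real.norm_of_nonpos h, ENNReal.ofReal_eq_zero.mpr h, zero_add]

lemma eIntegral_eq (h : Ω → EReal) (hm : Measurable h) (hb : ∀ x, h x ≠ ⊥)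
    (hA : ∫⁻ x, posE (h x) ∂P ≠ ⊤) (hB : ∫⁻ x, posE (-(h x)) ∂P ≠ ⊤) :
    Integrable (fun x => (h x).toReal) P ∧
      eIntegral P h = ((∫ x, (h x).toReal ∂P : ℝ) : EReal) := by
  have hmp : Measurable fun x => posE (h x) := measurable_posE.comp hm
  have hae : ∀ᵐ x ∂P, h x ≠ ⊤ := by
    filter_upwards [ae_lt_top hmp hA] with x hx
    exact fun hx' => absurd (posE_eq_top_iff.mpr hx') hx.ne
  have hpos : ∀ᵐ x ∂P, posE (h x) = ENNReal.ofReal ((h x).toReal) := by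
    filter_upwards [hae] with x hx
    rw [← EReal.coe_toReal hx (hb x), posE_coe, EReal.toReal_coe]
  have hneg : ∀ x, posE (-(h x)) = ENNReal.ofReal (-(h x).toReal) := by
    intro x
    have hnt : -(h x) ≠ ⊤ := by
      simp only [ne_eq, EReal.neg_eq_top_iff]
      exact hb x
    rw [posE, if_neg hnt, EReal.toReal_neg_eq]
  have hint : Integrable (fun x => (h x).toReal) P := by
    refine ⟨(measurable_ereal_toReal.comp hm).aestronglyMeasurable, ?_⟩
    rw [hasFiniteIntegral_iff_norm]
    calc ∫⁻ x, ENNReal.ofReal ‖(h x).toReal‖ ∂P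
        = ∫⁻ x, (ENNReal.ofReal ((h x).toReal) + ENNReal.ofReal (-(h x).toReal)) ∂P :=
          lintegral_congr fun x => norm_ofReal_eq _
      _ = ∫⁻ x, posE (h x) ∂P + ∫⁻ x, posE (-(h x)) ∂P := by
          rw [← lintegral_add_left' hmp.aemeasurable]
          refine lintegral_congr_ae ?_
          filter_upwards [hpos] with x hx
          rw [hx, hneg]
      _ < ⊤ := ENNReal.add_lt_top.mpr ⟨hA.lt_top, hB.lt_top⟩
  refine ⟨hint, ?_⟩
  have e1 : ∫⁻ x, posE (h x) ∂P = ∫⁻ x, ENNReal.ofReal ((h x).toReal) ∂P :=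
    lintegral_congr_ae hpos
  have e2 : ∫⁻ x, posE (-(h x)) ∂P = ∫⁻ x, ENNReal.ofReal (-(h x).toReal) ∂P :=
    lintegral_congr fun x => hneg x
  rw [eIntegral, integral_eq_lintegral_pos_part_sub_lintegral_neg_part hint,
    EReal.coe_sub, ← e1, ← e2, coe_ennreal_ne_top_eq hA, coe_ennreal_ne_top_eq hB]

lemma eIntegral_zero : eIntegral P (fun _ => (0 : EReal)) = 0 := by
  have : posE 0 = 0 := by simpa using posE_coe 0
  simp [eIntegral, this]

lemma eIntegral_congr_ae {h₁ h₂ : Ω → EReal} (h : h₁ =ᵐ[P] h₂) :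
    eIntegral P h₁ = eIntegral P h₂ := by
  rw [eIntegral, eIntegral]
  have e1 : ∫⁻ x, posE (h₁ x) ∂P = ∫⁻ x, posE (h₂ x) ∂P :=
    lintegral_congr_ae (by filter_upwards [h] with x hx; rw [hx])
  have e2 : ∫⁻ x, posE (-(h₁ x)) ∂P = ∫⁻ x, posE (-(h₂ x)) ∂P :=
    lintegral_congr_ae (by filter_upwards [h] with x hx; rw [hx])
  rw [e1, e2]

lemma integrable_of_bdd {μ : Measure Ω} [IsFiniteMeasure μ] {g : Ω → ℝ}
    (hgm : Measurable g) {C : ℝ} (hC : ∀ x, |g x| ≤ C) : Integrable g μ :=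
  Integrable.mono' (integrable_const C) hgm.aestronglyMeasurable
    (Filter.Eventually.of_forall fun x => by simpa [Real.norm_eq_abs] using hC x)

lemma Bnu_ne_top [IsProbabilityMeasure P] {f : ℝ → EReal} (h1 : f 1 = 0)
    (g : Ω → ℝ) {C : ℝ} (hC : ∀ x, |g x| ≤ C) (ν : ℝ) :
    ∫⁻ x, posE (-(fstar f (g x - ν))) ∂P ≠ ⊤ := by
  have hpt : ∀ x, posE (-(fstar f (g x - ν))) ≤ ENNReal.ofReal (C + |ν|) := by
    intro x
    have h2 : -(fstar f (g x - ν)) ≤ ((-(g x - ν) : ℝ) : EReal) := by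
      rw [EReal.coe_neg]
      exact EReal.neg_le_neg_iff.mpr (coe_le_fstar h1 _)
    calc posE (-(fstar f (g x - ν))) ≤ posE ((-(g x - ν) : ℝ) : EReal) := posE_mono h2
      _ = ENNReal.ofReal (-(g x - ν)) := posE_coe _
      _ ≤ ENNReal.ofReal (C + |ν|) := by
          refine ENNReal.ofReal_le_ofReal ?_
          have h3 : -g x ≤ C := (neg_le_abs _).trans (hC x)
          have h4 : ν ≤ |ν| := le_abs_self ν
          linarith
  refine ((lintegral_mono hpt).trans_lt ?_).ne
  rw [lintegral_const, measure_univ, mul_one]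
  exact ENNReal.ofReal_lt_top

end EIntegralLemmas

section MainLemma

variable {Ω : Type*} [MeasurableSpace Ω]

lemma per_g {a b : EReal} {f : ℝ → EReal} (hf : IsF1 a b f)
    (P η Q : Measure Ω) [IsProbabilityMeasure P] [IsProbabilityMeasure η]
    [IsProbabilityMeasure Q] (g : Ω → ℝ) (hgm : Measurable g) {C : ℝ}
    (hC : ∀ x, |g x| ≤ C) :
    ((∫ x, g x ∂Q : ℝ) : EReal) - LambdaF f P g
      ≤ fDivE f η P + (((∫ x, g x ∂Q : ℝ) : EReal) - ((∫ x, g x ∂η : ℝ) : EReal)) := by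
  by_cases hΛ : LambdaF f P g = ⊤
  · rw [hΛ, EReal.sub_top]
    exact bot_le
  by_cases hac : η ≪ P
  swap
  · rw [fDivE, if_neg hac, ← EReal.coe_sub, EReal.top_add_coe]
    exact le_top
  rw [fDivE, if_pos hac]
  set ρ : Ω → ℝ := fun x => (η.rnDeriv P x).toReal with hρdef
  have hρm : Measurable ρ := (Measure.measurable_rnDeriv η P).ennreal_toReal
  have hfm : Measurable f := hf.lsc.measurable
  have hfsm : Measurable (fstar f) := measurable_fstar f
  have hmKf : Measurable (fun x => f (ρ x)) := hfm.comp hρm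
  -- the negative part of `f ∘ ρ` must have finite integral, else `LambdaF = ⊤`
  have hBf : ∫⁻ x, posE (-(f (ρ x))) ∂P ≠ ⊤ := by
    intro hBf'
    apply hΛ
    have hAν : ∀ ν : ℝ, ∫⁻ x, posE (fstar f (g x - ν)) ∂P = ⊤ := by
      intro ν
      by_contra hA
      have hpt : ∀ x, posE (-(f (ρ x)))
          ≤ posE (fstar f (g x - ν)) + ENNReal.ofReal (ρ x * (C + |ν|)) := by
        intro x
        have hFY := le_fstar f (ρ x) (g x - ν)
        have h2 : -(f (ρ x)) ≤ fstar f (g x - ν) - ((ρ x * (g x - ν) : ℝ) : EReal) := by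
          rw [EReal.le_sub_iff_add_le (Or.inl (EReal.coe_ne_bot _))
            (Or.inl (EReal.coe_ne_top _)), add_comm, ← sub_eq_add_neg]
          exact hFY
        calc posE (-(f (ρ x)))
            ≤ posE (fstar f (g x - ν) - ((ρ x * (g x - ν) : ℝ) : EReal)) := posE_mono h2
          _ ≤ posE (fstar f (g x - ν)) + posE (-((ρ x * (g x - ν) : ℝ) : EReal)) := by
              rw [sub_eq_add_neg]
              refine posE_add_le _ _ (fstar_ne_bot hf.at_one _) ?_
              rw [← EReal.coe_neg]
              exact EReal.coe_ne_bot _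
          _ ≤ posE (fstar f (g x - ν)) + ENNReal.ofReal (ρ x * (C + |ν|)) := by
              rw [← EReal.coe_neg, posE_coe]
              refine add_le_add_right (ENNReal.ofReal_le_ofReal ?_) _
              have hρ0 : (0:ℝ) ≤ ρ x := ENNReal.toReal_nonneg
              have h3 : -(g x) ≤ C := (neg_le_abs _).trans (hC x)
              have h4 : ν ≤ |ν| := le_abs_self ν
              have : -(ρ x * (g x - ν)) = ρ x * (ν - g x) := by ring
              rw [this]
              exact mul_le_mul_of_nonneg_left (by linarith) hρ0
      have hmeas2 : Measurable fun x => ENNReal.ofReal (ρ x * (C + |ν|)) :=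
        ENNReal.measurable_ofReal.comp (hρm.mul_const _)
      have hfin2 : ∫⁻ x, ENNReal.ofReal (ρ x * (C + |ν|)) ∂P ≠ ⊤ := by
        have hb2 : ∀ x, ENNReal.ofReal (ρ x * (C + |ν|))
            ≤ η.rnDeriv P x * ENNReal.ofReal (C + |ν|) := by
          intro x
          rw [ENNReal.ofReal_mul ENNReal.toReal_nonneg]
          exact mul_le_mul_of_nonneg_right ENNReal.ofReal_toReal_le zero_le
        refine ((lintegral_mono hb2).trans_lt ?_).ne
        rw [lintegral_mul_const _ (Measure.measurable_rnDeriv η P),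
          Measure.lintegral_rnDeriv hac, measure_univ, one_mul]
        exact ENNReal.ofReal_lt_top
      have : ∫⁻ x, posE (-(f (ρ x))) ∂P < ⊤ := by
        refine (lintegral_mono hpt).trans_lt ?_
        rw [lintegral_add_right _ hmeas2]
        exact ENNReal.add_lt_top.mpr ⟨lt_top_iff_ne_top.mpr hA, lt_top_iff_ne_top.mpr hfin2⟩
      exact this.ne hBf'
    rw [LambdaF, iInf_eq_top]
    intro ν
    rw [eIntegral, hAν ν, EReal.coe_ennreal_top,
      coe_ennreal_ne_top_eq (Bnu_ne_top P hf.at_one g hC ν), EReal.top_sub_coe,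
      EReal.coe_add_top]
  by_cases hAf : ∫⁻ x, posE (f (ρ x)) ∂P = ⊤
  · rw [eIntegral, hAf, EReal.coe_ennreal_top, coe_ennreal_ne_top_eq hBf,
      EReal.top_sub_coe, ← EReal.coe_sub, EReal.top_add_coe]
    exact le_top
  obtain ⟨hψint, hψeq⟩ :=
    eIntegral_eq P (fun x => f (ρ x)) hmKf (fun x => hf.ne_bot _) hAf hBf
  rw [hψeq]
  set r : ℝ := ∫ x, g x ∂Q
  set s : ℝ := ∫ x, g x ∂η
  set d : ℝ := ∫ x, (f (ρ x)).toReal ∂P with hd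
  have hsd : ((s - d : ℝ) : EReal) ≤ LambdaF f P g := by
    rw [LambdaF]
    refine le_iInf fun ν => ?_
    have hBν := Bnu_ne_top P hf.at_one g hC ν
    by_cases hAν : ∫⁻ x, posE (fstar f (g x - ν)) ∂P = ⊤
    · rw [eIntegral, hAν, EReal.coe_ennreal_top, coe_ennreal_ne_top_eq hBν,
        EReal.top_sub_coe, EReal.coe_add_top]
      exact le_top
    have hgν : Measurable fun x => g x - ν := hgm.sub measurable_const
    obtain ⟨hφint, hφeq⟩ := eIntegral_eq P (fun x => fstar f (g x - ν)) (hfsm.comp hgν)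
      (fun x => fstar_ne_bot hf.at_one _) hAν hBν
    rw [hφeq, ← EReal.coe_add, EReal.coe_le_coe_iff]
    have haeF : ∀ᵐ x ∂P, f (ρ x) ≠ ⊤ := by
      filter_upwards [ae_lt_top (measurable_posE.comp hmKf) hAf] with x hx
      exact fun hx' => absurd (posE_eq_top_iff.mpr hx') hx.ne
    have haeG : ∀ᵐ x ∂P, fstar f (g x - ν) ≠ ⊤ := by
      filter_upwards [ae_lt_top (measurable_posE.comp (hfsm.comp hgν)) hAν] with x hx
      exact fun hx' => absurd (posE_eq_top_iff.mpr hx') hx.ne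
    have hptws : ∀ᵐ x ∂P,
        ρ x * (g x - ν) ≤ (f (ρ x)).toReal + (fstar f (g x - ν)).toReal := by
      filter_upwards [haeF, haeG] with x h1x h2x
      have hFY := fenchel hf.at_one hf.ne_bot (ρ x) (g x - ν)
      rw [← EReal.coe_toReal h1x (hf.ne_bot _),
        ← EReal.coe_toReal h2x (fstar_ne_bot hf.at_one _), ← EReal.coe_add,
        EReal.coe_le_coe_iff] at hFY
      exact hFY
    have hint1 : Integrable (fun x => ρ x * (g x - ν)) P := by
      have hρint : Integrable ρ P := Measure.integrable_toReal_rnDeriv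
      have := hρint.bdd_mul hgν.aestronglyMeasurable
        (c := C + |ν|) (Filter.Eventually.of_forall fun x => by
          rw [Real.norm_eq_abs]
          calc |g x - ν| ≤ |g x| + |ν| := abs_sub _ _
            _ ≤ C + |ν| := add_le_add_left (hC x) _)
      simpa [mul_comm] using this
    have hgint : Integrable g η := integrable_of_bdd hgm hC
    have hkey : ∫ x, ρ x * (g x - ν) ∂P = s - ν := by
      have hsmul := MeasureTheory.integral_rnDeriv_smul (μ := η) (ν := P) hac
        (f := fun x => g x - ν)
      simp only [smul_eq_mul] at hsmul
      rw [hρdef]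
      rw [hsmul, integral_sub hgint (integrable_const ν), integral_const, probReal_univ,
        one_smul]
    have hle : s - ν ≤ d + ∫ x, (fstar f (g x - ν)).toReal ∂P := by
      rw [← hkey, hd, ← integral_add hψint hφint]
      exact integral_mono_ae hint1 (hψint.add hφint) hptws
    linarith
  calc ((r : ℝ) : EReal) - LambdaF f P g
      ≤ ((r : ℝ) : EReal) - ((s - d : ℝ) : EReal) := EReal.sub_le_sub (le_refl _) hsd
    _ = ((r - (s - d) : ℝ) : EReal) := by rw [← EReal.coe_sub]
    _ = ((d + (r - s) : ℝ) : EReal) := by ring_nf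
    _ = (d : EReal) + (((r : ℝ) : EReal) - ((s : ℝ) : EReal)) := by
        rw [EReal.coe_add, EReal.coe_sub]

end MainLemma


/-- For `f ∈ F₁(a,b)`, nonempty `Γ ⊆ M_b(Ω)` and probability measures
`Q, P`: `D_f^Γ(Q‖P) ≤ inf_{η probability measure} {D_f(η‖P) + W^Γ(Q,η)}`; in particular
`D_f^Γ(Q‖P) ≤ min{D_f(Q‖P), W^Γ(Q,P)}`. -/
theorem stmt7 {Ω : Type*} [MeasurableSpace Ω] (a b : EReal) (f : ℝ → EReal)
    (hf : IsF1 a b f)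
    (Γ : Set (Ω → ℝ)) (hΓ : Γ ⊆ Mb Ω) (hne : Γ.Nonempty)
    (Q P : Measure Ω) [IsProbabilityMeasure Q] [IsProbabilityMeasure P] :
    fGammaDiv f Γ Q P
      ≤ (⨅ η ∈ {η : Measure Ω | IsProbabilityMeasure η}, (fDivE f η P + ipmW Γ Q η))
    ∧ fGammaDiv f Γ Q P ≤ min (fDivE f Q P) (ipmW Γ Q P) := by
  have hmain : ∀ η : Measure Ω, IsProbabilityMeasure η →
      fGammaDiv f Γ Q P ≤ fDivE f η P + ipmW Γ Q η := by
    intro η hη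
    haveI := hη
    rw [fGammaDiv]
    refine iSup₂_le fun g hg => ?_
    obtain ⟨hgm, C, hC⟩ := hΓ hg
    refine (per_g hf P η Q g hgm hC).trans ?_
    refine add_le_add_right ?_ _
    exact le_iSup₂ (f := fun g (_ : g ∈ Γ) =>
      (((∫ x, g x ∂Q : ℝ) : EReal) - ((∫ x, g x ∂η : ℝ) : EReal))) g hg
  constructor
  · exact le_iInf₂ fun η hη => hmain η hη
  refine le_min ?_ ?_
  · have h0 : ipmW Γ Q Q = 0 := by
      rw [ipmW]
      have he : ∀ g ∈ Γ,
          ((∫ x, g x ∂Q : ℝ) : EReal) - ((∫ x, g x ∂Q : ℝ) : EReal) = (0 : EReal) := by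
        intro g hg
        rw [← EReal.coe_sub, sub_self, EReal.coe_zero]
      calc (⨆ g ∈ Γ, (((∫ x, g x ∂Q : ℝ) : EReal) - ((∫ x, g x ∂Q : ℝ) : EReal)))
          = ⨆ g ∈ Γ, (0 : EReal) :=
            iSup_congr fun g => iSup_congr fun hg => he g hg
        _ = 0 := biSup_const hne
    have := hmain Q inferInstance
    rwa [h0, add_zero] at this
  · have hD0 : fDivE f P P = 0 := by
      rw [fDivE, if_pos Measure.AbsolutelyContinuous.rfl]
      have hae : (fun x => f ((P.rnDeriv P x).toReal)) =ᵐ[P] (fun _ => (0 : EReal)) := by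
        filter_upwards [Measure.rnDeriv_self P] with x hx
        rw [hx, ENNReal.toReal_one, hf.at_one]
      rw [eIntegral_congr_ae P hae, eIntegral_zero]
    have := hmain P inferInstance
    rwa [hD0, zero_add] at this
end AuxLemmas
end

section
/- Let f ∈ F₁(a,b) and let Γ ⊂ M_b(Ω) be nonempty. Then (i) the map (Q,P) ↦ D_f^Γ(Q‖P) is convex on pairs of probability measures on (Ω,M), i.e., for t ∈ [0,1], D_f^Γ(tQ₁+(1−t)Q₀ ‖ tP₁+(1−t)P₀) ≤ t·D_f^Γ(Q₁‖P₁) + (1−t)·D_f^Γ(Q₀‖P₀); and (ii) if Γ contains a constant function then D_f^Γ(Q‖P) ≥ 0 for all probability measures Q, P. -/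
open MeasureTheory Filter Set Topology ENNReal
open scoped Classical

namespace Stmt8Aux

open MeasureTheory

lemma coe_ennreal_eq (A : ℝ≥0∞) (h : A ≠ ⊤) : (A : EReal) = ((A.toReal : ℝ) : EReal) := by
  rw [← EReal.coe_toReal (x := (A : EReal)) (by simpa using h) (EReal.coe_ennreal_ne_bot _),
    EReal.toReal_coe_ennreal]

lemma coe_ofReal {t : ℝ} (ht : 0 ≤ t) : ((ENNReal.ofReal t : ℝ≥0∞) : EReal) = (t : EReal) := by
  rw [EReal.coe_ennreal_ofReal, max_eq_left ht]

lemma posE_coe (r : ℝ) : posE (r : EReal) = ENNReal.ofReal r := by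
  simp [posE]

lemma posE_mono {x y : EReal} (h : x ≤ y) : posE x ≤ posE y := by
  rcases eq_or_ne y ⊤ with hy | hy
  · simp [posE, hy]
  · rcases eq_or_ne x ⊥ with hx | hx
    · simp [posE, hx, hy]
    · have hx' : x ≠ ⊤ := fun hx' => hy (top_le_iff.1 (hx' ▸ h))
      simp only [posE, if_neg hx', if_neg hy]
      exact ENNReal.ofReal_le_ofReal (EReal.toReal_le_toReal h hx hy)

lemma add_ne_bot {x y : EReal} (hx : x ≠ ⊥) (hy : y ≠ ⊥) : x + y ≠ ⊥ := by
  simp [EReal.add_eq_bot_iff, hx, hy]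

lemma sub_ne_bot {x : EReal} {r : ℝ} (hx : x ≠ ⊥) : x - (r : EReal) ≠ ⊥ := by
  rw [sub_eq_add_neg, ← EReal.coe_neg]
  exact add_ne_bot hx (EReal.coe_ne_bot _)

lemma coe_mul_ne_bot {t : ℝ} (ht : 0 < t) {e : EReal} (he : e ≠ ⊥) : (t : EReal) * e ≠ ⊥ := by
  induction e with
  | bot => exact absurd rfl he
  | coe e => rw [← EReal.coe_mul]; exact EReal.coe_ne_bot _
  | top => rw [EReal.coe_mul_top_of_pos ht]; exact bot_lt_top.ne'

lemma mul_coe_add {t ν : ℝ} (ht : 0 < t) {e : EReal} (he : e ≠ ⊥) :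
    (t : EReal) * ((ν : EReal) + e) = ((t * ν : ℝ) : EReal) + (t : EReal) * e := by
  induction e with
  | bot => exact absurd rfl he
  | coe e =>
      rw [← EReal.coe_add, ← EReal.coe_mul, ← EReal.coe_mul, ← EReal.coe_add, EReal.coe_eq_coe_iff]
      ring
  | top =>
      rw [EReal.add_top_of_ne_bot (EReal.coe_ne_bot _), EReal.coe_mul_top_of_pos ht,
        EReal.add_top_of_ne_bot (EReal.coe_ne_bot _)]

lemma key1 {t s b₁ b₀ : ℝ} (ht : 0 < t) (hs : 0 < s) {x₁ x₀ : EReal}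
    (hx₁ : 0 ≤ x₁) (hx₀ : 0 ≤ x₀) :
    (t : EReal) * (x₁ - (b₁ : EReal)) + (s : EReal) * (x₀ - (b₀ : EReal))
      ≤ ((t : EReal) * x₁ + (s : EReal) * x₀) - ((t * b₁ + s * b₀ : ℝ) : EReal) := by
  have hx₁b : x₁ ≠ ⊥ := fun h => by simp [h] at hx₁
  have hx₀b : x₀ ≠ ⊥ := fun h => by simp [h] at hx₀
  rcases eq_or_ne x₁ ⊤ with h₁ | h₁
  · subst h₁
    have : (t : EReal) * ⊤ + (s : EReal) * x₀ - ((t * b₁ + s * b₀ : ℝ) : EReal) = ⊤ := by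
      rw [EReal.coe_mul_top_of_pos ht, EReal.top_add_of_ne_bot (coe_mul_ne_bot hs hx₀b),
        EReal.top_sub_coe]
    rw [this]; exact le_top
  rcases eq_or_ne x₀ ⊤ with h₀ | h₀
  · subst h₀
    have : (t : EReal) * x₁ + (s : EReal) * ⊤ - ((t * b₁ + s * b₀ : ℝ) : EReal) = ⊤ := by
      rw [EReal.coe_mul_top_of_pos hs, EReal.add_top_of_ne_bot (coe_mul_ne_bot ht hx₁b),
        EReal.top_sub_coe]
    rw [this]; exact le_top
  lift x₁ to ℝ using ⟨h₁, hx₁b⟩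
  lift x₀ to ℝ using ⟨h₀, hx₀b⟩
  rw [← EReal.coe_sub, ← EReal.coe_sub, ← EReal.coe_mul, ← EReal.coe_mul, ← EReal.coe_mul,
    ← EReal.coe_mul, ← EReal.coe_add, ← EReal.coe_add, ← EReal.coe_sub, EReal.coe_le_coe_iff]
  ring_nf
  exact le_refl _

lemma key2 {t s u v : ℝ} (ht : 0 < t) (hs : 0 < s) {x y : EReal} (hx : x ≠ ⊥) (hy : y ≠ ⊥) :
    ((t * u + s * v : ℝ) : EReal) - ((t : EReal) * x + (s : EReal) * y)
      ≤ (t : EReal) * ((u : EReal) - x) + (s : EReal) * ((v : EReal) - y) := by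
  rcases eq_or_ne x ⊤ with h₁ | h₁
  · subst h₁
    have : ((t * u + s * v : ℝ) : EReal) - ((t : EReal) * ⊤ + (s : EReal) * y) = ⊥ := by
      rw [EReal.coe_mul_top_of_pos ht, EReal.top_add_of_ne_bot (coe_mul_ne_bot hs hy),
        sub_eq_add_neg, EReal.neg_top, EReal.add_bot]
    rw [this]; exact bot_le
  rcases eq_or_ne y ⊤ with h₂ | h₂
  · subst h₂
    have : ((t * u + s * v : ℝ) : EReal) - ((t : EReal) * x + (s : EReal) * ⊤) = ⊥ := by
      rw [EReal.coe_mul_top_of_pos hs, EReal.add_top_of_ne_bot (coe_mul_ne_bot ht hx),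
        sub_eq_add_neg, EReal.neg_top, EReal.add_bot]
    rw [this]; exact bot_le
  lift x to ℝ using ⟨h₁, hx⟩
  lift y to ℝ using ⟨h₂, hy⟩
  rw [← EReal.coe_mul, ← EReal.coe_mul, ← EReal.coe_add, ← EReal.coe_sub, ← EReal.coe_sub,
    ← EReal.coe_sub, ← EReal.coe_mul, ← EReal.coe_mul, ← EReal.coe_add, EReal.coe_le_coe_iff]
  ring_nf
  exact le_refl _

end Stmt8Aux
namespace Stmt8Aux
open MeasureTheory

variable {Ω : Type*} [MeasurableSpace Ω]

lemma integrable_of_mb (P : Measure Ω) [IsFiniteMeasure P] {g : Ω → ℝ} (hg : Measurable g)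
    {C : ℝ} (hC : ∀ x, |g x| ≤ C) : Integrable g P :=
  ⟨hg.aestronglyMeasurable,
    HasFiniteIntegral.of_bounded (C := C) (ae_of_all _ fun x => by
      simpa [Real.norm_eq_abs] using hC x)⟩

lemma coe_integral_le_eIntegral (P : Measure Ω) {c : Ω → ℝ}
    (hc : Integrable c P) {h : Ω → EReal} (hch : ∀ x, (c x : EReal) ≤ h x) :
    ((∫ x, c x ∂P : ℝ) : EReal) ≤ eIntegral P h := by
  set A' := ∫⁻ x, ENNReal.ofReal (c x) ∂P with hA'
  set B' := ∫⁻ x, ENNReal.ofReal (-(c x)) ∂P with hB'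
  have hA'top : A' ≠ ⊤ := by
    refine ne_top_of_le_ne_top hc.2.ne (lintegral_mono fun x => ?_)
    rw [← ofReal_norm, Real.norm_eq_abs]
    exact ENNReal.ofReal_le_ofReal (le_abs_self _)
  have hB'top : B' ≠ ⊤ := by
    refine ne_top_of_le_ne_top hc.2.ne (lintegral_mono fun x => ?_)
    rw [← ofReal_norm, Real.norm_eq_abs]
    exact ENNReal.ofReal_le_ofReal (neg_le_abs _)
  have key := integral_eq_lintegral_pos_part_sub_lintegral_neg_part hc
  have h1 : A' ≤ ∫⁻ x, posE (h x) ∂P :=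
    lintegral_mono fun x => by rw [← posE_coe]; exact posE_mono (hch x)
  have h2 : ∫⁻ x, posE (-(h x)) ∂P ≤ B' :=
    lintegral_mono fun x => by
      rw [← posE_coe, EReal.coe_neg]
      exact posE_mono (EReal.neg_le_neg_iff.2 (hch x))
  calc ((∫ x, c x ∂P : ℝ) : EReal) = ((A'.toReal - B'.toReal : ℝ) : EReal) := by
        rw [key]
    _ = (A' : EReal) - (B' : EReal) := by
        rw [EReal.coe_sub, coe_ennreal_eq A' hA'top, coe_ennreal_eq B' hB'top]
    _ ≤ eIntegral P h := by
        unfold eIntegral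
        exact EReal.sub_le_sub (EReal.coe_ennreal_le_coe_ennreal_iff.2 h1)
          (EReal.coe_ennreal_le_coe_ennreal_iff.2 h2)

lemma le_fstar {a b : EReal} {f : ℝ → EReal} (hf : IsF1 a b f) (y : ℝ) :
    (y : EReal) ≤ fstar f y := by
  have h := le_iSup (fun x : ℝ => ((x * y : ℝ) : EReal) - f x) 1
  simp only [one_mul, hf.at_one] at h
  calc (y : EReal) = ((y : ℝ) : EReal) - 0 := by
        rw [sub_eq_add_neg, neg_zero, add_zero]
    _ ≤ fstar f y := h

lemma eIntegral_const (P : Measure Ω) [IsProbabilityMeasure P] (r : ℝ) :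
    eIntegral P (fun _ : Ω => (r : EReal)) = (r : EReal) := by
  unfold eIntegral
  have e1 : (fun _ : Ω => posE (r : EReal)) = fun _ => ENNReal.ofReal r := by
    funext x; exact posE_coe r
  have e2 : (fun _ : Ω => posE (-(r : EReal))) = fun _ => ENNReal.ofReal (-r) := by
    funext x; rw [← EReal.coe_neg, posE_coe]
  rw [e1, e2, lintegral_const, lintegral_const, measure_univ, mul_one, mul_one]
  rcases le_total 0 r with hr | hr
  · rw [coe_ofReal hr, ENNReal.ofReal_of_nonpos (by linarith), EReal.coe_ennreal_zero,
      sub_eq_add_neg, neg_zero, add_zero]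
  · rw [coe_ofReal (by linarith : (0:ℝ) ≤ -r), ENNReal.ofReal_of_nonpos hr,
      EReal.coe_ennreal_zero]
    rw [show (0 : EReal) = ((0:ℝ) : EReal) from rfl, ← EReal.coe_sub, EReal.coe_eq_coe_iff]
    ring

lemma coe_integral_le_LambdaF {a b : EReal} {f : ℝ → EReal} (hf : IsF1 a b f)
    (P : Measure Ω) [IsProbabilityMeasure P] {g : Ω → ℝ} (hg : Measurable g)
    {C : ℝ} (hC : ∀ x, |g x| ≤ C) :
    ((∫ x, g x ∂P : ℝ) : EReal) ≤ LambdaF f P g := by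
  refine le_iInf fun ν => ?_
  have hint : Integrable (fun x => g x - ν) P :=
    (integrable_of_mb P hg hC).sub (integrable_const ν)
  have h1 : ((∫ x, (g x - ν) ∂P : ℝ) : EReal) ≤ eIntegral P (fun x => fstar f (g x - ν)) :=
    coe_integral_le_eIntegral P hint (fun x => le_fstar hf _)
  have h2 : ∫ x, (g x - ν) ∂P = (∫ x, g x ∂P) - ν := by
    rw [integral_sub (integrable_of_mb P hg hC) (integrable_const ν), integral_const,
      probReal_univ, one_smul]
  rw [h2] at h1
  calc ((∫ x, g x ∂P : ℝ) : EReal) = (ν : EReal) + ((∫ x, g x ∂P - ν : ℝ) : EReal) := by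
        rw [← EReal.coe_add, EReal.coe_eq_coe_iff]; ring
    _ ≤ (ν : EReal) + eIntegral P (fun x => fstar f (g x - ν)) := add_le_add le_rfl h1

lemma LambdaF_ne_bot {a b : EReal} {f : ℝ → EReal} (hf : IsF1 a b f)
    (P : Measure Ω) [IsProbabilityMeasure P] {g : Ω → ℝ} (hg : Measurable g)
    {C : ℝ} (hC : ∀ x, |g x| ≤ C) : LambdaF f P g ≠ ⊥ := by
  intro hb
  have := coe_integral_le_LambdaF hf P hg hC
  rw [hb, le_bot_iff] at this
  exact EReal.coe_ne_bot _ this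

lemma lintegral_negpart_ne_top {a b : EReal} {f : ℝ → EReal} (hf : IsF1 a b f)
    (P : Measure Ω) [IsProbabilityMeasure P] {g : Ω → ℝ}
    {C : ℝ} (hC : ∀ x, |g x| ≤ C) (ν : ℝ) :
    (∫⁻ x, posE (-(fstar f (g x - ν))) ∂P) ≠ ⊤ := by
  have hb : ∀ x, posE (-(fstar f (g x - ν))) ≤ ENNReal.ofReal (C + |ν|) := by
    intro x
    have h1 : ((g x - ν : ℝ) : EReal) ≤ fstar f (g x - ν) := le_fstar hf _
    have h2 : -(fstar f (g x - ν)) ≤ ((C + |ν| : ℝ) : EReal) := by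
      calc -(fstar f (g x - ν)) ≤ -((g x - ν : ℝ) : EReal) := EReal.neg_le_neg_iff.2 h1
        _ = ((ν - g x : ℝ) : EReal) := by rw [← EReal.coe_neg, EReal.coe_eq_coe_iff]; ring
        _ ≤ ((C + |ν| : ℝ) : EReal) := EReal.coe_le_coe_iff.2 (by
            have h3 := abs_le.1 (hC x)
            have h4 := le_abs_self ν
            linarith [h3.1, h3.2])
    calc posE (-(fstar f (g x - ν))) ≤ posE ((C + |ν| : ℝ) : EReal) := posE_mono h2
      _ = ENNReal.ofReal (C + |ν|) := posE_coe _
  have hcalc : ∫⁻ x, posE (-(fstar f (g x - ν))) ∂P ≤ ENNReal.ofReal (C + |ν|) := by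
    calc ∫⁻ x, posE (-(fstar f (g x - ν))) ∂P ≤ ∫⁻ _, ENNReal.ofReal (C + |ν|) ∂P :=
          lintegral_mono hb
      _ = ENNReal.ofReal (C + |ν|) := by rw [lintegral_const, measure_univ, mul_one]
  exact ne_top_of_le_ne_top ENNReal.ofReal_ne_top hcalc

end Stmt8Aux
namespace Stmt8Aux
open MeasureTheory

lemma div_helper_neg {p q u v : ℝ} (hu : u < 0) (hv : 0 < v) (h : 0 ≤ v * p - u * q) :
    p / u ≤ q / v := by
  have hvu : 0 < v * (-u) := mul_pos hv (by linarith)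
  have h1 : 0 ≤ (v * p - u * q) / (v * (-u)) := div_nonneg h hvu.le
  have h2 : (v * p - u * q) / (v * (-u)) = q / v - p / u := by
    field_simp [hu.ne, hv.ne']
    ring
  linarith [h2 ▸ h1]

lemma div_helper_pos {p q u v : ℝ} (hu : 0 < u) (hv : 0 < v) (h : p * v ≤ q * u) :
    p / u ≤ q / v := by
  rw [div_le_div_iff₀ hu hv]
  linarith

lemma exists_subgrad {a b : EReal} {f : ℝ → EReal} (hf : IsF1 a b f) :
    ∃ y₀ : ℝ, ∀ x : ℝ, ((y₀ * (x - 1) : ℝ) : EReal) ≤ f x := by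
  set F : ℝ → ℝ := fun x => (f x).toReal with hF
  have hcoe : ∀ x, f x ≠ ⊤ → f x = ((F x : ℝ) : EReal) := fun x hx =>
    (EReal.coe_toReal hx (hf.ne_bot x)).symm
  have claimA : ∀ x z : ℝ, x < 1 → 1 < z → f x ≠ ⊤ → f z ≠ ⊤ →
      0 ≤ (z - 1) * F x + (1 - x) * F z := by
    intro x z hx hz hfx hfz
    have hzx : 0 < z - x := by linarith
    set t := (z - 1) / (z - x) with ht_def
    have ht0 : 0 < t := div_pos (by linarith) hzx
    have ht1 : t < 1 := (div_lt_one hzx).2 (by linarith)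
    have hcomb : t * x + (1 - t) * z = 1 := by
      rw [ht_def]; field_simp [hzx.ne']
      try ring
    have h := hf.convex x z t ht0 ht1
    rw [hcomb, hf.at_one, hcoe x hfx, hcoe z hfz, ← EReal.coe_mul, ← EReal.coe_mul,
      ← EReal.coe_add] at h
    have h0 : (0:ℝ) ≤ t * F x + (1 - t) * F z := by exact_mod_cast h
    have e1 : t * (z - x) = z - 1 := div_mul_cancel₀ _ hzx.ne'
    have e2 : (1 - t) * (z - x) = 1 - x := by
      rw [ht_def]; field_simp [hzx.ne']
      try ring
    have e3 : (z - 1) * F x + (1 - x) * F z = (t * F x + (1 - t) * F z) * (z - x) := by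
      rw [← e1, ← e2]; ring
    rw [e3]
    exact mul_nonneg h0 hzx.le
  have claimB : ∀ w z : ℝ, 1 < w → w < z → f z ≠ ⊤ →
      f w ≠ ⊤ ∧ F w * (z - 1) ≤ F z * (w - 1) := by
    intro w z hw hz hfz
    have hz1 : 0 < z - 1 := by linarith
    set t := (z - w) / (z - 1) with ht_def
    have ht0 : 0 < t := div_pos (by linarith) hz1
    have ht1 : t < 1 := (div_lt_one hz1).2 (by linarith)
    have hcomb : t * 1 + (1 - t) * z = w := by
      rw [ht_def]; field_simp [hz1.ne']
      try ring
    have h := hf.convex 1 z t ht0 ht1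
    rw [hcomb, hf.at_one, hcoe z hfz, mul_zero, zero_add, ← EReal.coe_mul] at h
    have hfw : f w ≠ ⊤ := fun h' => by
      rw [h', top_le_iff] at h
      exact EReal.coe_ne_top _ h
    rw [hcoe w hfw, EReal.coe_le_coe_iff] at h
    refine ⟨hfw, ?_⟩
    have e2 : (1 - t) * (z - 1) = w - 1 := by
      rw [ht_def]; field_simp [hz1.ne']
      try ring
    have e3 : (1 - t) * F z * (z - 1) = F z * (w - 1) := by rw [← e2]; ring
    calc F w * (z - 1) ≤ (1 - t) * F z * (z - 1) := mul_le_mul_of_nonneg_right h hz1.le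
      _ = F z * (w - 1) := e3
  obtain ⟨b', hb'1, hb'b⟩ := EReal.exists_between_coe_real hf.one_lt_b
  obtain ⟨a', haa', ha'1⟩ := EReal.exists_between_coe_real hf.a_lt_one
  have hb'1R : (1:ℝ) < b' := by exact_mod_cast hb'1
  have ha'1R : a' < (1:ℝ) := by exact_mod_cast ha'1
  set m := (1 + b') / 2 with hm_def
  have hm1 : 1 < m := by rw [hm_def]; linarith
  have hmb' : m < b' := by rw [hm_def]; linarith
  have hfin : ∀ z : ℝ, 1 < z → z ≤ m → f z ≠ ⊤ := by
    intro z h1 h2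
    refine hf.finite_on z (lt_trans hf.a_lt_one ?_) (lt_trans ?_ hb'b)
    · exact_mod_cast h1
    · exact_mod_cast lt_of_le_of_lt h2 hmb'
  have hfa' : f a' ≠ ⊤ := hf.finite_on a' haa' (lt_trans ha'1 hf.one_lt_b)
  set S := (fun z => F z / (z - 1)) '' Set.Ioc 1 m with hS_def
  have hSne : S.Nonempty := ⟨F m / (m - 1), m, ⟨hm1, le_refl m⟩, rfl⟩
  have hbdd : BddBelow S := by
    refine ⟨F a' / (a' - 1), ?_⟩
    rintro _ ⟨z, ⟨hz1, hzm⟩, rfl⟩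
    exact div_helper_neg (by linarith) (by linarith)
      (by linarith [claimA a' z ha'1R hz1 hfa' (hfin z hz1 hzm)])
  refine ⟨sInf S, fun x => ?_⟩
  rcases eq_or_ne (f x) ⊤ with hfx | hfx
  · rw [hfx]; exact le_top
  rw [hcoe x hfx, EReal.coe_le_coe_iff]
  rcases lt_trichotomy x 1 with hx | hx | hx
  · have hle : F x / (x - 1) ≤ sInf S := by
      refine le_csInf hSne ?_
      rintro _ ⟨z, ⟨hz1, hzm⟩, rfl⟩
      exact div_helper_neg (by linarith) (by linarith)
        (by linarith [claimA x z hx hz1 hfx (hfin z hz1 hzm)])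
    have hx1 : x - 1 < 0 := by linarith
    exact (div_le_iff_of_neg hx1).1 hle
  · subst hx
    have : F 1 = 0 := by rw [hF]; simp [hf.at_one]
    rw [this]
    simp
  · have hy₀ : sInf S ≤ F x / (x - 1) := by
      rcases le_or_gt x m with hxm | hmx
      · exact csInf_le hbdd ⟨x, ⟨hx, hxm⟩, rfl⟩
      · have h1 : sInf S ≤ F m / (m - 1) := csInf_le hbdd ⟨m, ⟨hm1, le_refl m⟩, rfl⟩
        have h2 := claimB m x hm1 hmx hfx
        exact h1.trans (div_helper_pos (by linarith) (by linarith) h2.2)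
    exact (le_div_iff₀ (by linarith : (0:ℝ) < x - 1)).1 hy₀

lemma fstar_eq_of_subgrad {a b : EReal} {f : ℝ → EReal} (hf : IsF1 a b f) {y₀ : ℝ}
    (h : ∀ x : ℝ, ((y₀ * (x - 1) : ℝ) : EReal) ≤ f x) : fstar f y₀ = (y₀ : EReal) := by
  refine le_antisymm (iSup_le fun x => ?_) (le_fstar hf y₀)
  calc ((x * y₀ : ℝ) : EReal) - f x ≤ ((x * y₀ : ℝ) : EReal) - ((y₀ * (x - 1) : ℝ) : EReal) :=
        EReal.sub_le_sub le_rfl (h x)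
    _ = ((x * y₀ - y₀ * (x - 1) : ℝ) : EReal) := by rw [EReal.coe_sub]
    _ = (y₀ : EReal) := by rw [EReal.coe_eq_coe_iff]; ring

end Stmt8Aux

open Stmt8Aux

/-- For `f ∈ F₁(a,b)` and nonempty `Γ ⊆ M_b(Ω)`: (i) the map
`(Q,P) ↦ D_f^Γ(Q‖P)` is jointly convex on pairs of probability measures; (ii) if `Γ`
contains a constant function then `D_f^Γ(Q‖P) ≥ 0` for all probability measures `Q, P`. -/
theorem stmt8 {Ω : Type*} [MeasurableSpace Ω] (a b : EReal) (f : ℝ → EReal)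
    (hf : IsF1 a b f)
    (Γ : Set (Ω → ℝ)) (hΓ : Γ ⊆ Mb Ω) (hne : Γ.Nonempty) :
    (∀ (Q₀ Q₁ P₀ P₁ : Measure Ω), IsProbabilityMeasure Q₀ → IsProbabilityMeasure Q₁ →
      IsProbabilityMeasure P₀ → IsProbabilityMeasure P₁ → ∀ t : ℝ, 0 ≤ t → t ≤ 1 →
      fGammaDiv f Γ (ENNReal.ofReal t • Q₁ + ENNReal.ofReal (1 - t) • Q₀)
          (ENNReal.ofReal t • P₁ + ENNReal.ofReal (1 - t) • P₀)
        ≤ ((t : ℝ) : EReal) * fGammaDiv f Γ Q₁ P₁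
          + (((1 - t : ℝ)) : EReal) * fGammaDiv f Γ Q₀ P₀)
    ∧ ((∃ c : ℝ, (fun _ => c) ∈ Γ) →
      ∀ (Q P : Measure Ω), IsProbabilityMeasure Q → IsProbabilityMeasure P →
        0 ≤ fGammaDiv f Γ Q P) := by
  constructor
  · intro Q₀ Q₁ P₀ P₁ hQ₀ hQ₁ hP₀ hP₁ t ht0 ht1
    rcases eq_or_lt_of_le ht0 with h0 | h0
    · -- t = 0
      rw [← h0]
      norm_num [ENNReal.ofReal_zero, ENNReal.ofReal_one, zero_smul, one_smul]
    rcases eq_or_lt_of_le ht1 with h1 | h1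
    · -- t = 1
      subst h1
      norm_num [ENNReal.ofReal_zero, ENNReal.ofReal_one, zero_smul, one_smul]
    set s := 1 - t with hs_def
    have hs : 0 < s := by rw [hs_def]; linarith
    show fGammaDiv f Γ (ENNReal.ofReal t • Q₁ + ENNReal.ofReal s • Q₀)
        (ENNReal.ofReal t • P₁ + ENNReal.ofReal s • P₀)
      ≤ (t : EReal) * fGammaDiv f Γ Q₁ P₁ + (s : EReal) * fGammaDiv f Γ Q₀ P₀
    set QM := ENNReal.ofReal t • Q₁ + ENNReal.ofReal s • Q₀ with hQM
    set PM := ENNReal.ofReal t • P₁ + ENNReal.ofReal s • P₀ with hPM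
    have htE : (0 : EReal) ≤ (t : EReal) := EReal.coe_nonneg.2 h0.le
    have hsE : (0 : EReal) ≤ (s : EReal) := EReal.coe_nonneg.2 hs.le
    refine iSup₂_le fun g hg => ?_
    obtain ⟨hgm, C, hgC⟩ := hΓ hg
    -- expectation splits
    have hE : ∫ x, g x ∂QM = t * ∫ x, g x ∂Q₁ + s * ∫ x, g x ∂Q₀ := by
      rw [hQM, integral_add_measure
          ((integrable_of_mb Q₁ hgm hgC).smul_measure ENNReal.ofReal_ne_top)
          ((integrable_of_mb Q₀ hgm hgC).smul_measure ENNReal.ofReal_ne_top),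
        integral_smul_measure, integral_smul_measure, ENNReal.toReal_ofReal h0.le,
        ENNReal.toReal_ofReal hs.le, smul_eq_mul, smul_eq_mul]
    -- Lambda superadditivity over the mixture
    have hLmix : (t : EReal) * LambdaF f P₁ g + (s : EReal) * LambdaF f P₀ g
        ≤ LambdaF f PM g := by
      refine le_iInf fun ν => ?_
      set A₁ := ∫⁻ x, posE (fstar f (g x - ν)) ∂P₁ with hA₁
      set A₀ := ∫⁻ x, posE (fstar f (g x - ν)) ∂P₀ with hA₀
      set B₁ := ∫⁻ x, posE (-(fstar f (g x - ν))) ∂P₁ with hB₁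
      set B₀ := ∫⁻ x, posE (-(fstar f (g x - ν))) ∂P₀ with hB₀
      have hB₁top : B₁ ≠ ⊤ := lintegral_negpart_ne_top hf P₁ hgC ν
      have hB₀top : B₀ ≠ ⊤ := lintegral_negpart_ne_top hf P₀ hgC ν
      have hei₁ : eIntegral P₁ (fun x => fstar f (g x - ν))
          = (A₁ : EReal) - ((B₁.toReal : ℝ) : EReal) := by
        unfold eIntegral
        rw [← coe_ennreal_eq B₁ hB₁top]
      have hei₀ : eIntegral P₀ (fun x => fstar f (g x - ν))
          = (A₀ : EReal) - ((B₀.toReal : ℝ) : EReal) := by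
        unfold eIntegral
        rw [← coe_ennreal_eq B₀ hB₀top]
      have hAmix : ∫⁻ x, posE (fstar f (g x - ν)) ∂PM
          = ENNReal.ofReal t * A₁ + ENNReal.ofReal s * A₀ := by
        rw [hPM, lintegral_add_measure, lintegral_smul_measure, lintegral_smul_measure,
            smul_eq_mul, smul_eq_mul]
      have hBmix : ∫⁻ x, posE (-(fstar f (g x - ν))) ∂PM
          = ENNReal.ofReal t * B₁ + ENNReal.ofReal s * B₀ := by
        rw [hPM, lintegral_add_measure, lintegral_smul_measure, lintegral_smul_measure,
            smul_eq_mul, smul_eq_mul]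
      have hcoeA : ((ENNReal.ofReal t * A₁ + ENNReal.ofReal s * A₀ : ℝ≥0∞) : EReal)
          = (t : EReal) * (A₁ : EReal) + (s : EReal) * (A₀ : EReal) := by
        rw [EReal.coe_ennreal_add, EReal.coe_ennreal_mul, EReal.coe_ennreal_mul,
          coe_ofReal h0.le, coe_ofReal hs.le]
      have hcoeB : ((ENNReal.ofReal t * B₁ + ENNReal.ofReal s * B₀ : ℝ≥0∞) : EReal)
          = ((t * B₁.toReal + s * B₀.toReal : ℝ) : EReal) := by
        rw [EReal.coe_ennreal_add, EReal.coe_ennreal_mul, EReal.coe_ennreal_mul,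
          coe_ofReal h0.le, coe_ofReal hs.le, coe_ennreal_eq B₁ hB₁top,
          coe_ennreal_eq B₀ hB₀top, ← EReal.coe_mul, ← EReal.coe_mul, ← EReal.coe_add]
      have hEmix : eIntegral PM (fun x => fstar f (g x - ν))
          = ((t : EReal) * (A₁ : EReal) + (s : EReal) * (A₀ : EReal))
            - ((t * B₁.toReal + s * B₀.toReal : ℝ) : EReal) := by
        unfold eIntegral
        rw [hAmix, hBmix, hcoeA, hcoeB]
      have hk : (t : EReal) * ((A₁ : EReal) - ((B₁.toReal : ℝ) : EReal))
            + (s : EReal) * ((A₀ : EReal) - ((B₀.toReal : ℝ) : EReal))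
          ≤ eIntegral PM (fun x => fstar f (g x - ν)) := by
        rw [hEmix]
        exact key1 h0 hs (EReal.coe_ennreal_nonneg _) (EReal.coe_ennreal_nonneg _)
      have e₁ne : eIntegral P₁ (fun x => fstar f (g x - ν)) ≠ ⊥ := by
        rw [hei₁]; exact sub_ne_bot (EReal.coe_ennreal_ne_bot _)
      have e₀ne : eIntegral P₀ (fun x => fstar f (g x - ν)) ≠ ⊥ := by
        rw [hei₀]; exact sub_ne_bot (EReal.coe_ennreal_ne_bot _)
      calc (t : EReal) * LambdaF f P₁ g + (s : EReal) * LambdaF f P₀ g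
          ≤ (t : EReal) * ((ν : EReal) + eIntegral P₁ (fun x => fstar f (g x - ν)))
            + (s : EReal) * ((ν : EReal) + eIntegral P₀ (fun x => fstar f (g x - ν))) :=
            add_le_add (mul_le_mul_of_nonneg_left (iInf_le _ ν) htE)
              (mul_le_mul_of_nonneg_left (iInf_le _ ν) hsE)
        _ = (((t * ν : ℝ) : EReal) + (t : EReal) * eIntegral P₁ (fun x => fstar f (g x - ν)))
            + (((s * ν : ℝ) : EReal) + (s : EReal) * eIntegral P₀ (fun x => fstar f (g x - ν))) := by
            rw [mul_coe_add h0 e₁ne, mul_coe_add hs e₀ne]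
        _ = (ν : EReal) + ((t : EReal) * eIntegral P₁ (fun x => fstar f (g x - ν))
            + (s : EReal) * eIntegral P₀ (fun x => fstar f (g x - ν))) := by
            rw [add_add_add_comm, ← EReal.coe_add,
              show t * ν + s * ν = ν by rw [hs_def]; ring]
        _ = (ν : EReal) + ((t : EReal) * ((A₁ : EReal) - ((B₁.toReal : ℝ) : EReal))
            + (s : EReal) * ((A₀ : EReal) - ((B₀.toReal : ℝ) : EReal))) := by
            rw [hei₁, hei₀]
        _ ≤ (ν : EReal) + eIntegral PM (fun x => fstar f (g x - ν)) := add_le_add le_rfl hk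
    -- final chain
    have hL₁ne : LambdaF f P₁ g ≠ ⊥ := LambdaF_ne_bot hf P₁ hgm hgC
    have hL₀ne : LambdaF f P₀ g ≠ ⊥ := LambdaF_ne_bot hf P₀ hgm hgC
    have hD₁ : ((∫ x, g x ∂Q₁ : ℝ) : EReal) - LambdaF f P₁ g ≤ fGammaDiv f Γ Q₁ P₁ :=
      le_iSup₂ (f := fun g' (_ : g' ∈ Γ) => ((∫ x, g' x ∂Q₁ : ℝ) : EReal) - LambdaF f P₁ g') g hg
    have hD₀ : ((∫ x, g x ∂Q₀ : ℝ) : EReal) - LambdaF f P₀ g ≤ fGammaDiv f Γ Q₀ P₀ :=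
      le_iSup₂ (f := fun g' (_ : g' ∈ Γ) => ((∫ x, g' x ∂Q₀ : ℝ) : EReal) - LambdaF f P₀ g') g hg
    calc ((∫ x, g x ∂QM : ℝ) : EReal) - LambdaF f PM g
        ≤ ((∫ x, g x ∂QM : ℝ) : EReal)
          - ((t : EReal) * LambdaF f P₁ g + (s : EReal) * LambdaF f P₀ g) :=
          EReal.sub_le_sub le_rfl hLmix
      _ = ((t * ∫ x, g x ∂Q₁ + s * ∫ x, g x ∂Q₀ : ℝ) : EReal)
          - ((t : EReal) * LambdaF f P₁ g + (s : EReal) * LambdaF f P₀ g) := by rw [hE]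
      _ ≤ (t : EReal) * (((∫ x, g x ∂Q₁ : ℝ) : EReal) - LambdaF f P₁ g)
          + (s : EReal) * (((∫ x, g x ∂Q₀ : ℝ) : EReal) - LambdaF f P₀ g) :=
          key2 h0 hs hL₁ne hL₀ne
      _ ≤ (t : EReal) * fGammaDiv f Γ Q₁ P₁ + (s : EReal) * fGammaDiv f Γ Q₀ P₀ :=
          add_le_add (mul_le_mul_of_nonneg_left hD₁ htE)
            (mul_le_mul_of_nonneg_left hD₀ hsE)
  · rintro ⟨c, hc⟩ Q P hQ hP
    obtain ⟨y₀, hy₀⟩ := exists_subgrad hf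
    have hfs : fstar f y₀ = (y₀ : EReal) := fstar_eq_of_subgrad hf hy₀
    have hL : LambdaF f P (fun _ => c) ≤ (c : EReal) := by
      have h1 : LambdaF f P (fun _ => c)
          ≤ ((c - y₀ : ℝ) : EReal) + eIntegral P (fun _ => fstar f (c - (c - y₀))) :=
        iInf_le _ (c - y₀)
      rw [show c - (c - y₀) = y₀ by ring, hfs, eIntegral_const P y₀] at h1
      calc LambdaF f P (fun _ => c) ≤ ((c - y₀ : ℝ) : EReal) + (y₀ : EReal) := h1
        _ = (c : EReal) := by rw [← EReal.coe_add, EReal.coe_eq_coe_iff]; ring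
    have hint : (∫ x, (fun _ : Ω => c) x ∂Q : ℝ) = c := by
      simp [integral_const, measure_univ]
    have hterm : (0 : EReal) ≤ ((∫ x, (fun _ : Ω => c) x ∂Q : ℝ) : EReal)
        - LambdaF f P (fun _ => c) := by
      rw [hint]
      calc (0 : EReal) = ((c : ℝ) : EReal) - ((c : ℝ) : EReal) := by
            rw [← EReal.coe_sub, sub_self]; rfl
        _ ≤ ((c : ℝ) : EReal) - LambdaF f P (fun _ => c) := EReal.sub_le_sub le_rfl hL
    exact hterm.trans
      (le_iSup₂ (f := fun g' (_ : g' ∈ Γ) => ((∫ x, g' x ∂Q : ℝ) : EReal) - LambdaF f P g')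
        (fun _ => c) hc)
end
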